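/- arXiv:1907.04004 — 9 statements merged into one kernel-verified Lean document; each statement's English description precedes it below -/
import Mathlib

section
/- Under the point-exposure assumptions (consistency, exchangeability, missing-at-random, missingness positivity), the incremental intervention mean is identified by the observed-data functional: ψ(δ) = E[ (δ·π·μ₁ + (1 − π)·μ₀) / (δ·π + 1 − π) ], where ψ(δ) = E[ q·Y¹ + (1 − q)·Y⁰ ] with q = δπ/(δπ + 1 − π). -/
open MeasureTheory ProbabilityTheory MeasurableSpace

section Aux

open Set

variable {Ω : Type*} {m' : MeasurableSpace Ω} {mΩ : MeasurableSpace Ω} [StandardBorelSpace Ω]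
  {μ : Measure Ω} [IsProbabilityMeasure μ]

lemma aux_spanning : IsCountablySpanning (⋃ a : ℚ, {Iic (a : ℝ)}) := by
  refine ⟨fun n => Iic ((n : ℚ) : ℝ), fun n => mem_iUnion.2 ⟨n, rfl⟩, ?_⟩
  ext x
  simp only [mem_iUnion, mem_Iic, mem_univ, iff_true]
  obtain ⟨n, hn⟩ := exists_nat_ge x
  exact ⟨n, by exact_mod_cast hn⟩

lemma aux_real_eq : (Real.measurableSpace : MeasurableSpace ℝ)
    = generateFrom (⋃ a : ℚ, {Iic (a : ℝ)}) := by
  rw [Real.borelSpace.measurable_eq, Real.borel_eq_generateFrom_Iic_rat]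

lemma aux_prod_eq : (Prod.instMeasurableSpace : MeasurableSpace (ℝ × ℝ))
    = generateFrom (image2 (· ×ˢ ·) (⋃ a : ℚ, {Iic (a : ℝ)}) (⋃ a : ℚ, {Iic (a : ℝ)})) := by
  have : (Prod.instMeasurableSpace : MeasurableSpace (ℝ × ℝ))
      = @Prod.instMeasurableSpace ℝ ℝ (generateFrom (⋃ a : ℚ, {Iic (a : ℝ)}))
          (generateFrom (⋃ a : ℚ, {Iic (a : ℝ)})) := by
    rw [← aux_real_eq]
  rw [this, generateFrom_prod_eq aux_spanning aux_spanning]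

lemma ae_indepFun_of_condIndepFun (hm' : m' ≤ mΩ)
    {f : Ω → ℝ} {g : Ω → ℝ × ℝ} (hf : Measurable f) (hg : Measurable g)
    (h : CondIndepFun m' hm' f g μ) :
    ∀ᵐ ω ∂μ, IndepFun f g (condExpKernel μ m' ω) := by
  have h' : Kernel.IndepFun f g (condExpKernel μ m') (μ.trim hm') := h
  rw [Kernel.indepFun_iff_measure_inter_preimage_eq_mul] at h'
  have H : ∀ᵐ ω ∂μ.trim hm', ∀ (p r u : ℚ),
      condExpKernel μ m' ω (f ⁻¹' Iic (p : ℝ) ∩ g ⁻¹' (Iic (r : ℝ) ×ˢ Iic (u : ℝ)))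
        = condExpKernel μ m' ω (f ⁻¹' Iic (p : ℝ))
          * condExpKernel μ m' ω (g ⁻¹' (Iic (r : ℝ) ×ˢ Iic (u : ℝ))) := by
    rw [ae_all_iff]; intro p; rw [ae_all_iff]; intro r; rw [ae_all_iff]; intro u
    exact h' _ _ measurableSet_Iic (measurableSet_Iic.prod measurableSet_Iic)
  filter_upwards [ae_of_ae_trim hm' H] with ω hω
  haveI : IsProbabilityMeasure (condExpKernel μ m' ω) :=
    IsMarkovKernel.isProbabilityMeasure ω
  rw [IndepFun_iff_Indep]
  refine IndepSets.indep hf.comap_le hg.comap_le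
    (Real.isPiSystem_Iic_rat.comap f)
    ((Real.isPiSystem_Iic_rat.prod Real.isPiSystem_Iic_rat).comap g)
    ?_ ?_ ?_
  · rw [aux_real_eq, comap_generateFrom]; rfl
  · rw [aux_prod_eq, comap_generateFrom]; rfl
  · rintro _ _ ⟨s, hs, rfl⟩ ⟨t, ht, rfl⟩
    simp only [mem_iUnion, mem_singleton_iff] at hs
    obtain ⟨p, rfl⟩ := hs
    obtain ⟨t₁, ht₁, t₂, ht₂, rfl⟩ := ht
    simp only [mem_iUnion, mem_singleton_iff] at ht₁ ht₂
    obtain ⟨r, rfl⟩ := ht₁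
    obtain ⟨u, rfl⟩ := ht₂
    exact Filter.Eventually.of_forall fun _ => hω p r u

end Aux


section Aux2

open Set

variable {Ω : Type*} {m' : MeasurableSpace Ω} {mΩ : MeasurableSpace Ω} [StandardBorelSpace Ω]
  {μ : Measure Ω} [IsProbabilityMeasure μ]

lemma integrable_of_abs_le {ν : Measure Ω} [IsFiniteMeasure ν] {f : Ω → ℝ} {c : ℝ}
    (hf : AEStronglyMeasurable f ν) (h : ∀ ω, |f ω| ≤ c) : Integrable f ν :=
  (integrable_const c).mono' hf (Filter.Eventually.of_forall fun ω => by
    rw [Real.norm_eq_abs]; exact h ω)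

lemma condexp_mul_of_condIndepFun (hm' : m' ≤ mΩ)
    {f : Ω → ℝ} {g : Ω → ℝ × ℝ} (hf : Measurable f) (hg : Measurable g)
    (h : CondIndepFun m' hm' f g μ)
    {φ : ℝ → ℝ} {ψ : ℝ × ℝ → ℝ} (hφ : Measurable φ) (hψ : Measurable ψ)
    {c₁ c₂ : ℝ} (hc₁ : ∀ ω, |φ (f ω)| ≤ c₁) (hc₂ : ∀ ω, |ψ (g ω)| ≤ c₂) :
    μ[fun ω => φ (f ω) * ψ (g ω)|m']
      =ᵐ[μ] fun ω => (μ[fun ω' => φ (f ω')|m']) ω * (μ[fun ω' => ψ (g ω')|m']) ω := by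
  have hφf : Measurable fun ω => φ (f ω) := hφ.comp hf
  have hψg : Measurable fun ω => ψ (g ω) := hψ.comp hg
  have int1 : Integrable (fun ω => φ (f ω)) μ :=
    integrable_of_abs_le hφf.aestronglyMeasurable hc₁
  have int2 : Integrable (fun ω => ψ (g ω)) μ :=
    integrable_of_abs_le hψg.aestronglyMeasurable hc₂
  have int12 : Integrable (fun ω => φ (f ω) * ψ (g ω)) μ :=
    integrable_of_abs_le (hφf.mul hψg).aestronglyMeasurable
      (c := |c₁| * |c₂|) fun ω => by
        rw [abs_mul]
        exact mul_le_mul ((hc₁ ω).trans (le_abs_self _)) ((hc₂ ω).trans (le_abs_self _))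
          (abs_nonneg _) (abs_nonneg _)
  have h1 := condExp_ae_eq_integral_condExpKernel hm' int12
  have h2 := condExp_ae_eq_integral_condExpKernel hm' int1
  have h3 := condExp_ae_eq_integral_condExpKernel hm' int2
  have hae := ae_indepFun_of_condIndepFun hm' hf hg h
  filter_upwards [h1, h2, h3, hae] with ω e1 e2 e3 hind
  rw [e1, e2, e3]
  haveI : IsProbabilityMeasure (condExpKernel μ m' ω) :=
    IsMarkovKernel.isProbabilityMeasure ω
  have hindc : IndepFun (fun ω' => φ (f ω')) (fun ω' => ψ (g ω')) (condExpKernel μ m' ω) :=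
    hind.comp hφ hψ
  exact hindc.integral_fun_mul_eq_mul_integral
    (integrable_of_abs_le hφf.aestronglyMeasurable hc₁).1
    (integrable_of_abs_le hψg.aestronglyMeasurable hc₂).1

end Aux2

section Aux3

open Set

variable {Ω : Type*} {mX mXA : MeasurableSpace Ω} {mΩ : MeasurableSpace Ω} [StandardBorelSpace Ω]
  {μ : Measure Ω} [IsProbabilityMeasure μ]

/-- If `A ⟂ g | mX` and `mXA` is generated by a π-system of sets of the form
`s ∩ A ⁻¹' B` with `s ∈ mX`, then conditioning a bounded function of `g` on `mXA` is the
same as conditioning on `mX`. -/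
lemma condexp_eq_of_condIndepFun {A : Ω → ℝ} (hA : Measurable A)
    {g : Ω → ℝ × ℝ} (hg : Measurable g)
    (hmXle : mX ≤ mΩ) (hXA : mXA ≤ mΩ) (hmle : mX ≤ mXA)
    {p : Set (Set Ω)} (hgen : mXA = MeasurableSpace.generateFrom p) (hpi : IsPiSystem p)
    (hbase : ∀ t ∈ p, ∃ s B, MeasurableSet[mX] s ∧ MeasurableSet B ∧ t = s ∩ A ⁻¹' B)
    (h : CondIndepFun mX hmXle A g μ)
    {ψ : ℝ × ℝ → ℝ} (hψ : Measurable ψ) {c : ℝ} (hc : ∀ ω, |ψ (g ω)| ≤ c) :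
    μ[(fun ω => ψ (g ω))|mXA] =ᵐ[μ] μ[(fun ω => ψ (g ω))|mX] := by
  have hGmeas : Measurable fun ω => ψ (g ω) := hψ.comp hg
  set G : Ω → ℝ := fun ω => ψ (g ω) with hGdef
  have hGint : Integrable G μ := integrable_of_abs_le hGmeas.aestronglyMeasurable hc
  set ν : Ω → ℝ := μ[G|mX] with hνdef
  have hνint : Integrable ν μ := integrable_condExp
  have hνbdd : ∀ᵐ ω ∂μ, |ν ω| ≤ (c.toNNReal : ℝ) :=
    ae_bdd_condExp_of_ae_bdd (Filter.Eventually.of_forall fun ω =>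
      (hc ω).trans (Real.coe_toNNReal' c ▸ le_max_left c 0))
  have key : ∀ s : Set Ω, MeasurableSet[mXA] s →
      ∫ x in s, ν x ∂μ = ∫ x in s, G x ∂μ := by
    intro s hs
    refine MeasurableSpace.induction_on_inter (m := mXA)
      (C := fun s _ => ∫ x in s, ν x ∂μ = ∫ x in s, G x ∂μ) (s := p)
      hgen hpi ?_ ?_ ?_ ?_ s hs
    · simp
    · intro t htp
      obtain ⟨s, B₂, hsX, hB₂, rfl⟩ := hbase t htp
      set χ : Ω → ℝ := fun ω => B₂.indicator (fun _ => (1:ℝ)) (A ω) with hχdef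
      have hχmeas : Measurable χ := (measurable_const.indicator hB₂).comp hA
      have hχbd : ∀ ω, |χ ω| ≤ 1 := by
        intro ω; by_cases hω : A ω ∈ B₂ <;> simp [hχdef, Set.indicator, hω]
      have hχint : Integrable χ μ := integrable_of_abs_le hχmeas.aestronglyMeasurable hχbd
      have hind : (A ⁻¹' B₂).indicator G = fun ω => χ ω * G ω := by
        funext ω; by_cases hω : A ω ∈ B₂ <;> simp [hχdef, Set.indicator, hω]
      have hindν : (A ⁻¹' B₂).indicator ν = fun ω => ν ω * χ ω := by
        funext ω; by_cases hω : A ω ∈ B₂ <;> simp [hχdef, Set.indicator, hω]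
      have hprod : μ[(fun ω => χ ω * G ω)|mX]
          =ᵐ[μ] fun ω => (μ[χ|mX]) ω * (μ[G|mX]) ω :=
        condexp_mul_of_condIndepFun hmXle hA hg h
          (measurable_const.indicator hB₂) hψ hχbd hc
      have hpull : μ[(fun ω => ν ω * χ ω)|mX] =ᵐ[μ] fun ω => ν ω * (μ[χ|mX]) ω := by
        have := condExp_stronglyMeasurable_mul_of_bound hmXle
          (stronglyMeasurable_condExp (f := G) (m := mX)) hχint (c.toNNReal : ℝ)
          (by filter_upwards [hνbdd] with ω hω using by rw [Real.norm_eq_abs]; exact hω)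
        exact this
      have hintχG : Integrable (fun ω => χ ω * G ω) μ :=
        integrable_of_abs_le (hχmeas.mul hGmeas).aestronglyMeasurable
          (c := 1 * |c|) fun ω => by
            rw [abs_mul]
            exact mul_le_mul (hχbd ω) ((hc ω).trans (le_abs_self _)) (abs_nonneg _) zero_le_one
      have hintνχ : Integrable (fun ω => ν ω * χ ω) μ := by
        refine Integrable.bdd_mul (c := (c.toNNReal : ℝ)) hχint
          ((stronglyMeasurable_condExp (f := G) (m := mX)).mono hmXle).aestronglyMeasurable ?_
        filter_upwards [hνbdd] with ω hω using by rw [Real.norm_eq_abs]; exact hω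
      calc ∫ x in s ∩ A ⁻¹' B₂, ν x ∂μ
          = ∫ x in s, (A ⁻¹' B₂).indicator ν x ∂μ :=
            (setIntegral_indicator (hA hB₂)).symm
        _ = ∫ x in s, (fun ω => ν ω * χ ω) x ∂μ := by rw [hindν]
        _ = ∫ x in s, (μ[(fun ω => ν ω * χ ω)|mX]) x ∂μ :=
            (setIntegral_condExp hmXle hintνχ hsX).symm
        _ = ∫ x in s, (μ[(fun ω => χ ω * G ω)|mX]) x ∂μ := by
            refine setIntegral_congr_ae (hmXle _ hsX) ?_
            filter_upwards [hpull, hprod] with ω e1 e2 _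
            rw [e1, e2]; ring
        _ = ∫ x in s, (fun ω => χ ω * G ω) x ∂μ :=
            setIntegral_condExp hmXle hintχG hsX
        _ = ∫ x in s, (A ⁻¹' B₂).indicator G x ∂μ := by rw [hind]
        _ = ∫ x in s ∩ A ⁻¹' B₂, G x ∂μ := setIntegral_indicator (hA hB₂)
    · intro t htm ht
      have htΩ : MeasurableSet t := hXA _ htm
      have e1 := integral_add_compl htΩ hνint
      have e2 := integral_add_compl htΩ hGint
      have e3 : ∫ x, ν x ∂μ = ∫ x, G x ∂μ := integral_condExp hmXle
      linarith
    · intro fs hdisj hmeas hC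
      rw [integral_iUnion (fun i => hXA _ (hmeas i)) hdisj hνint.integrableOn,
        integral_iUnion (fun i => hXA _ (hmeas i)) hdisj hGint.integrableOn]
      exact tsum_congr hC
  exact (ae_eq_condExp_of_forall_setIntegral_eq hXA hGint
    (fun s _ _ => hνint.integrableOn)
    (fun s hs _ => key s hs)
    ((stronglyMeasurable_condExp.mono hmle).aestronglyMeasurable)).symm

end Aux3

section Main

open Set

variable {Ω : Type*} {mX mXA : MeasurableSpace Ω} {mΩ : MeasurableSpace Ω} [StandardBorelSpace Ω]

lemma incremental_main_aux
    (P : Measure Ω) [IsProbabilityMeasure P]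
    (A R : Ω → ℝ) (hA : Measurable A) (hR : Measurable R)
    (hA01 : ∀ ω, A ω = 0 ∨ A ω = 1) (hR01 : ∀ ω, R ω = 0 ∨ R ω = 1)
    (Y0 Y1 : Ω → ℝ) (hY0 : Measurable Y0) (hY1 : Measurable Y1)
    (C : ℝ) (hC0 : 0 ≤ C) (hbd : ∀ ω, |Y0 ω| ≤ C ∧ |Y1 ω| ≤ C)
    (hmXle : mX ≤ mΩ) (hXAle : mXA ≤ mΩ) (hmle : mX ≤ mXA)
    (hAmXA : Measurable[mXA] A)
    {p : Set (Set Ω)} (hgen : mXA = MeasurableSpace.generateFrom p) (hpi : IsPiSystem p)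
    (hbase : ∀ t ∈ p, ∃ s B, MeasurableSet[mX] s ∧ MeasurableSet B ∧ t = s ∩ A ⁻¹' B)
    (hexch : CondIndepFun mX hmXle A (fun ω => (Y0 ω, Y1 ω)) P)
    (hmar : CondIndepFun mXA hXAle R (fun ω => (Y0 ω, Y1 ω)) P)
    (ε : ℝ) (hε : 0 < ε) (hpos : ∀ᵐ ω ∂P, ε ≤ (P[R|mXA]) ω)
    (δ : ℝ) (hδ : 0 < δ)
    (π : Ω → ℝ) (hπmeas : Measurable[mX] π) (hπ01 : ∀ ω, π ω ∈ Set.Icc (0:ℝ) 1)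
    (hπ : π =ᵐ[P] P[A|mX])
    (μ₁ μ₀ : Ω → ℝ)
    (hμ₁meas : Measurable[mX] μ₁) (hμ₀meas : Measurable[mX] μ₀)
    (hμ₁ : (fun ω => μ₁ ω * (P[fun ω' => A ω' * R ω'|mX]) ω)
      =ᵐ[P] P[fun ω' => (A ω' * Y1 ω' + (1 - A ω') * Y0 ω') * (A ω' * R ω')|mX])
    (hμ₀ : (fun ω => μ₀ ω * (P[fun ω' => (1 - A ω') * R ω'|mX]) ω)
      =ᵐ[P] P[fun ω' => (A ω' * Y1 ω' + (1 - A ω') * Y0 ω') * ((1 - A ω') * R ω')|mX]) :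
    ∫ ω, ((δ * π ω / (δ * π ω + 1 - π ω)) * Y1 ω
          + (1 - δ * π ω / (δ * π ω + 1 - π ω)) * Y0 ω) ∂P
      = ∫ ω, (δ * π ω * μ₁ ω + (1 - π ω) * μ₀ ω) / (δ * π ω + 1 - π ω) ∂P := by
  have hW : Measurable fun ω => (Y0 ω, Y1 ω) := hY0.prodMk hY1
  have hA1 : ∀ ω, |A ω| ≤ 1 := fun ω => by rcases hA01 ω with h|h <;> simp [h]
  have hA0 : ∀ ω, 0 ≤ A ω := fun ω => by rcases hA01 ω with h|h <;> simp [h]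
  have hAle1 : ∀ ω, A ω ≤ 1 := fun ω => by rcases hA01 ω with h|h <;> simp [h]
  have hR1 : ∀ ω, |R ω| ≤ 1 := fun ω => by rcases hR01 ω with h|h <;> simp [h]
  have hY0bd : ∀ ω, |Y0 ω| ≤ C := fun ω => (hbd ω).1
  have hY1bd : ∀ ω, |Y1 ω| ≤ C := fun ω => (hbd ω).2
  have hintA : Integrable A P := integrable_of_abs_le hA.aestronglyMeasurable hA1
  have hintR : Integrable R P := integrable_of_abs_le hR.aestronglyMeasurable hR1
  -- conditional expectations of Y1, Y0 coincide on mXA and mX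
  have hY1cond : P[Y1|mXA] =ᵐ[P] P[Y1|mX] := by
    have := condexp_eq_of_condIndepFun hA hW hmXle hXAle hmle hgen hpi hbase hexch
      (ψ := Prod.snd) measurable_snd (c := C) (fun ω => (hbd ω).2)
    exact this
  have hY0cond : P[Y0|mXA] =ᵐ[P] P[Y0|mX] := by
    have := condexp_eq_of_condIndepFun hA hW hmXle hXAle hmle hgen hpi hbase hexch
      (ψ := Prod.fst) measurable_fst (c := C) (fun ω => (hbd ω).1)
    exact this
  -- MAR product formulas
  have hRY1 : P[(fun ω => R ω * Y1 ω)|mXA]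
      =ᵐ[P] fun ω => (P[R|mXA]) ω * (P[Y1|mXA]) ω := by
    have := condexp_mul_of_condIndepFun hXAle hR hW hmar (φ := id) measurable_id
      (ψ := Prod.snd) measurable_snd (c₁ := 1) (c₂ := C)
      (fun ω => hR1 ω) (fun ω => (hbd ω).2)
    exact this
  have hRY0 : P[(fun ω => R ω * Y0 ω)|mXA]
      =ᵐ[P] fun ω => (P[R|mXA]) ω * (P[Y0|mXA]) ω := by
    have := condexp_mul_of_condIndepFun hXAle hR hW hmar (φ := id) measurable_id
      (ψ := Prod.fst) measurable_fst (c₁ := 1) (c₂ := C)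
      (fun ω => hR1 ω) (fun ω => (hbd ω).1)
    exact this
  -- the core computation for each arm
  have core : ∀ (B Z : Ω → ℝ), Measurable Z → Measurable[mXA] B → (∀ ω, |B ω| ≤ 1) →
      (∀ ω, |Z ω| ≤ C) →
      (P[(fun ω => R ω * Z ω)|mXA] =ᵐ[P] fun ω => (P[R|mXA]) ω * (P[Z|mXA]) ω) →
      (P[Z|mXA] =ᵐ[P] P[Z|mX]) →
      P[(fun ω => B ω * (R ω * Z ω))|mX]
        =ᵐ[P] fun ω => (P[Z|mX]) ω * (P[(fun ω' => B ω' * R ω')|mX]) ω := by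
    intro B Z hZ hBmXA hB1 hZbd hRZ hZcond
    have hBmeas : Measurable B := hBmXA.mono hXAle le_rfl
    have hintRZ : Integrable (fun ω => R ω * Z ω) P :=
      integrable_of_abs_le (hR.mul hZ).aestronglyMeasurable (c := 1 * C) fun ω => by
        rw [abs_mul]
        exact mul_le_mul (hR1 ω) (hZbd ω) (abs_nonneg _) zero_le_one
    have hintBR : Integrable (fun ω => B ω * R ω) P :=
      integrable_of_abs_le (hBmeas.mul hR).aestronglyMeasurable (c := 1 * 1) fun ω => by
        rw [abs_mul]
        exact mul_le_mul (hB1 ω) (hR1 ω) (abs_nonneg _) zero_le_one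
    have h1 : P[(fun ω => B ω * (R ω * Z ω))|mXA]
        =ᵐ[P] fun ω => B ω * ((P[(fun ω' => R ω' * Z ω')|mXA]) ω) :=
      condExp_stronglyMeasurable_mul_of_bound hXAle hBmXA.stronglyMeasurable hintRZ 1
        (Filter.Eventually.of_forall fun ω => by rw [Real.norm_eq_abs]; exact hB1 ω)
    have h2 : P[(fun ω => B ω * R ω)|mXA] =ᵐ[P] fun ω => B ω * ((P[R|mXA]) ω) :=
      condExp_stronglyMeasurable_mul_of_bound hXAle hBmXA.stronglyMeasurable hintR 1
        (Filter.Eventually.of_forall fun ω => by rw [Real.norm_eq_abs]; exact hB1 ω)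
    have h3 : P[(fun ω => B ω * (R ω * Z ω))|mXA]
        =ᵐ[P] fun ω => (P[Z|mX]) ω * ((P[(fun ω' => B ω' * R ω')|mXA]) ω) := by
      filter_upwards [h1, h2, hRZ, hZcond] with ω e1 e2 e3 e4
      rw [e1, e3, e2, ← e4]; ring
    have hZbdd : ∀ᵐ ω ∂P, ‖(P[Z|mX]) ω‖ ≤ (C.toNNReal : ℝ) := by
      have := ae_bdd_condExp_of_ae_bdd (m := mX) (μ := P) (R := C.toNNReal)
        (Filter.Eventually.of_forall fun ω =>
          (hZbd ω).trans (Real.coe_toNNReal' C ▸ le_max_left C 0))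
      filter_upwards [this] with ω hω using by rw [Real.norm_eq_abs]; exact hω
    calc P[(fun ω => B ω * (R ω * Z ω))|mX]
        =ᵐ[P] P[P[(fun ω => B ω * (R ω * Z ω))|mXA]|mX] :=
          (condExp_condExp_of_le hmle hXAle).symm
      _ =ᵐ[P] P[(fun ω => (P[Z|mX]) ω * ((P[(fun ω' => B ω' * R ω')|mXA]) ω))|mX] :=
          condExp_congr_ae h3
      _ =ᵐ[P] fun ω => (P[Z|mX]) ω * ((P[P[(fun ω' => B ω' * R ω')|mXA]|mX]) ω) :=
          condExp_stronglyMeasurable_mul_of_bound hmXle stronglyMeasurable_condExp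
            integrable_condExp (C.toNNReal : ℝ) hZbdd
      _ =ᵐ[P] fun ω => (P[Z|mX]) ω * ((P[(fun ω' => B ω' * R ω')|mX]) ω) := by
          filter_upwards [condExp_condExp_of_le (f := fun ω' => B ω' * R ω') hmle hXAle]
            with ω e
          rw [e]
  -- positivity lower bound for each arm
  have hposArm : ∀ (B : Ω → ℝ), Measurable[mXA] B → (∀ ω, 0 ≤ B ω) → (∀ ω, |B ω| ≤ 1) →
      ∀ᵐ ω ∂P, ε * (P[B|mX]) ω ≤ (P[(fun ω' => B ω' * R ω')|mX]) ω := by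
    intro B hBmXA hB0 hB1
    have hBmeas : Measurable B := hBmXA.mono hXAle le_rfl
    have hintB : Integrable B P := integrable_of_abs_le hBmeas.aestronglyMeasurable hB1
    have hintBR : Integrable (fun ω => B ω * R ω) P :=
      integrable_of_abs_le (hBmeas.mul hR).aestronglyMeasurable (c := 1 * 1) fun ω => by
        rw [abs_mul]
        exact mul_le_mul (hB1 ω) (hR1 ω) (abs_nonneg _) zero_le_one
    have h2 : P[(fun ω => B ω * R ω)|mXA] =ᵐ[P] fun ω => B ω * ((P[R|mXA]) ω) :=
      condExp_stronglyMeasurable_mul_of_bound hXAle hBmXA.stronglyMeasurable hintR 1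
        (Filter.Eventually.of_forall fun ω => by rw [Real.norm_eq_abs]; exact hB1 ω)
    have hle : (fun ω => ε * B ω) ≤ᵐ[P] P[(fun ω => B ω * R ω)|mXA] := by
      filter_upwards [h2, hpos] with ω e2 hp
      rw [e2]
      calc ε * B ω = B ω * ε := mul_comm _ _
        _ ≤ B ω * (P[R|mXA]) ω := mul_le_mul_of_nonneg_left hp (hB0 ω)
    have hmono := condExp_mono (m := mX) (μ := P)
      ((hintB.const_mul ε).congr (Filter.Eventually.of_forall fun ω => rfl))
      integrable_condExp hle
    have hsmul : P[(fun ω => ε * B ω)|mX] =ᵐ[P] fun ω => ε * (P[B|mX]) ω := by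
      have := condExp_smul (m := mX) (μ := P) ε B
      exact this
    have htower : P[P[(fun ω => B ω * R ω)|mXA]|mX]
        =ᵐ[P] P[(fun ω => B ω * R ω)|mX] := condExp_condExp_of_le hmle hXAle
    filter_upwards [hmono, hsmul, htower] with ω e1 e2 e3
    rw [← e3, ← e2]
    exact e1
  -- pointwise consistency rewrites
  have harm1eq : (fun ω' => (A ω' * Y1 ω' + (1 - A ω') * Y0 ω') * (A ω' * R ω'))
      = fun ω => A ω * (R ω * Y1 ω) := by
    funext ω; rcases hA01 ω with h|h <;> simp [h] <;> ring
  have harm0eq : (fun ω' => (A ω' * Y1 ω' + (1 - A ω') * Y0 ω') * ((1 - A ω') * R ω'))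
      = fun ω => (1 - A ω) * (R ω * Y0 ω) := by
    funext ω; rcases hA01 ω with h|h <;> simp [h] <;> ring
  have h1AmXA : Measurable[mXA] fun ω => 1 - A ω := measurable_const.sub hAmXA
  have h1A1 : ∀ ω, |1 - A ω| ≤ 1 := fun ω => by rcases hA01 ω with h|h <;> simp [h]
  have h1A0 : ∀ ω, 0 ≤ 1 - A ω := fun ω => by linarith [hAle1 ω]
  have harm1 := core A Y1 hY1 hAmXA hA1 hY1bd hRY1 hY1cond
  have harm0 := core (fun ω => 1 - A ω) Y0 hY0 h1AmXA h1A1 hY0bd hRY0 hY0cond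
  have hpos1 := hposArm A hAmXA hA0 hA1
  have hpos0 := hposArm (fun ω => 1 - A ω) h1AmXA h1A0 h1A1
  -- E[1 - A | mX] = 1 - π
  have h1Acond : P[(fun ω => 1 - A ω)|mX] =ᵐ[P] fun ω => 1 - π ω := by
    have hsub : P[(fun ω => 1 - A ω)|mX] =ᵐ[P] P[(fun _ => (1:ℝ))|mX] - P[A|mX] :=
      condExp_sub (integrable_const 1) hintA mX
    filter_upwards [hsub, hπ] with ω e1 e2
    rw [e1]
    simp only [Pi.sub_apply, condExp_const hmXle, ← e2]
  -- identification of the regressions where the weights are positive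
  have harmD1 : ∀ᵐ ω ∂P, δ * π ω * μ₁ ω = δ * π ω * (P[Y1|mX]) ω := by
    rw [harm1eq] at hμ₁
    filter_upwards [hμ₁, harm1, hpos1, hπ] with ω e1 e2 e3 e4
    rcases eq_or_lt_of_le (hπ01 ω).1 with h0|h0
    · rw [← h0]; ring
    · have hν : 0 < (P[fun ω' => A ω' * R ω'|mX]) ω :=
        lt_of_lt_of_le (mul_pos hε (e4 ▸ h0)) e3
      have hcancel : μ₁ ω = (P[Y1|mX]) ω :=
        mul_right_cancel₀ (ne_of_gt hν) (e1.trans e2)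
      rw [hcancel]
  have harmD0 : ∀ᵐ ω ∂P, (1 - π ω) * μ₀ ω = (1 - π ω) * (P[Y0|mX]) ω := by
    rw [harm0eq] at hμ₀
    filter_upwards [hμ₀, harm0, hpos0, h1Acond] with ω e1 e2 e3 e4
    rcases eq_or_lt_of_le (hπ01 ω).2 with h0|h0
    · rw [h0]; ring
    · have hν : 0 < (P[fun ω' => (1 - A ω') * R ω'|mX]) ω := by
        refine lt_of_lt_of_le (mul_pos hε ?_) e3
        rw [e4]; linarith
      have hcancel : μ₀ ω = (P[Y0|mX]) ω :=
        mul_right_cancel₀ (ne_of_gt hν) (e1.trans e2)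
      rw [hcancel]
  -- the denominator is positive
  have hD : ∀ ω, 0 < δ * π ω + 1 - π ω := by
    intro ω
    rcases lt_or_ge (π ω) 1 with h|h
    · nlinarith [mul_nonneg hδ.le (hπ01 ω).1]
    · have heq : π ω = 1 := le_antisymm (hπ01 ω).2 h
      rw [heq]; linarith
  have hq0 : ∀ ω, 0 ≤ δ * π ω / (δ * π ω + 1 - π ω) := fun ω =>
    div_nonneg (mul_nonneg hδ.le (hπ01 ω).1) (hD ω).le
  have hq1 : ∀ ω, δ * π ω / (δ * π ω + 1 - π ω) ≤ 1 := fun ω =>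
    (div_le_one (hD ω)).2 (by linarith [(hπ01 ω).2])
  have hqabs : ∀ ω, |δ * π ω / (δ * π ω + 1 - π ω)| ≤ 1 := fun ω => by
    rw [abs_le]; constructor
    · linarith [hq0 ω]
    · exact hq1 ω
  have h1qabs : ∀ ω, |1 - δ * π ω / (δ * π ω + 1 - π ω)| ≤ 1 := fun ω => by
    rw [abs_le]; constructor
    · linarith [hq1 ω]
    · linarith [hq0 ω]
  have hqmX : Measurable[mX] fun ω => δ * π ω / (δ * π ω + 1 - π ω) :=
    (hπmeas.const_mul δ).div (((hπmeas.const_mul δ).add_const 1).sub hπmeas)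
  have h1qmX : Measurable[mX] fun ω => 1 - δ * π ω / (δ * π ω + 1 - π ω) :=
    measurable_const.sub hqmX
  have hqmeas : Measurable fun ω => δ * π ω / (δ * π ω + 1 - π ω) := hqmX.mono hmXle le_rfl
  have h1qmeas : Measurable fun ω => 1 - δ * π ω / (δ * π ω + 1 - π ω) :=
    measurable_const.sub hqmeas
  have hintY1 : Integrable Y1 P := integrable_of_abs_le hY1.aestronglyMeasurable hY1bd
  have hintY0 : Integrable Y0 P := integrable_of_abs_le hY0.aestronglyMeasurable hY0bd
  have hintqY1 : Integrable (fun ω => (δ * π ω / (δ * π ω + 1 - π ω)) * Y1 ω) P :=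
    integrable_of_abs_le (hqmeas.mul hY1).aestronglyMeasurable (c := 1 * C) fun ω => by
      rw [abs_mul]
      exact mul_le_mul (hqabs ω) (hY1bd ω) (abs_nonneg _) zero_le_one
  have hint1qY0 : Integrable (fun ω => (1 - δ * π ω / (δ * π ω + 1 - π ω)) * Y0 ω) P :=
    integrable_of_abs_le (h1qmeas.mul hY0).aestronglyMeasurable (c := 1 * C) fun ω => by
      rw [abs_mul]
      exact mul_le_mul (h1qabs ω) (hY0bd ω) (abs_nonneg _) zero_le_one
  have hintqm1 : Integrable (fun ω => (δ * π ω / (δ * π ω + 1 - π ω)) * (P[Y1|mX]) ω) P :=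
    Integrable.bdd_mul (c := 1) integrable_condExp hqmeas.aestronglyMeasurable
      (Filter.Eventually.of_forall fun ω => by rw [Real.norm_eq_abs]; exact hqabs ω)
  have hint1qm0 : Integrable
      (fun ω => (1 - δ * π ω / (δ * π ω + 1 - π ω)) * (P[Y0|mX]) ω) P :=
    Integrable.bdd_mul (c := 1) integrable_condExp h1qmeas.aestronglyMeasurable
      (Filter.Eventually.of_forall fun ω => by rw [Real.norm_eq_abs]; exact h1qabs ω)
  have e1 : ∫ ω, (δ * π ω / (δ * π ω + 1 - π ω)) * Y1 ω ∂P
      = ∫ ω, (δ * π ω / (δ * π ω + 1 - π ω)) * (P[Y1|mX]) ω ∂P := by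
    have hpq : P[(fun ω => (δ * π ω / (δ * π ω + 1 - π ω)) * Y1 ω)|mX]
        =ᵐ[P] fun ω => (δ * π ω / (δ * π ω + 1 - π ω)) * (P[Y1|mX]) ω :=
      condExp_stronglyMeasurable_mul_of_bound hmXle hqmX.stronglyMeasurable hintY1 1
        (Filter.Eventually.of_forall fun ω => by rw [Real.norm_eq_abs]; exact hqabs ω)
    calc ∫ ω, (δ * π ω / (δ * π ω + 1 - π ω)) * Y1 ω ∂P
        = ∫ ω, (P[(fun ω => (δ * π ω / (δ * π ω + 1 - π ω)) * Y1 ω)|mX]) ω ∂P :=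
          (integral_condExp hmXle).symm
      _ = ∫ ω, (δ * π ω / (δ * π ω + 1 - π ω)) * (P[Y1|mX]) ω ∂P := integral_congr_ae hpq
  have e0 : ∫ ω, (1 - δ * π ω / (δ * π ω + 1 - π ω)) * Y0 ω ∂P
      = ∫ ω, (1 - δ * π ω / (δ * π ω + 1 - π ω)) * (P[Y0|mX]) ω ∂P := by
    have hpq : P[(fun ω => (1 - δ * π ω / (δ * π ω + 1 - π ω)) * Y0 ω)|mX]
        =ᵐ[P] fun ω => (1 - δ * π ω / (δ * π ω + 1 - π ω)) * (P[Y0|mX]) ω :=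
      condExp_stronglyMeasurable_mul_of_bound hmXle h1qmX.stronglyMeasurable hintY0 1
        (Filter.Eventually.of_forall fun ω => by rw [Real.norm_eq_abs]; exact h1qabs ω)
    calc ∫ ω, (1 - δ * π ω / (δ * π ω + 1 - π ω)) * Y0 ω ∂P
        = ∫ ω, (P[(fun ω => (1 - δ * π ω / (δ * π ω + 1 - π ω)) * Y0 ω)|mX]) ω ∂P :=
          (integral_condExp hmXle).symm
      _ = ∫ ω, (1 - δ * π ω / (δ * π ω + 1 - π ω)) * (P[Y0|mX]) ω ∂P := integral_congr_ae hpq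
  have hRHS : ∫ ω, (δ * π ω * μ₁ ω + (1 - π ω) * μ₀ ω) / (δ * π ω + 1 - π ω) ∂P
      = ∫ ω, ((δ * π ω / (δ * π ω + 1 - π ω)) * (P[Y1|mX]) ω
          + (1 - δ * π ω / (δ * π ω + 1 - π ω)) * (P[Y0|mX]) ω) ∂P := by
    refine integral_congr_ae ?_
    filter_upwards [harmD1, harmD0] with ω d1 d0
    rw [d1, d0]
    have hDne : (δ * π ω + 1 - π ω) ≠ 0 := (hD ω).ne'
    have h1 : 1 - δ * π ω / (δ * π ω + 1 - π ω) = (1 - π ω) / (δ * π ω + 1 - π ω) := by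
      rw [eq_div_iff hDne, sub_mul, div_mul_cancel₀ _ hDne]
      ring
    rw [h1, div_mul_eq_mul_div, div_mul_eq_mul_div, ← add_div]
  calc ∫ ω, ((δ * π ω / (δ * π ω + 1 - π ω)) * Y1 ω
          + (1 - δ * π ω / (δ * π ω + 1 - π ω)) * Y0 ω) ∂P
      = ∫ ω, (δ * π ω / (δ * π ω + 1 - π ω)) * Y1 ω ∂P
        + ∫ ω, (1 - δ * π ω / (δ * π ω + 1 - π ω)) * Y0 ω ∂P :=
        integral_add hintqY1 hint1qY0
    _ = ∫ ω, (δ * π ω / (δ * π ω + 1 - π ω)) * (P[Y1|mX]) ω ∂P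
        + ∫ ω, (1 - δ * π ω / (δ * π ω + 1 - π ω)) * (P[Y0|mX]) ω ∂P := by rw [e1, e0]
    _ = ∫ ω, ((δ * π ω / (δ * π ω + 1 - π ω)) * (P[Y1|mX]) ω
          + (1 - δ * π ω / (δ * π ω + 1 - π ω)) * (P[Y0|mX]) ω) ∂P :=
        (integral_add hintqm1 hint1qm0).symm
    _ = ∫ ω, (δ * π ω * μ₁ ω + (1 - π ω) * μ₀ ω) / (δ * π ω + 1 - π ω) ∂P := hRHS.symm

end Main



/-- Identification of the incremental intervention effect in a point-exposure study (`T = 1`)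
with outcome missingness.  Under consistency (`Y = A·Y¹ + (1−A)·Y⁰`), exchangeability
(`A ⟂ (Y⁰,Y¹) | σ(X)`), missing-at-random (`R ⟂ (Y⁰,Y¹) | σ(X,A)`) and missingness positivity
(`E[R | σ(X,A)] ≥ ε > 0` a.s.), the incremental mean
`ψ(δ) = E[q·Y¹ + (1−q)·Y⁰]` with `q = δπ/(δπ + 1 − π)` equals the observed-data functional
`E[(δ·π·μ₁ + (1−π)·μ₀)/(δ·π + 1 − π)]`. -/
theorem incremental_identification_point_exposure
    {Ω : Type*} [mΩ : MeasurableSpace Ω] [StandardBorelSpace Ω]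
    (P : Measure Ω) [IsProbabilityMeasure P]
    (d : ℕ) (X : Ω → (Fin d → ℝ)) (hX : Measurable X)
    (A R : Ω → ℝ) (hA : Measurable A) (hR : Measurable R)
    (hA01 : ∀ ω, A ω = 0 ∨ A ω = 1) (hR01 : ∀ ω, R ω = 0 ∨ R ω = 1)
    (Y0 Y1 : Ω → ℝ) (hY0 : Measurable Y0) (hY1 : Measurable Y1)
    (C : ℝ) (hbd : ∀ ω, |Y0 ω| ≤ C ∧ |Y1 ω| ≤ C)
    -- exchangeability: A ⟂ (Y⁰, Y¹) given σ(X)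
    (hexch : CondIndepFun (MeasurableSpace.comap X inferInstance) hX.comap_le
      A (fun ω => (Y0 ω, Y1 ω)) P)
    -- missing-at-random: R ⟂ (Y⁰, Y¹) given σ(X, A)
    (hmar : CondIndepFun (MeasurableSpace.comap (fun ω => (X ω, A ω)) inferInstance)
      (hX.prodMk hA).comap_le R (fun ω => (Y0 ω, Y1 ω)) P)
    -- missingness positivity: E[R | σ(X,A)] ≥ ε > 0 a.s.
    (ε : ℝ) (hε : 0 < ε)
    (hpos : ∀ᵐ ω ∂P,
      ε ≤ (P[R | MeasurableSpace.comap (fun ω => (X ω, A ω)) inferInstance]) ω)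
    (δ : ℝ) (hδ : 0 < δ)
    -- π: a σ(X)-measurable version of E[A | σ(X)] with values in [0,1]
    (π : Ω → ℝ) (hπmeas : Measurable[MeasurableSpace.comap X inferInstance] π)
    (hπ01 : ∀ ω, π ω ∈ Set.Icc (0:ℝ) 1)
    (hπ : π =ᵐ[P] P[A | MeasurableSpace.comap X inferInstance])
    -- μ₁, μ₀: σ(X)-measurable outcome regressions among the observed, characterized by
    -- μₐ · E[1{A=a}·R | σ(X)] = E[Y·1{A=a}·R | σ(X)] a.s., with Y = A·Y¹ + (1−A)·Y⁰
    (μ₁ μ₀ : Ω → ℝ)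
    (hμ₁meas : Measurable[MeasurableSpace.comap X inferInstance] μ₁)
    (hμ₀meas : Measurable[MeasurableSpace.comap X inferInstance] μ₀)
    (hμ₁ : (fun ω => μ₁ ω *
        (P[fun ω' => A ω' * R ω' | MeasurableSpace.comap X inferInstance]) ω)
      =ᵐ[P] P[fun ω' => (A ω' * Y1 ω' + (1 - A ω') * Y0 ω') * (A ω' * R ω') |
          MeasurableSpace.comap X inferInstance])
    (hμ₀ : (fun ω => μ₀ ω *
        (P[fun ω' => (1 - A ω') * R ω' | MeasurableSpace.comap X inferInstance]) ω)
      =ᵐ[P] P[fun ω' => (A ω' * Y1 ω' + (1 - A ω') * Y0 ω') * ((1 - A ω') * R ω') |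
          MeasurableSpace.comap X inferInstance]) :
    ∫ ω, ((δ * π ω / (δ * π ω + 1 - π ω)) * Y1 ω
          + (1 - δ * π ω / (δ * π ω + 1 - π ω)) * Y0 ω) ∂P
      = ∫ ω, (δ * π ω * μ₁ ω + (1 - π ω) * μ₀ ω) / (δ * π ω + 1 - π ω) ∂P := by

  have hne : Nonempty Ω := by
    by_contra hΩ
    rw [not_nonempty_iff] at hΩ
    have h1 : P Set.univ = 1 := measure_univ
    rw [Measure.eq_zero_of_isEmpty P] at h1
    simp at h1
  have hC0 : 0 ≤ C := le_trans (abs_nonneg _) (hbd (Classical.arbitrary Ω)).1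
  have hmle : MeasurableSpace.comap X inferInstance
      ≤ MeasurableSpace.comap (fun ω => (X ω, A ω)) inferInstance := by
    rintro s ⟨B, hB, rfl⟩
    exact ⟨B ×ˢ Set.univ, hB.prod MeasurableSet.univ, by ext ω; simp⟩
  have hAmXA : Measurable[MeasurableSpace.comap (fun ω => (X ω, A ω)) inferInstance] A := by
    intro s hs
    exact ⟨Set.univ ×ˢ s, MeasurableSet.univ.prod hs, by ext ω; simp⟩
  have hgen : MeasurableSpace.comap (fun ω => (X ω, A ω)) inferInstance
      = MeasurableSpace.generateFrom (Set.preimage (fun ω => (X ω, A ω)) ''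
          Set.image2 (· ×ˢ ·) {u : Set (Fin d → ℝ) | MeasurableSet u}
            {t : Set ℝ | MeasurableSet t}) := by
    rw [show (inferInstance : MeasurableSpace ((Fin d → ℝ) × ℝ))
        = MeasurableSpace.generateFrom (Set.image2 (· ×ˢ ·)
            {u : Set (Fin d → ℝ) | MeasurableSet u} {t : Set ℝ | MeasurableSet t})
          from generateFrom_prod.symm, MeasurableSpace.comap_generateFrom]
  have hbase : ∀ t ∈ Set.preimage (fun ω => (X ω, A ω)) ''
      Set.image2 (· ×ˢ ·) {u : Set (Fin d → ℝ) | MeasurableSet u} {t : Set ℝ | MeasurableSet t},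
      ∃ s B, MeasurableSet[MeasurableSpace.comap X inferInstance] s ∧ MeasurableSet B
        ∧ t = s ∩ A ⁻¹' B := by
    rintro t ⟨u, ⟨B₁, hB₁, B₂, hB₂, rfl⟩, rfl⟩
    exact ⟨X ⁻¹' B₁, B₂, ⟨B₁, hB₁, rfl⟩, hB₂, by ext ω;simp [Set.mem_prod]⟩
  exact incremental_main_aux P A R hA hR hA01 hR01 Y0 Y1 hY0 hY1 C hC0 hbd
    hX.comap_le (hX.prodMk hA).comap_le hmle hAmXA hgen (isPiSystem_prod.comap _) hbase
    hexch hmar ε hε hpos δ hδ π hπmeas hπ01 hπ μ₁ μ₀ hμ₁meas hμ₀meas hμ₁ hμ₀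
end

section
/- In the simplified infinite-time-horizon setting, for every δ > 0 the incremental-effect IPW estimator satisfies the g-formula representation E[ψ̂_inc] = Σ_{ā ∈ {0,1}^T} (∏_{t=1}^T q_δ(a_t))·E[Y^ā], where q_δ(a) = (a·δp + (1 − a)(1 − p))/(δp + 1 − p); since q_δ(1) + q_δ(0) = 1, these weights sum to one over ā ∈ {0,1}^T, and consequently |E[ψ̂_inc]| ≤ b_u. -/
open MeasureTheory ProbabilityTheory

noncomputable section

/-- Codomain of the joint family `(A₁, …, A_T, U)`: index `some t` carries the binary
treatment `A_t` (valued in `Bool`) and index `none` carries the exogenous variable `U`. -/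
def Cod (E : Type) (T : ℕ) : Option (Fin T) → Type
  | none => E
  | some _ => Bool

instance CodMeas (E : Type) [MeasurableSpace E] (T : ℕ) : ∀ i, MeasurableSpace (Cod E T i)
  | none => inferInstanceAs (MeasurableSpace E)
  | some _ => inferInstanceAs (MeasurableSpace Bool)

/-- The joint family `(A₁, …, A_T, U)` bundled as a single dependently-typed family of random
variables, used to state that `(A₁, …, A_T, U)` is mutually independent. -/
def fam {Ω : Type*} {E : Type} (T : ℕ) (A : Fin T → Ω → Bool) (U : Ω → E) :
    (i : Option (Fin T)) → Ω → Cod E T i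
  | none => U
  | some t => A t

/-- g-formula representation of the incremental-effect IPW estimator:
`E[ψ̂_inc] = Σ_ā (∏_t q_δ(a_t))·E[Y^ā]` with `q_δ(a) = (aδp + (1−a)(1−p))/(δp+1−p)`;
the weights sum to one, and consequently `|E[ψ̂_inc]| ≤ b_u`. -/
theorem inc_gformula
    {Ω : Type*} {E : Type} [MeasurableSpace Ω] [MeasurableSpace E]
    (P : Measure Ω) [IsProbabilityMeasure P]
    (T : ℕ) (hT : 1 ≤ T)
    (p : ℝ) (hp : p ∈ Set.Ioo (0:ℝ) 1)
    (A : Fin T → Ω → Bool) (U : Ω → E)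
    (hAmeas : ∀ t, Measurable (A t)) (hUmeas : Measurable U)
    (hindep : iIndepFun (m := fun i => CodMeas E T i) (fam T A U) P)
    (hAp : ∀ t, P {ω | A t ω = true} = ENNReal.ofReal p)
    (f : (Fin T → Bool) → E → ℝ)
    (hf : Measurable (fun q : (Fin T → Bool) × E => f q.1 q.2))
    (bu : ℝ) (hbu : 0 < bu) (hfbd : ∀ a e, |f a e| ≤ bu)
    (δ : ℝ) (hδ : 0 < δ) :
    (∫ ω, (∏ t, (if A t ω then δ else 1) / (δ * p + 1 - p)) * f (fun s => A s ω) (U ω) ∂P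
      = ∑ a : Fin T → Bool,
          (∏ t, (if a t then δ * p else 1 - p) / (δ * p + 1 - p)) * ∫ ω, f a (U ω) ∂P)
    ∧ (∑ a : Fin T → Bool, ∏ t, (if a t then δ * p else 1 - p) / (δ * p + 1 - p) = 1)
    ∧ |∫ ω, (∏ t, (if A t ω then δ else 1) / (δ * p + 1 - p)) * f (fun s => A s ω) (U ω) ∂P|
        ≤ bu := by
    classical
  obtain ⟨hp0, hp1⟩ := hp
  have hc0 : 0 < δ * p + 1 - p := by nlinarith
  set c : ℝ := δ * p + 1 - p with hc
  -- basic measurability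
  have hfam : ∀ i, Measurable (fam T A U i) := by
    rintro (_ | t)
    · exact hUmeas
    · exact hAmeas t
  set X : Ω → (Fin T → Bool) := fun ω s => A s ω with hX
  have hXmeas : Measurable X := measurable_pi_lambda _ fun t => hAmeas t
  have hsingle : ∀ a : Fin T → Bool, MeasurableSet ({a} : Set (Fin T → Bool)) := by
    intro a
    have : ({a} : Set (Fin T → Bool)) = ⋂ t, (fun v : Fin T → Bool => v t) ⁻¹' {a t} := by
      ext v; simp [funext_iff]
    rw [this]
    exact MeasurableSet.iInter fun t => measurable_pi_apply t (measurableSet_singleton _)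
  have hφ : ∀ a : Fin T → Bool,
      Measurable (fun v : Fin T → Bool => if v = a then (1:ℝ) else 0) := by
    intro a
    have : (fun v : Fin T → Bool => if v = a then (1:ℝ) else 0)
        = Set.indicator {a} (fun _ => (1:ℝ)) := by
      ext v; simp [Set.indicator_apply]
    rw [this]
    exact measurable_const.indicator (hsingle a)
  have hfa : ∀ a : Fin T → Bool, Measurable (fun e => f a e) :=
    fun a => hf.comp (measurable_const.prodMk measurable_id)
  -- independence of X and U
  have hXU : IndepFun X U P := by
    have h := hindep.indepFun_finset (Finset.univ.image some) {none}
      (by simp) hfam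
    have hφ1 : Measurable
        (fun (g : ∀ i : (Finset.univ.image (some : Fin T → Option (Fin T)) :
            Finset (Option (Fin T))), Cod E T i) (t : Fin T) =>
          (g ⟨some t, by simp⟩ : Bool)) :=
      measurable_pi_lambda _ fun t => measurable_pi_apply _
    have hφ2 : Measurable
        (fun (g : ∀ i : ({none} : Finset (Option (Fin T))), Cod E T i) =>
          (g ⟨none, by simp⟩ : E)) := measurable_pi_apply _
    exact h.comp hφ1 hφ2
  -- probability of a given treatment pattern
  have hPa : ∀ a : Fin T → Bool, P {ω | X ω = a} = ∏ t, P {ω | A t ω = a t} := by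
    intro a
    set s : Option (Fin T) → Set Ω :=
      fun i => Option.rec Set.univ (fun t => A t ⁻¹' {a t}) i with hs
    have hmeas : ∀ i, MeasurableSet[(CodMeas E T i).comap (fam T A U i)] (s i) := by
      rintro (_ | t)
      · exact ⟨Set.univ, MeasurableSet.univ, by simp [hs, fam]; rfl⟩
      · exact ⟨{a t}, (measurableSet_singleton (a t) : MeasurableSet ({a t} : Set Bool)), rfl⟩
    have h := hindep.meas_iInter hmeas
    have h1 : (⋂ i, s i) = {ω | X ω = a} := by
      ext ω
      simp [hs, Set.mem_iInter, Option.forall, funext_iff, hX]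
    rw [h1] at h
    rw [h, Fintype.prod_option]
    simp [hs, Set.preimage, measure_univ]
  have hπ : ∀ (t : Fin T) (b : Bool),
      (P {ω | A t ω = b}).toReal = if b then p else 1 - p := by
    intro t b
    cases b
    · have hcompl : {ω | A t ω = false} = {ω | A t ω = true}ᶜ := by ext ω; simp
      have hset : MeasurableSet {ω | A t ω = true} :=
        hAmeas t (measurableSet_singleton true)
      rw [hcompl, prob_compl_eq_one_sub hset, hAp t, ← ENNReal.ofReal_one,
        ← ENNReal.ofReal_sub _ hp0.le, ENNReal.toReal_ofReal (by linarith)]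
      simp
    · rw [hAp t, ENNReal.toReal_ofReal hp0.le]; simp
  -- integral of the indicator
  have hind_int : ∀ a : Fin T → Bool,
      ∫ ω, (if X ω = a then (1:ℝ) else 0) ∂P = (P {ω | X ω = a}).toReal := by
    intro a
    have hm : MeasurableSet {ω | X ω = a} := hXmeas (hsingle a)
    rw [← measureReal_def, ← integral_indicator_one hm]
    congr 1
    ext ω
    simp [Set.indicator_apply]
  -- combination of weights
  have hcomb : ∀ a : Fin T → Bool,
      (∏ t, (if a t then p else 1 - p)) * (∏ t, (if a t then δ else 1) / c)
        = ∏ t, (if a t then δ * p else 1 - p) / c := by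
    intro a
    rw [← Finset.prod_mul_distrib]
    refine Finset.prod_congr rfl fun t _ => ?_
    cases ht : a t <;> simp [ht] <;> ring
  -- integrability of each summand
  have hint : ∀ a : Fin T → Bool,
      Integrable (fun ω => (if X ω = a then (1:ℝ) else 0)
        * ((∏ t, (if a t then δ else 1) / c) * f a (U ω))) P := by
    intro a
    have hC : (0:ℝ) ≤ ∏ t, (if a t then δ else 1) / c :=
      Finset.prod_nonneg fun t _ => div_nonneg (by split <;> linarith) hc0.le
    refine (integrable_const ((∏ t, (if a t then δ else 1) / c) * bu)).mono'
      (Measurable.aestronglyMeasurable ?_) (ae_of_all _ fun ω => ?_)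
    · exact ((hφ a).comp hXmeas).mul (measurable_const.mul ((hfa a).comp hUmeas))
    · rw [Real.norm_eq_abs, abs_mul, abs_mul, abs_of_nonneg hC]
      have h1 : |if X ω = a then (1:ℝ) else 0| ≤ 1 := by split <;> simp
      have h2 : |f a (U ω)| ≤ bu := hfbd _ _
      calc |if X ω = a then (1:ℝ) else 0| * ((∏ t, (if a t then δ else 1) / c) * |f a (U ω)|)
          ≤ 1 * ((∏ t, (if a t then δ else 1) / c) * bu) := by gcongr
        _ = (∏ t, (if a t then δ else 1) / c) * bu := one_mul _
  -- pointwise decomposition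
  have hpt : ∀ ω, (∏ t, (if A t ω then δ else 1) / c) * f (fun s => A s ω) (U ω)
      = ∑ a : Fin T → Bool, (if X ω = a then (1:ℝ) else 0)
          * ((∏ t, (if a t then δ else 1) / c) * f a (U ω)) := by
    intro ω
    rw [Finset.sum_eq_single (X ω)]
    · simp [hX]
    · intro b _ hb
      rw [if_neg (fun h => hb h.symm), zero_mul]
    · intro h; exact absurd (Finset.mem_univ _) h
  -- per-term integral
  have h2 : ∀ a : Fin T → Bool,
      ∫ ω, (if X ω = a then (1:ℝ) else 0)
          * ((∏ t, (if a t then δ else 1) / c) * f a (U ω)) ∂P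
        = (∏ t, (if a t then δ * p else 1 - p) / c) * ∫ ω, f a (U ω) ∂P := by
    intro a
    have hIF : IndepFun (fun ω => if X ω = a then (1:ℝ) else 0)
        (fun ω => (∏ t, (if a t then δ else 1) / c) * f a (U ω)) P :=
      hXU.comp (hφ a) (measurable_const.mul (hfa a))
    rw [IndepFun.integral_fun_mul_eq_mul_integral hIF
      (((hφ a).comp hXmeas).aestronglyMeasurable)
      ((measurable_const.mul ((hfa a).comp hUmeas)).aestronglyMeasurable)]
    rw [hind_int a, hPa a, ENNReal.toReal_prod, integral_const_mul]
    have hprod : (∏ t, (P {ω | A t ω = a t}).toReal)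
        = ∏ t, (if a t then p else 1 - p) :=
      Finset.prod_congr rfl fun t _ => hπ t (a t)
    rw [hprod, ← mul_assoc, hcomb a]
  -- part 1
  have part1 : ∫ ω, (∏ t, (if A t ω then δ else 1) / c) * f (fun s => A s ω) (U ω) ∂P
      = ∑ a : Fin T → Bool,
          (∏ t, (if a t then δ * p else 1 - p) / c) * ∫ ω, f a (U ω) ∂P := by
    rw [integral_congr_ae (ae_of_all _ hpt), integral_finset_sum _ fun a _ => hint a]
    exact Finset.sum_congr rfl fun a _ => h2 a
  -- part 2
  have part2 : ∑ a : Fin T → Bool, ∏ t, (if a t then δ * p else 1 - p) / c = 1 := by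
    have := (Fintype.prod_sum
      (fun (t : Fin T) (b : Bool) => (if b then δ * p else 1 - p) / c)).symm
    rw [this]
    have hone : ∀ t : Fin T, (∑ b : Bool, (if b then δ * p else 1 - p) / c) = 1 := by
      intro t
      rw [Fintype.sum_bool]
      have h : (if (true:Bool) then δ * p else 1 - p) / c
          + (if (false:Bool) then δ * p else 1 - p) / c = (δ * p + (1 - p)) / c := by
        norm_num [← add_div]
      rw [h, show δ * p + (1 - p) = c by rw [hc]; ring]
      exact div_self hc0.ne'
    rw [Finset.prod_congr rfl fun t _ => hone t, Finset.prod_const_one]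
  refine ⟨part1, part2, ?_⟩
  -- part 3
  rw [part1]
  have hq : ∀ a : Fin T → Bool, (0:ℝ) ≤ ∏ t, (if a t then δ * p else 1 - p) / c :=
    fun a => Finset.prod_nonneg fun t _ =>
      div_nonneg (by split <;> [positivity; linarith]) hc0.le
  have hIbd : ∀ a : Fin T → Bool, |∫ ω, f a (U ω) ∂P| ≤ bu := by
    intro a
    have := norm_integral_le_of_norm_le_const (μ := P) (f := fun ω => f a (U ω))
      (C := bu) (ae_of_all _ fun ω => by rw [Real.norm_eq_abs]; exact hfbd _ _)
    simpa [Real.norm_eq_abs] using this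
  calc |∑ a : Fin T → Bool,
        (∏ t, (if a t then δ * p else 1 - p) / c) * ∫ ω, f a (U ω) ∂P|
      ≤ ∑ a : Fin T → Bool,
        |(∏ t, (if a t then δ * p else 1 - p) / c) * ∫ ω, f a (U ω) ∂P| :=
        Finset.abs_sum_le_sum_abs _ _
    _ ≤ ∑ a : Fin T → Bool, (∏ t, (if a t then δ * p else 1 - p) / c) * bu := by
        refine Finset.sum_le_sum fun a _ => ?_
        rw [abs_mul, abs_of_nonneg (hq a)]
        exact mul_le_mul_of_nonneg_left (hIbd a) (hq a)
    _ = bu := by rw [← Finset.sum_mul, part2, one_mul]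
end
end

section
/- In the simplified infinite-time-horizon setting, for every treatment sequence ā ∈ {0,1}^T: E[ψ̂_cipw(ā)²] = (∏_{t=1}^T 1/π(a_t))·E[(Y^ā)²]. In particular, the always-treated IPW estimator has Var(ψ̂_at) = (1/p)^T·E[(Y^{1̄})²] − (E[Y^{1̄}])². -/
open MeasureTheory ProbabilityTheory

noncomputable section

lemma aux_prod_integral {ι Ω : Type*} [MeasurableSpace Ω] (P : Measure Ω) [IsProbabilityMeasure P]
    (X : ι → Ω → ℝ) (hX : iIndepFun (m := fun _ => (inferInstance : MeasurableSpace ℝ)) X P)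
    (hm : ∀ i, Measurable (X i)) (s : Finset ι) :
    ∫ ω, ∏ i ∈ s, X i ω ∂P = ∏ i ∈ s, ∫ ω, X i ω ∂P := by
  classical
  induction s using Finset.induction_on with
  | empty => simp
  | @insert i s hi ih =>
    have hIndep : IndepFun (X i) (∏ j ∈ s, X j) P :=
      (hX.indepFun_finsetProd_of_notMem hm hi).symm
    have hmp : Measurable (∏ j ∈ s, X j) := by
      rw [show (∏ j ∈ s, X j) = fun ω => ∏ j ∈ s, X j ω from funext fun ω => Finset.prod_apply ..]
      exact Finset.measurable_prod s (fun j _ => hm j)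
    have h2 := hIndep.integral_mul_eq_mul_integral (hm i).aestronglyMeasurable hmp.aestronglyMeasurable
    have hfun : (∏ j ∈ s, X j) = fun ω => ∏ j ∈ s, X j ω := funext fun ω => Finset.prod_apply ..
    rw [hfun] at h2
    simp only [Finset.prod_apply] at h2
    calc ∫ ω, ∏ j ∈ insert i s, X j ω ∂P
        = ∫ ω, X i ω * ∏ j ∈ s, X j ω ∂P := by
          simp only [Finset.prod_insert hi]
      _ = (∫ ω, X i ω ∂P) * ∫ ω, ∏ j ∈ s, X j ω ∂P := h2
      _ = ∏ j ∈ insert i s, ∫ ω, X j ω ∂P := by rw [ih, Finset.prod_insert hi]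

lemma aux_factor {Ω : Type*} {E : Type} [MeasurableSpace Ω] [MeasurableSpace E]
    (P : Measure Ω) [IsProbabilityMeasure P] (T : ℕ)
    (A : Fin T → Ω → Bool) (U : Ω → E)
    (hAmeas : ∀ t, Measurable (A t)) (hUmeas : Measurable U)
    (hindep : iIndepFun (m := fun i => CodMeas E T i) (fam T A U) P)
    (w : Fin T → Bool → ℝ) (g : E → ℝ) (hg : Measurable g) :
    ∫ ω, (∏ t, w t (A t ω)) * g (U ω) ∂P
      = (∏ t, ∫ ω, w t (A t ω) ∂P) * ∫ ω, g (U ω) ∂P := by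
  classical
  set G : (i : Option (Fin T)) → Cod E T i → ℝ := fun i =>
    match i with
    | none => g
    | some t => w t with hG
  have hGm : ∀ i, Measurable (G i) := by
    rintro (_ | t)
    · exact hg
    · exact measurable_from_top
  set X : Option (Fin T) → Ω → ℝ := fun i => G i ∘ fam T A U i with hXdef
  have hX : iIndepFun (m := fun _ => (inferInstance : MeasurableSpace ℝ)) X P :=
    hindep.comp G hGm
  have hm : ∀ i, Measurable (X i) := by
    rintro (_ | t)
    · exact hg.comp hUmeas
    · exact (measurable_from_top : Measurable (w t)).comp (hAmeas t)
  have key := aux_prod_integral P X hX hm Finset.univ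
  have h1 : ∀ ω, ∏ i : Option (Fin T), X i ω = (∏ t, w t (A t ω)) * g (U ω) := by
    intro ω
    rw [Fintype.prod_option]
    exact mul_comm _ _
  have h2 : ∏ i : Option (Fin T), ∫ ω, X i ω ∂P
      = (∏ t, ∫ ω, w t (A t ω) ∂P) * ∫ ω, g (U ω) ∂P := by
    rw [Fintype.prod_option]
    exact mul_comm _ _
  rw [← h2, ← key]
  exact integral_congr_ae (Filter.Eventually.of_forall fun ω => (h1 ω).symm)

/-- Second moment of the deterministic-regime IPW estimator:
`E[ψ̂_cipw(ā)²] = (∏_t 1/π(a_t))·E[(Y^ā)²]`; in particular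
`Var(ψ̂_at) = (1/p)^T·E[(Y^{1̄})²] − (E[Y^{1̄}])²`. -/
theorem cipw_second_moment
    {Ω : Type*} {E : Type} [MeasurableSpace Ω] [MeasurableSpace E]
    (P : Measure Ω) [IsProbabilityMeasure P]
    (T : ℕ) (hT : 1 ≤ T)
    (p : ℝ) (hp : p ∈ Set.Ioo (0:ℝ) 1)
    (A : Fin T → Ω → Bool) (U : Ω → E)
    (hAmeas : ∀ t, Measurable (A t)) (hUmeas : Measurable U)
    (hindep : iIndepFun (m := fun i => CodMeas E T i) (fam T A U) P)
    (hAp : ∀ t, P {ω | A t ω = true} = ENNReal.ofReal p)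
    (f : (Fin T → Bool) → E → ℝ)
    (hf : Measurable (fun q : (Fin T → Bool) × E => f q.1 q.2))
    (bu : ℝ) (hbu : 0 < bu) (hfbd : ∀ a e, |f a e| ≤ bu)
    :
    (∀ a : Fin T → Bool,
      ∫ ω, ((∏ t, (if A t ω = a t then (1:ℝ) else 0) / (if a t then p else 1 - p)) *
          f (fun s => A s ω) (U ω)) ^ 2 ∂P
        = (∏ t, 1 / (if a t then p else 1 - p)) * ∫ ω, (f a (U ω)) ^ 2 ∂P)
    ∧ variance (fun ω =>
          (∏ t, (if A t ω then (1:ℝ) else 0) / p) * f (fun s => A s ω) (U ω)) P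
        = (1 / p) ^ T * (∫ ω, (f (fun _ => true) (U ω)) ^ 2 ∂P)
          - (∫ ω, f (fun _ => true) (U ω) ∂P) ^ 2 := by
  classical
  obtain ⟨hp0, hp1⟩ := hp
  have hp0' : p ≠ 0 := ne_of_gt hp0
  have h1p : (0:ℝ) < 1 - p := by linarith
  -- integral of indicators
  have hπ : ∀ (t : Fin T) (c : Bool),
      ∫ ω, (if A t ω = c then (1:ℝ) else 0) ∂P = if c then p else 1 - p := by
    intro t c
    have hs : MeasurableSet {ω | A t ω = c} := (hAmeas t) (measurableSet_singleton c)
    have hind : (fun ω => if A t ω = c then (1:ℝ) else 0)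
        = Set.indicator {ω | A t ω = c} (1 : Ω → ℝ) := by
      funext ω
      by_cases h : A t ω = c <;> simp [Set.indicator_apply, Set.mem_setOf_eq, h]
    rw [hind, integral_indicator_one hs]
    cases c with
    | false =>
      have hset : {ω | A t ω = false} = {ω | A t ω = true}ᶜ := by
        ext ω; simp
      have hs' : MeasurableSet {ω | A t ω = true} := (hAmeas t) (measurableSet_singleton true)
      rw [hset, measureReal_def, prob_compl_eq_one_sub hs', hAp t,
        ENNReal.toReal_sub_of_le (ENNReal.ofReal_le_one.mpr hp1.le) ENNReal.one_ne_top,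
        ENNReal.toReal_ofReal hp0.le]
      simp
    | true =>
      rw [measureReal_def, hAp t, ENNReal.toReal_ofReal hp0.le]
      simp
  -- pointwise collapse of the counterfactual
  have collapse : ∀ (a : Fin T → Bool) (c : Fin T → ℝ) (ω : Ω),
      (∏ t, (if A t ω = a t then (1:ℝ) else 0) / c t) * f (fun s => A s ω) (U ω)
      = (∏ t, (if A t ω = a t then (1:ℝ) else 0) / c t) * f a (U ω) := by
    intro a c ω
    by_cases h : ∀ t, A t ω = a t
    · rw [show (fun s => A s ω) = a from funext h]
    · push_neg at h
      obtain ⟨t, ht⟩ := h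
      have hz : (∏ t, (if A t ω = a t then (1:ℝ) else 0) / c t) = 0 :=
        Finset.prod_eq_zero (Finset.mem_univ t) (by simp [ht])
      rw [hz, zero_mul, zero_mul]
  -- Part 1
  have part1 : ∀ a : Fin T → Bool,
      ∫ ω, ((∏ t, (if A t ω = a t then (1:ℝ) else 0) / (if a t then p else 1 - p)) *
          f (fun s => A s ω) (U ω)) ^ 2 ∂P
        = (∏ t, 1 / (if a t then p else 1 - p)) * ∫ ω, (f a (U ω)) ^ 2 ∂P := by
    intro a
    have hπne : ∀ t : Fin T, (if a t then p else 1 - p) ≠ 0 := by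
      intro t; cases a t <;> simp [hp0', ne_of_gt h1p]
    have hfa2 : Measurable fun u => (f a u) ^ 2 :=
      (hf.comp measurable_prodMk_left).pow_const 2
    have hpt : ∀ ω,
        ((∏ t, (if A t ω = a t then (1:ℝ) else 0) / (if a t then p else 1 - p)) *
          f (fun s => A s ω) (U ω)) ^ 2
        = (∏ t, ((if A t ω = a t then (1:ℝ) else 0) / (if a t then p else 1 - p)) ^ 2) *
          (f a (U ω)) ^ 2 := by
      intro ω
      rw [collapse a (fun t => if a t then p else 1 - p) ω, mul_pow, Finset.prod_pow]
    rw [integral_congr_ae (Filter.Eventually.of_forall hpt)]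
    rw [aux_factor P T A U hAmeas hUmeas hindep
      (fun t b => ((if b = a t then (1:ℝ) else 0) / (if a t then p else 1 - p)) ^ 2)
      (fun u => (f a u) ^ 2) hfa2]
    congr 1
    refine Finset.prod_congr rfl fun t _ => ?_
    have h1 : ∀ ω, ((if A t ω = a t then (1:ℝ) else 0) / (if a t then p else 1 - p)) ^ 2
        = (if A t ω = a t then (1:ℝ) else 0) / (if a t then p else 1 - p) ^ 2 := by
      intro ω; by_cases h : A t ω = a t <;> simp [h, div_pow]
    rw [integral_congr_ae (Filter.Eventually.of_forall h1), integral_div, hπ t (a t),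
      sq, div_mul_eq_div_div, div_self (hπne t)]
  refine ⟨part1, ?_⟩
  -- Part 2
  set X : Ω → ℝ := fun ω =>
    (∏ t, (if A t ω then (1:ℝ) else 0) / p) * f (fun s => A s ω) (U ω) with hXdef
  have hAseq : Measurable fun ω => ((fun s => A s ω), U ω) :=
    (measurable_pi_lambda _ hAmeas).prodMk hUmeas
  have hXmeas : Measurable X := by
    refine Measurable.mul ?_ (hf.comp hAseq)
    refine Finset.measurable_prod _ fun t _ => ?_
    exact (measurable_from_top : Measurable fun b : Bool => (if b then (1:ℝ) else 0) / p).comp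
      (hAmeas t)
  have hXbd : ∀ ω, ‖X ω‖ ≤ (1 / p) ^ T * bu := by
    intro ω
    rw [Real.norm_eq_abs, hXdef, abs_mul]
    refine mul_le_mul ?_ (hfbd _ _) (abs_nonneg _) (by positivity)
    rw [Finset.abs_prod]
    calc ∏ t, |(if A t ω then (1:ℝ) else 0) / p|
        ≤ ∏ _t : Fin T, 1 / p := by
          refine Finset.prod_le_prod (fun t _ => abs_nonneg _) fun t _ => ?_
          rw [abs_div, abs_of_pos hp0]
          gcongr
          cases A t ω <;> simp
      _ = (1 / p) ^ T := by rw [Finset.prod_const, Finset.card_univ, Fintype.card_fin]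
  have hmem : MemLp X 2 P :=
    MemLp.of_bound hXmeas.aestronglyMeasurable _ (Filter.Eventually.of_forall hXbd)
  have hf1meas : Measurable (f (fun _ => true)) := hf.comp measurable_prodMk_left
  have hsq : (∫ ω, (X ^ 2) ω ∂P)
      = (1 / p) ^ T * ∫ ω, (f (fun _ => true) (U ω)) ^ 2 ∂P := by
    have hp1' := part1 (fun _ => true)
    simp only [if_true] at hp1'
    simp only [Pi.pow_apply, hXdef]
    rw [hp1', Finset.prod_const, Finset.card_univ, Fintype.card_fin]
  have hmean : (∫ ω, X ω ∂P) = ∫ ω, f (fun _ => true) (U ω) ∂P := by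
    have hcol : ∀ ω, X ω
        = (∏ t, (if A t ω then (1:ℝ) else 0) / p) * f (fun _ => true) (U ω) := by
      intro ω
      by_cases h : ∀ t, A t ω = true
      · have hfe : (fun s => A s ω) = (fun _ : Fin T => true) := funext h
        show (∏ t, (if A t ω = true then (1:ℝ) else 0) / p) * f (fun s => A s ω) (U ω) = _
        rw [hfe]
      · push_neg at h
        obtain ⟨t, ht⟩ := h
        have hz : (∏ t, (if A t ω then (1:ℝ) else 0) / p) = 0 :=
          Finset.prod_eq_zero (Finset.mem_univ t) (by simp [ht])
        rw [hXdef]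
        simp only [hz, zero_mul]
    rw [integral_congr_ae (Filter.Eventually.of_forall hcol)]
    rw [aux_factor P T A U hAmeas hUmeas hindep
      (fun t b => (if b then (1:ℝ) else 0) / p) (f (fun _ => true)) hf1meas]
    have hone : ∀ t : Fin T, ∫ ω, (if A t ω then (1:ℝ) else 0) / p ∂P = 1 := by
      intro t
      rw [integral_div]
      have h2 : ∫ ω, (if A t ω then (1:ℝ) else 0) ∂P = p := by
        rw [show (fun ω => if A t ω then (1:ℝ) else 0)
            = (fun ω => if A t ω = true then (1:ℝ) else 0) from
          funext fun ω => by cases h : A t ω <;> simp [h], hπ t true]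
        simp
      rw [h2, div_self hp0']
    rw [Finset.prod_congr rfl (fun t _ => hone t), Finset.prod_const_one, one_mul]
  rw [variance_eq_sub hmem, hsq, hmean]
end
end

section
/- In the simplified infinite-time-horizon setting, for every δ > 0 the second moment of the incremental-effect IPW estimator satisfies the exact decomposition E[ψ̂_inc²] = Σ_{ā ∈ {0,1}^T} (∏_{t=1}^T (1{a_t = 1}·δ²p + 1{a_t = 0}·(1 − p))/(δp + 1 − p)²)·E[(Y^ā)²]. -/
open MeasureTheory ProbabilityTheory

noncomputable section

lemma integrable_of_bdd {Ω : Type*} [MeasurableSpace Ω] {P : Measure Ω} [IsFiniteMeasure P]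
    {g : Ω → ℝ} (hm : Measurable g) {C : ℝ} (h : ∀ ω, |g ω| ≤ C) : Integrable g P :=
  ⟨hm.aestronglyMeasurable, HasFiniteIntegral.of_bounded (C := C)
    (ae_of_all _ (by simpa [Real.norm_eq_abs] using h))⟩

lemma integral_prod_indep {Ω : Type*} [MeasurableSpace Ω] {P : Measure Ω} [IsProbabilityMeasure P]
    {ι : Type*} (X : ι → Ω → ℝ)
    (hindep : iIndepFun (m := fun _ => (inferInstance : MeasurableSpace ℝ)) X P)
    (hmeas : ∀ i, Measurable (X i)) (C : ι → ℝ)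
    (hbd : ∀ i ω, |X i ω| ≤ C i)
    (s : Finset ι) : ∫ ω, ∏ i ∈ s, X i ω ∂P = ∏ i ∈ s, ∫ ω, X i ω ∂P := by
  classical
  induction s using Finset.induction with
  | empty => simp
  | @insert i s hi ih =>
    have hprodmeas : Measurable (fun ω => ∏ j ∈ s, X j ω) :=
      Finset.measurable_prod s (fun j _ => hmeas j)
    have hprodbd : ∀ ω, |∏ j ∈ s, X j ω| ≤ ∏ j ∈ s, C j := by
      intro ω
      rw [Finset.abs_prod]
      exact Finset.prod_le_prod (fun j _ => abs_nonneg _) (fun j _ => hbd j ω)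
    have hint1 : Integrable (X i) P := integrable_of_bdd (hmeas i) (hbd i)
    have hint2 : Integrable (fun ω => ∏ j ∈ s, X j ω) P := integrable_of_bdd hprodmeas hprodbd
    have hIF : IndepFun (X i) (fun ω => ∏ j ∈ s, X j ω) P := by
      have := (hindep.indepFun_finset_prod_of_notMem hmeas hi).symm
      rw [show (fun ω => ∏ j ∈ s, X j ω) = ∏ j ∈ s, X j from
        (funext fun ω => Finset.prod_apply ω s X).symm]
      exact this
    calc ∫ ω, ∏ j ∈ insert i s, X j ω ∂P
        = ∫ ω, X i ω * ∏ j ∈ s, X j ω ∂P := by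
          simp [Finset.prod_insert hi]
      _ = (∫ ω, X i ω ∂P) * ∫ ω, ∏ j ∈ s, X j ω ∂P :=
          IndepFun.integral_fun_mul_eq_mul_integral hIF hint1.aestronglyMeasurable hint2.aestronglyMeasurable
      _ = ∏ j ∈ insert i s, ∫ ω, X j ω ∂P := by
          rw [Finset.prod_insert hi, ih]

def ind01 (d : Bool) : Bool → ℝ := fun c => if c = d then 1 else 0

lemma prod_ind {T : ℕ} (a b : Fin T → Bool) :
    (∏ t, if b t = a t then (1:ℝ) else 0) = if a = b then 1 else 0 := by
  by_cases h : a = b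
  · subst h; simp
  · rw [if_neg h]
    obtain ⟨t, ht⟩ := Function.ne_iff.mp h
    exact Finset.prod_eq_zero (Finset.mem_univ t) (if_neg (fun e => ht e.symm))

/-- Exact second-moment decomposition of the incremental-effect IPW estimator:
`E[ψ̂_inc²] = Σ_ā (∏_t (1{a_t=1}δ²p + 1{a_t=0}(1−p))/(δp+1−p)²)·E[(Y^ā)²]`. -/
theorem inc_second_moment_decomposition
    {Ω : Type*} {E : Type} [MeasurableSpace Ω] [MeasurableSpace E]
    (P : Measure Ω) [IsProbabilityMeasure P]
    (T : ℕ) (hT : 1 ≤ T)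
    (p : ℝ) (hp : p ∈ Set.Ioo (0:ℝ) 1)
    (A : Fin T → Ω → Bool) (U : Ω → E)
    (hAmeas : ∀ t, Measurable (A t)) (hUmeas : Measurable U)
    (hindep : iIndepFun (m := fun i => CodMeas E T i) (fam T A U) P)
    (hAp : ∀ t, P {ω | A t ω = true} = ENNReal.ofReal p)
    (f : (Fin T → Bool) → E → ℝ)
    (hf : Measurable (fun q : (Fin T → Bool) × E => f q.1 q.2))
    (bu : ℝ) (hbu : 0 < bu) (hfbd : ∀ a e, |f a e| ≤ bu)
    (δ : ℝ) (hδ : 0 < δ) :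
    ∫ ω, ((∏ t, (if A t ω then δ else 1) / (δ * p + 1 - p)) * f (fun s => A s ω) (U ω)) ^ 2 ∂P
      = ∑ a : Fin T → Bool,
          (∏ t, (if a t then δ ^ 2 * p else 1 - p) / (δ * p + 1 - p) ^ 2) *
            ∫ ω, (f a (U ω)) ^ 2 ∂P := by
  set D : ℝ := δ * p + 1 - p with hD
  have hfu : ∀ a : Fin T → Bool, Measurable (fun ω => f a (U ω)) :=
    fun a => hf.comp (measurable_const.prodMk hUmeas)
  have hfsq : ∀ a : Fin T → Bool, Measurable (fun ω => f a (U ω) ^ 2) :=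
    fun a => (hfu a).pow_const 2
  have hind_meas : ∀ (t : Fin T) (c : Bool),
      Measurable (fun ω => if A t ω = c then (1:ℝ) else 0) := by
    intro t c
    exact Measurable.ite (hAmeas t (MeasurableSet.singleton c)) measurable_const measurable_const
  -- pointwise expansion
  have key : ∀ ω, ((∏ t, (if A t ω then δ else 1) / D) * f (fun s => A s ω) (U ω)) ^ 2
      = ∑ a : Fin T → Bool, (∏ t, (if a t then δ else 1) / D) ^ 2 *
          ((∏ t, if A t ω = a t then (1:ℝ) else 0) * f a (U ω) ^ 2) := by
    intro ω
    set b : Fin T → Bool := fun s => A s ω with hb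
    have h1 : ∀ a : Fin T → Bool,
        (∏ t, if A t ω = a t then (1:ℝ) else 0) = if a = b then 1 else 0 := by
      intro a; rw [← prod_ind a b]
    have h2 : ∀ a : Fin T → Bool,
        (∏ t, (if a t then δ else 1) / D) ^ 2 * ((if a = b then (1:ℝ) else 0) * f a (U ω) ^ 2)
        = if a = b then (∏ t, (if a t then δ else 1) / D) ^ 2 * f a (U ω) ^ 2 else 0 := by
      intro a; split <;> ring
    simp only [h1, h2]
    rw [Finset.sum_ite_eq' Finset.univ b
      (fun a => (∏ t, (if a t then δ else 1) / D) ^ 2 * f a (U ω) ^ 2)]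
    simp only [Finset.mem_univ, if_true]
    rw [mul_pow]
  -- measurability and bounds for summands
  have hsummeas : ∀ a : Fin T → Bool,
      Measurable (fun ω => (∏ t, if A t ω = a t then (1:ℝ) else 0) * f a (U ω) ^ 2) :=
    fun a => (Finset.measurable_prod _ (fun t _ => hind_meas t (a t))).mul (hfsq a)
  have hsumbd : ∀ (a : Fin T → Bool) ω,
      |(∏ t, if A t ω = a t then (1:ℝ) else 0) * f a (U ω) ^ 2| ≤ bu ^ 2 := by
    intro a ω
    rw [abs_mul]
    have h1 : |∏ t, if A t ω = a t then (1:ℝ) else 0| ≤ 1 := by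
      rw [Finset.abs_prod]
      exact Finset.prod_le_one (fun t _ => abs_nonneg _)
        (fun t _ => by split <;> simp)
    have h2 : |f a (U ω) ^ 2| ≤ bu ^ 2 := by
      rw [abs_pow]
      exact pow_le_pow_left₀ (abs_nonneg _) (hfbd _ _) 2
    calc |∏ t, if A t ω = a t then (1:ℝ) else 0| * |f a (U ω) ^ 2|
        ≤ 1 * (bu ^ 2) := mul_le_mul h1 h2 (abs_nonneg _) zero_le_one
      _ = bu ^ 2 := one_mul _
  -- core independence computation
  have core : ∀ a : Fin T → Bool,
      ∫ ω, (∏ t, if A t ω = a t then (1:ℝ) else 0) * f a (U ω) ^ 2 ∂P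
      = (∏ t, (if a t then p else 1 - p)) * ∫ ω, f a (U ω) ^ 2 ∂P := by
    intro a
    set g : ∀ i : Option (Fin T), Cod E T i → ℝ := fun i => match i with
      | none => fun u => f a u ^ 2
      | some t => fun c => ind01 (a t) c with hg
    have hgmeas : ∀ i, Measurable (g i) := by
      intro i; cases i with
      | none => exact (hf.comp (measurable_const.prodMk measurable_id)).pow_const 2
      | some t => exact fun s _ => show MeasurableSet (α := Bool) _ from MeasurableSet.of_discrete
    set X : (i : Option (Fin T)) → Ω → ℝ := fun i => g i ∘ fam T A U i with hX
    have hXindep : iIndepFun (m := fun _ => (inferInstance : MeasurableSpace ℝ)) X P :=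
      hindep.comp g hgmeas
    have hXmeas : ∀ i, Measurable (X i) := by
      intro i; cases i with
      | none => exact (hgmeas none).comp hUmeas
      | some t => exact (hgmeas (some t)).comp (hAmeas t)
    have hXbd : ∀ i ω, |X i ω| ≤ (fun i : Option (Fin T) =>
        match i with | none => bu ^ 2 | some _ => (1:ℝ)) i := by
      intro i ω; cases i with
      | none =>
          show |f a (U ω) ^ 2| ≤ bu ^ 2
          rw [abs_pow]
          exact pow_le_pow_left₀ (abs_nonneg _) (hfbd _ _) 2
      | some t =>
          have : X (some t) ω = if A t ω = a t then (1:ℝ) else 0 := rfl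
          rw [this]
          split <;> simp
    have hprod := integral_prod_indep X hXindep hXmeas _ hXbd Finset.univ
    have e1 : ∀ ω, (∏ t, if A t ω = a t then (1:ℝ) else 0) * f a (U ω) ^ 2
        = ∏ i : Option (Fin T), X i ω := by
      intro ω
      rw [Fintype.prod_option, mul_comm]
      congr 1
    have e2 : ∀ t : Fin T, ∫ ω, X (some t) ω ∂P = if a t then p else 1 - p := by
      intro t
      have hXt : (fun ω => X (some t) ω)
          = (A t ⁻¹' {a t}).indicator (fun _ => (1:ℝ)) := by
        funext ω
        classical
        have hx : X (some t) ω = if A t ω = a t then (1:ℝ) else 0 := rfl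
        rw [hx, Set.indicator_apply]
        by_cases h : A t ω = a t
        · rw [if_pos h, if_pos (by simpa using h)]
        · rw [if_neg h, if_neg (by simpa using h)]
      rw [show ∫ ω, X (some t) ω ∂P = ∫ ω, (A t ⁻¹' {a t}).indicator (fun _ => (1:ℝ)) ω ∂P from by
        rw [← hXt]]
      rw [integral_indicator_const (1:ℝ) ((hAmeas t) (MeasurableSet.singleton (a t)))]
      rw [smul_eq_mul, mul_one]
      cases hat : a t with
      | true =>
          rw [if_pos rfl]
          have : A t ⁻¹' {true} = {ω | A t ω = true} := rfl
          rw [measureReal_def, this, hAp t, ENNReal.toReal_ofReal hp.1.le]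
      | false =>
          rw [if_neg (by simp)]
          have hset : A t ⁻¹' {false} = {ω | A t ω = true}ᶜ := by
            ext ω; simp
          have hms : MeasurableSet {ω | A t ω = true} :=
            hAmeas t (MeasurableSet.singleton true)
          rw [hset, measureReal_def, prob_compl_eq_one_sub hms, hAp t,
            ENNReal.toReal_sub_of_le (ENNReal.ofReal_le_one.mpr hp.2.le) ENNReal.one_ne_top,
            ENNReal.toReal_one, ENNReal.toReal_ofReal hp.1.le]
    calc ∫ ω, (∏ t, if A t ω = a t then (1:ℝ) else 0) * f a (U ω) ^ 2 ∂P
        = ∫ ω, ∏ i : Option (Fin T), X i ω ∂P := by simp only [e1]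
      _ = ∏ i : Option (Fin T), ∫ ω, X i ω ∂P := hprod
      _ = (∫ ω, X none ω ∂P) * ∏ t, ∫ ω, X (some t) ω ∂P :=
          Fintype.prod_option _
      _ = (∏ t, (if a t then p else 1 - p)) * ∫ ω, f a (U ω) ^ 2 ∂P := by
          rw [mul_comm]
          congr 1
          exact Finset.prod_congr rfl (fun t _ => e2 t)
  -- assemble
  calc ∫ ω, ((∏ t, (if A t ω then δ else 1) / D) * f (fun s => A s ω) (U ω)) ^ 2 ∂P
      = ∫ ω, ∑ a : Fin T → Bool, (∏ t, (if a t then δ else 1) / D) ^ 2 *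
          ((∏ t, if A t ω = a t then (1:ℝ) else 0) * f a (U ω) ^ 2) ∂P := by
        simp only [key]
    _ = ∑ a : Fin T → Bool, ∫ ω, (∏ t, (if a t then δ else 1) / D) ^ 2 *
          ((∏ t, if A t ω = a t then (1:ℝ) else 0) * f a (U ω) ^ 2) ∂P := by
        refine integral_finset_sum _ (fun a _ => ?_)
        exact (integrable_of_bdd (hsummeas a) (hsumbd a)).const_mul _
    _ = ∑ a : Fin T → Bool, (∏ t, (if a t then δ else 1) / D) ^ 2 *
          ((∏ t, (if a t then p else 1 - p)) * ∫ ω, f a (U ω) ^ 2 ∂P) := by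
        refine Finset.sum_congr rfl (fun a _ => ?_)
        rw [integral_const_mul, core a]
    _ = ∑ a : Fin T → Bool,
          (∏ t, (if a t then δ ^ 2 * p else 1 - p) / D ^ 2) * ∫ ω, (f a (U ω)) ^ 2 ∂P := by
        refine Finset.sum_congr rfl (fun a _ => ?_)
        rw [← mul_assoc]
        congr 1
        rw [← Finset.prod_pow, ← Finset.prod_mul_distrib]
        refine Finset.prod_congr rfl (fun t _ => ?_)
        have wsq : ∀ x y : ℝ, (x / D) ^ 2 * y = x ^ 2 * y / D ^ 2 := fun x y => by
          rw [div_pow, div_mul_eq_mul_div]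
        cases hat : a t with
        | true => simpa using wsq δ p
        | false => simpa using wsq 1 (1 - p)
end
end

section
/- In the simplified infinite-time-horizon setting, for every δ > 0: Σ_{ā ∈ {0,1}^T} ∏_{t=1}^T (1{a_t = 1}·δ²p + 1{a_t = 0}·(1 − p))/(δp + 1 − p)² = ((δ²p + 1 − p)/(δp + 1 − p)²)^T, and consequently E[ψ̂_inc²] ≤ b_u²·((δ²p + 1 − p)/(δp + 1 − p)²)^T. -/
open MeasureTheory ProbabilityTheory

noncomputable section

/-- Auxiliary: sets for the independence computation. -/
def famSets {E : Type} (T : ℕ) (a : Fin T → Bool) :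
    (i : Option (Fin T)) → Set (Cod E T i)
  | none => Set.univ
  | some t => {a t}

/-- The incremental second-moment weights sum to `((δ²p + 1 − p)/(δp + 1 − p)²)^T`, and
consequently `E[ψ̂_inc²] ≤ b_u²·((δ²p + 1 − p)/(δp + 1 − p)²)^T`. -/
theorem inc_second_moment_bound
    {Ω : Type*} {E : Type} [MeasurableSpace Ω] [MeasurableSpace E]
    (P : Measure Ω) [IsProbabilityMeasure P]
    (T : ℕ) (hT : 1 ≤ T)
    (p : ℝ) (hp : p ∈ Set.Ioo (0:ℝ) 1)
    (A : Fin T → Ω → Bool) (U : Ω → E)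
    (hAmeas : ∀ t, Measurable (A t)) (hUmeas : Measurable U)
    (hindep : iIndepFun (m := fun i => CodMeas E T i) (fam T A U) P)
    (hAp : ∀ t, P {ω | A t ω = true} = ENNReal.ofReal p)
    (f : (Fin T → Bool) → E → ℝ)
    (hf : Measurable (fun q : (Fin T → Bool) × E => f q.1 q.2))
    (bu : ℝ) (hbu : 0 < bu) (hfbd : ∀ a e, |f a e| ≤ bu)
    (δ : ℝ) (hδ : 0 < δ) :
    (∑ a : Fin T → Bool, ∏ t, (if a t then δ ^ 2 * p else 1 - p) / (δ * p + 1 - p) ^ 2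
      = ((δ ^ 2 * p + (1 - p)) / (δ * p + 1 - p) ^ 2) ^ T)
    ∧ ∫ ω, ((∏ t, (if A t ω then δ else 1) / (δ * p + 1 - p)) *
          f (fun s => A s ω) (U ω)) ^ 2 ∂P
        ≤ bu ^ 2 * ((δ ^ 2 * p + (1 - p)) / (δ * p + 1 - p) ^ 2) ^ T := by
  obtain ⟨hp0, hp1⟩ := hp
  set d : ℝ := δ * p + 1 - p with hd_def
  have hd : 0 < d := by nlinarith
  -- Part 1
  have part1 : ∑ a : Fin T → Bool, ∏ t, (if a t then δ ^ 2 * p else 1 - p) / d ^ 2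
      = ((δ ^ 2 * p + (1 - p)) / d ^ 2) ^ T := by
    rw [← Fintype.prod_sum (fun (t : Fin T) (b : Bool) =>
      (if b then δ ^ 2 * p else 1 - p) / d ^ 2)]
    simp [← add_div, add_comm, div_pow]
  refine ⟨part1, ?_⟩
  -- probability of each A_t value
  have hmp : ∀ (t : Fin T) (b : Bool),
      P (A t ⁻¹' {b}) = ENNReal.ofReal (if b then p else 1 - p) := by
    intro t b
    have htrue : P (A t ⁻¹' {true}) = ENNReal.ofReal p := by
      have : A t ⁻¹' {true} = {ω | A t ω = true} := by ext ω; simp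
      rw [this, hAp t]
    cases b
    · have hcompl : A t ⁻¹' {false} = (A t ⁻¹' {true})ᶜ := by
        ext ω; cases h : A t ω <;> simp [h]
      rw [hcompl, measure_compl ((hAmeas t) (measurableSet_singleton true)) (measure_ne_top _ _),
        htrue]
      simp only [measure_univ, if_neg Bool.false_ne_true]
      rw [← ENNReal.ofReal_one, ← ENNReal.ofReal_sub _ hp0.le]
    · simpa using htrue
  -- joint probability
  have hjoint : ∀ a : Fin T → Bool,
      P (⋂ t, A t ⁻¹' {a t}) = ∏ t, ENNReal.ofReal (if a t then p else 1 - p) := by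
    intro a
    have key := hindep.measure_inter_preimage_eq_mul
      (Finset.univ.map Function.Embedding.some) (sets := famSets T a)
      (fun i hi => by
        rcases Finset.mem_map.1 hi with ⟨t, _, rfl⟩
        exact measurableSet_singleton (a t))
    have hL : (⋂ i ∈ Finset.univ.map (Function.Embedding.some (α := Fin T)),
        fam T A U i ⁻¹' famSets T a i) = ⋂ t, A t ⁻¹' {a t} := by
      ext ω
      simp only [Set.mem_iInter, Finset.mem_map, Finset.mem_univ, true_and,
        Function.Embedding.some_apply, Set.mem_preimage]
      constructor
      · intro h t
        exact h (some t) ⟨t, rfl⟩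
      · rintro h i ⟨t, rfl⟩
        exact h t
    have hR : (∏ i ∈ Finset.univ.map (Function.Embedding.some (α := Fin T)),
        P (fam T A U i ⁻¹' famSets T a i)) = ∏ t, P (A t ⁻¹' {a t}) := by
      rw [Finset.prod_map]
      rfl
    rw [hL, hR] at key
    rw [key]
    exact Finset.prod_congr rfl fun t _ => hmp t (a t)
  -- the joint random variable
  set V : Ω → (Fin T → Bool) := fun ω t => A t ω with hV_def
  have hV : Measurable V := measurable_pi_lambda _ fun t => hAmeas t
  set G : (Fin T → Bool) → ℝ := fun a => ∏ t, ((if a t then δ else 1) / d) ^ 2 with hG_def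
  have hGmeas : Measurable G := by
    apply Finset.measurable_prod
    intro t _
    exact (measurable_of_countable (fun b : Bool => ((if b then δ else 1) / d) ^ 2)).comp
      (measurable_pi_apply t)
  have hGnn : ∀ a, 0 ≤ G a := fun a => Finset.prod_nonneg fun t _ => sq_nonneg _
  have hGsm := hGmeas.stronglyMeasurable
  have hPV : IsProbabilityMeasure (P.map V) := Measure.isProbabilityMeasure_map hV.aemeasurable
  have hint : Integrable (fun ω => bu ^ 2 * G (V ω)) P := by
    have h1 : Integrable (fun a => bu ^ 2 * G a) (P.map V) := .of_finite
    rwa [integrable_map_measure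
      ((hGmeas.const_mul _).stronglyMeasurable.aestronglyMeasurable) hV.aemeasurable] at h1
  have hbd : ∀ ω, ((∏ t, (if A t ω then δ else 1) / d) * f (fun s => A s ω) (U ω)) ^ 2
      ≤ bu ^ 2 * G (V ω) := by
    intro ω
    have hW : (∏ t, (if A t ω then δ else 1) / d) ^ 2 = G (V ω) := by
      rw [← Finset.prod_pow]
    have hfsq : f (fun s => A s ω) (U ω) ^ 2 ≤ bu ^ 2 := by
      have := hfbd (fun s => A s ω) (U ω)
      have h2 := abs_le.1 this
      nlinarith
    calc ((∏ t, (if A t ω then δ else 1) / d) * f (fun s => A s ω) (U ω)) ^ 2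
        = (∏ t, (if A t ω then δ else 1) / d) ^ 2 * f (fun s => A s ω) (U ω) ^ 2 := by ring
      _ ≤ (∏ t, (if A t ω then δ else 1) / d) ^ 2 * bu ^ 2 :=
          mul_le_mul_of_nonneg_left hfsq (sq_nonneg _)
      _ = bu ^ 2 * G (V ω) := by rw [hW]; ring
  have step1 : ∫ ω, ((∏ t, (if A t ω then δ else 1) / d) * f (fun s => A s ω) (U ω)) ^ 2 ∂P
      ≤ ∫ ω, bu ^ 2 * G (V ω) ∂P :=
    integral_mono_of_nonneg (Filter.Eventually.of_forall fun ω => sq_nonneg _) hint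
      (Filter.Eventually.of_forall hbd)
  have step2 : ∫ ω, G (V ω) ∂P = ∑ a, (P.map V {a}).toReal * G a := by
    rw [← integral_map hV.aemeasurable hGsm.aestronglyMeasurable,
      integral_fintype (f := G) Integrable.of_finite]
    simp only [smul_eq_mul, measureReal_def]
  have step3 : ∀ a : Fin T → Bool,
      (P.map V {a}).toReal = ∏ t, (if a t then p else 1 - p) := by
    intro a
    have hpre : V ⁻¹' {a} = ⋂ t, A t ⁻¹' {a t} := by
      ext ω
      simp [hV_def, funext_iff, Set.mem_iInter]
    rw [Measure.map_apply hV (measurableSet_singleton a), hpre, hjoint a,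
      ENNReal.toReal_prod]
    exact Finset.prod_congr rfl fun t _ => ENNReal.toReal_ofReal (by
      by_cases h : a t <;> simp [h] <;> linarith)
  have step4 : ∑ a : Fin T → Bool, (P.map V {a}).toReal * G a
      = ((δ ^ 2 * p + (1 - p)) / d ^ 2) ^ T := by
    rw [← part1]
    refine Finset.sum_congr rfl fun a _ => ?_
    rw [step3 a, hG_def, ← Finset.prod_mul_distrib]
    refine Finset.prod_congr rfl fun t _ => ?_
    by_cases h : a t <;> simp [h, div_pow] <;> ring
  calc ∫ ω, ((∏ t, (if A t ω then δ else 1) / d) * f (fun s => A s ω) (U ω)) ^ 2 ∂P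
      ≤ ∫ ω, bu ^ 2 * G (V ω) ∂P := step1
    _ = bu ^ 2 * ∫ ω, G (V ω) ∂P := integral_const_mul _ _
    _ = bu ^ 2 * ((δ ^ 2 * p + (1 - p)) / d ^ 2) ^ T := by rw [step2, step4]
end
end

section
/- In the simplified infinite-time-horizon setting, suppose δ > 0 and E[(Y^{1̄})²] > 0; let C_T = b_u²/E[(Y^{1̄})²], let c be any real number with c ≥ 1/(1 − p^T·(E[Y^{1̄}])²/E[(Y^{1̄})²]) (the denominator is strictly positive since (E[Y^{1̄}])² ≤ E[(Y^{1̄})²] and p^T < 1), and set ζ(T; p) = 1 + c·(E[Y^{1̄}])²/((1/p)^T·E[(Y^{1̄})²]). Then Var(ψ̂_at) > 0 and the relative efficiency of the incremental estimator to the always-treated IPW estimator satisfies Var(ψ̂_inc)/Var(ψ̂_at) ≤ C_T·ζ(T; p)·((δ²p² + p(1 − p))/(δp + 1 − p)²)^T. -/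
open MeasureTheory ProbabilityTheory

noncomputable section

section MyHelpers

variable {Ω : Type*} [MeasurableSpace Ω] {P : Measure Ω} [IsProbabilityMeasure P]

lemma myIntegrable_of_bound {X : Ω → ℝ} (hm : Measurable X) (C : ℝ) (h : ∀ ω, |X ω| ≤ C) :
    Integrable X P :=
  (integrable_const C).mono' hm.aestronglyMeasurable
    (Filter.Eventually.of_forall fun ω => by simpa using h ω)

lemma myMemLp2_of_bound {X : Ω → ℝ} (hm : Measurable X) (C : ℝ) (h : ∀ ω, |X ω| ≤ C) :
    MemLp X 2 P :=
  (memLp_top_of_bound hm.aestronglyMeasurable C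
    (Filter.Eventually.of_forall fun ω => by simpa using h ω)).mono_exponent le_top

lemma myIntegral_finset_prod_indep {ι : Type*} (X : ι → Ω → ℝ)
    (hindep : iIndepFun X P) (hmeas : ∀ i, Measurable (X i))
    (C : ι → ℝ) (hbd : ∀ i ω, |X i ω| ≤ C i) (s : Finset ι) :
    ∫ ω, ∏ i ∈ s, X i ω ∂P = ∏ i ∈ s, ∫ ω, X i ω ∂P := by
  classical
  have hmeasP : ∀ t : Finset ι, Measurable (fun ω => ∏ i ∈ t, X i ω) := fun t =>
    Finset.measurable_prod t fun i _ => hmeas i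
  have hintP : ∀ t : Finset ι, Integrable (fun ω => ∏ i ∈ t, X i ω) P := by
    intro t
    refine myIntegrable_of_bound (hmeasP t) (∏ i ∈ t, C i) fun ω => ?_
    rw [Finset.abs_prod]
    exact Finset.prod_le_prod (fun i _ => abs_nonneg _) fun i _ => hbd i ω
  induction s using Finset.induction with
  | empty => simp
  | @insert a s hai ih =>
    have hIndep2 : IndepFun (X a) (fun ω => ∏ j ∈ s, X j ω) P := by
      have h := (hindep.indepFun_finsetProd_of_notMem hmeas hai).symm
      have he : (∏ j ∈ s, X j) = fun ω => ∏ j ∈ s, X j ω := by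
        funext ω; simp [Finset.prod_apply]
      rwa [he] at h
    have h2 := hIndep2.integral_mul_eq_mul_integral
      (myIntegrable_of_bound (hmeas a) (C a) (hbd a)).aestronglyMeasurable (hintP s).aestronglyMeasurable
    have h3 : (X a * fun ω => ∏ j ∈ s, X j ω) = fun ω => X a ω * ∏ j ∈ s, X j ω := rfl
    rw [h3] at h2
    simp only [Finset.prod_insert hai]
    rw [h2, ih]

lemma myIntegral_bool_comp {B : Ω → Bool} (hB : Measurable B) {p : ℝ}
    (hp0 : 0 ≤ p) (hBp : P {ω | B ω = true} = ENNReal.ofReal p) (g : Bool → ℝ) :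
    ∫ ω, g (B ω) ∂P = g true * p + g false * (1 - p) := by
  have hs : MeasurableSet {ω | B ω = true} := hB (measurableSet_singleton true)
  have heq : (fun ω => g (B ω))
      = fun ω => Set.indicator {ω | B ω = true} (fun _ => g true - g false) ω + g false := by
    funext ω
    by_cases h : B ω = true
    · simp [Set.indicator_apply, Set.mem_setOf_eq, h]
    · have hb : B ω = false := by simpa using h
      simp [Set.indicator_apply, Set.mem_setOf_eq, h, hb]
  rw [heq, integral_add ((integrable_const _).indicator hs) (integrable_const _),
    integral_indicator_const _ hs, integral_const, measureReal_def, hBp, ENNReal.toReal_ofReal hp0]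
  simp only [probReal_univ, smul_eq_mul, one_smul]
  ring

lemma myIntegral_prod_fam {E : Type} [MeasurableSpace E] {T : ℕ} {p : ℝ} (hp0 : 0 ≤ p)
    {A : Fin T → Ω → Bool} {U : Ω → E}
    (hAmeas : ∀ t, Measurable (A t)) (hUmeas : Measurable U)
    (hindep : @iIndepFun Ω (Option (Fin T)) _ (Cod E T) (fun i => CodMeas E T i) (fam T A U) P)
    (hAp : ∀ t, P {ω | A t ω = true} = ENNReal.ofReal p)
    (g : Bool → ℝ) (k : E → ℝ) (hk : Measurable k) (bk : ℝ) (hkb : ∀ e, |k e| ≤ bk) :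
    ∫ ω, (∏ t, g (A t ω)) * k (U ω) ∂P
      = (g true * p + g false * (1 - p)) ^ T * ∫ ω, k (U ω) ∂P := by
  classical
  let G : ∀ i : Option (Fin T), Cod E T i → ℝ := fun i => match i with
    | none => k
    | some _ => g
  have hGmeas : ∀ i, Measurable (G i) := by
    intro i
    cases i with
    | none => exact hk
    | some t => exact (Measurable.of_discrete : Measurable g)
  have hXindep : iIndepFun
      (fun i => G i ∘ fam T A U i) P := hindep.comp G hGmeas
  have hXmeas : ∀ i, Measurable (G i ∘ fam T A U i) := by
    intro i
    cases i with
    | none => exact hk.comp hUmeas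
    | some t => exact (Measurable.of_discrete : Measurable g).comp (hAmeas t)
  have hbd : ∀ i ω, |(G i ∘ fam T A U i) ω| ≤
      (fun i : Option (Fin T) => match i with
        | none => bk | some _ => max |g true| |g false|) i := by
    intro i ω
    cases i with
    | none => exact hkb (U ω)
    | some t =>
      show |g (A t ω)| ≤ max |g true| |g false|
      cases h : A t ω with
      | true => exact le_max_left _ _
      | false => exact le_max_right _ _
  have key := myIntegral_finset_prod_indep _ hXindep hXmeas _ hbd Finset.univ
  have e1 : (fun ω => ∏ i, (G i ∘ fam T A U i) ω)
      = fun ω => k (U ω) * ∏ t, g (A t ω) := by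
    funext ω
    rw [Fintype.prod_option]
    rfl
  have e2 : (∏ i, ∫ ω, (G i ∘ fam T A U i) ω ∂P)
      = (∫ ω, k (U ω) ∂P) * ∏ t, ∫ ω, g (A t ω) ∂P := by
    rw [Fintype.prod_option]
    rfl
  rw [e1, e2] at key
  have hb : ∀ t : Fin T, ∫ ω, g (A t ω) ∂P = g true * p + g false * (1 - p) := fun t =>
    myIntegral_bool_comp (hAmeas t) hp0 (hAp t) g
  simp only [hb, Finset.prod_const, Finset.card_univ, Fintype.card_fin] at key
  have hcomm : (fun ω => (∏ t, g (A t ω)) * k (U ω))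
      = fun ω => k (U ω) * ∏ t, g (A t ω) := by
    funext ω; exact mul_comm _ _
  rw [hcomm, key, mul_comm]

lemma myMainArith (R B q m s cc : ℝ) (hR : 0 < R) (hB : 0 < B) (hq : 0 < q)
    (hm : 0 < m) (hs : 0 ≤ s) (hD : 0 < m - q * s)
    (hc : 1 / (1 - q * s / m) ≤ cc) :
    R * B / (m / q - s) ≤ B / m * (1 + cc * s / (m / q)) * (q * R) := by
  have hc' : m ≤ cc * (m - q * s) := by
    have hx : 1 - q * s / m = (m - q * s) / m := by field_simp
    rw [hx, one_div_div] at hc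
    exact (div_le_iff₀ hD).mp hc
  have h1 : m / q - s = (m - q * s) / q := by field_simp
  have h2 : 1 + cc * s / (m / q) = (m + cc * (q * s)) / m := by
    field_simp
  rw [h1, h2, div_div_eq_mul_div, div_le_iff₀ hD]
  have hexp : B / m * ((m + cc * (q * s)) / m) * (q * R) * (m - q * s)
      = R * B * q * ((m + cc * (q * s)) * (m - q * s)) / m ^ 2 := by
    field_simp
  rw [hexp, le_div_iff₀ (by positivity : (0:ℝ) < m ^ 2)]
  have hkey : m ^ 2 ≤ (m + cc * (q * s)) * (m - q * s) := by
    nlinarith [mul_le_mul_of_nonneg_left hc' (mul_nonneg hq.le hs)]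
  nlinarith [mul_le_mul_of_nonneg_left hkey (show (0:ℝ) ≤ R * B * q by positivity)]

end MyHelpers

/-- Upper bound on the relative efficiency of the incremental-effect estimator to the
always-treated IPW estimator: with `C_T = b_u²/E[(Y^{1̄})²]`,
`c ≥ 1/(1 − p^T(E[Y^{1̄}])²/E[(Y^{1̄})²])` and
`ζ(T;p) = 1 + c·(E[Y^{1̄}])²/((1/p)^T·E[(Y^{1̄})²])`, we have `Var(ψ̂_at) > 0` and
`Var(ψ̂_inc)/Var(ψ̂_at) ≤ C_T·ζ(T;p)·((δ²p² + p(1−p))/(δp+1−p)²)^T`. -/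
theorem relative_efficiency_upper_bound_always_treated
    {Ω : Type*} {E : Type} [MeasurableSpace Ω] [MeasurableSpace E]
    (P : Measure Ω) [IsProbabilityMeasure P]
    (T : ℕ) (hT : 1 ≤ T)
    (p : ℝ) (hp : p ∈ Set.Ioo (0:ℝ) 1)
    (A : Fin T → Ω → Bool) (U : Ω → E)
    (hAmeas : ∀ t, Measurable (A t)) (hUmeas : Measurable U)
    (hindep : @iIndepFun Ω (Option (Fin T)) _ (Cod E T) (fun i => CodMeas E T i) (fam T A U) P)
    (hAp : ∀ t, P {ω | A t ω = true} = ENNReal.ofReal p)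
    (f : (Fin T → Bool) → E → ℝ)
    (hf : Measurable (fun q : (Fin T → Bool) × E => f q.1 q.2))
    (bu : ℝ) (hbu : 0 < bu) (hfbd : ∀ a e, |f a e| ≤ bu)
    (δ : ℝ) (hδ : 0 < δ)
    (hY2 : 0 < ∫ ω, (f (fun _ => true) (U ω)) ^ 2 ∂P)
    (c : ℝ)
    (hc : 1 / (1 - p ^ T * (∫ ω, f (fun _ => true) (U ω) ∂P) ^ 2
        / (∫ ω, (f (fun _ => true) (U ω)) ^ 2 ∂P)) ≤ c) :
    0 < variance (fun ω =>
        (∏ t, (if A t ω then (1:ℝ) else 0) / p) * f (fun s => A s ω) (U ω)) P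
    ∧ variance (fun ω =>
          (∏ t, (if A t ω then δ else 1) / (δ * p + 1 - p)) * f (fun s => A s ω) (U ω)) P
        / variance (fun ω =>
            (∏ t, (if A t ω then (1:ℝ) else 0) / p) * f (fun s => A s ω) (U ω)) P
      ≤ (bu ^ 2 / ∫ ω, (f (fun _ => true) (U ω)) ^ 2 ∂P)
        * (1 + c * (∫ ω, f (fun _ => true) (U ω) ∂P) ^ 2
            / ((1 / p) ^ T * ∫ ω, (f (fun _ => true) (U ω)) ^ 2 ∂P))
        * ((δ ^ 2 * p ^ 2 + p * (1 - p)) / (δ * p + 1 - p) ^ 2) ^ T := by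
  classical
  obtain ⟨hp0, hp1⟩ := hp
  have hp0' : (0:ℝ) ≤ p := le_of_lt hp0
  have hppow : (0:ℝ) < p ^ T := pow_pos hp0 T
  have hppow1 : p ^ T < 1 := pow_lt_one₀ hp0' hp1 (by omega)
  have hq : (0:ℝ) < δ * p + 1 - p := by nlinarith
  set μ1 := ∫ ω, f (fun _ => true) (U ω) ∂P with hμ1def
  set m2 := ∫ ω, (f (fun _ => true) (U ω)) ^ 2 ∂P with hm2def
  -- measurability
  have hk1 : Measurable (fun e => f (fun _ => true) e) :=
    hf.comp (measurable_const.prodMk measurable_id)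
  have hfAU : Measurable (fun ω => f (fun s => A s ω) (U ω)) :=
    hf.comp ((measurable_pi_lambda _ fun s => hAmeas s).prodMk hUmeas)
  -- pointwise replacement for the always-treated estimator
  have hpt : ∀ ω, (∏ t, (if A t ω then (1:ℝ) else 0) / p) * f (fun s => A s ω) (U ω)
      = (∏ t, (if A t ω then (1:ℝ) else 0) / p) * f (fun _ => true) (U ω) := by
    intro ω
    by_cases hall : ∀ t, A t ω = true
    · have he : (fun s => A s ω) = fun _ => true := funext fun s => hall s
      rw [he]
    · push_neg at hall
      obtain ⟨t0, ht0⟩ := hall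
      have hz : (∏ t, (if A t ω then (1:ℝ) else 0) / p) = 0 := by
        apply Finset.prod_eq_zero (Finset.mem_univ t0)
        simp [ht0]
      rw [hz, zero_mul, zero_mul]
  set Ψa := fun ω => (∏ t, (if A t ω then (1:ℝ) else 0) / p) * f (fun s => A s ω) (U ω)
    with hΨa
  set Ψi := fun ω => (∏ t, (if A t ω then δ else 1) / (δ * p + 1 - p)) * f (fun s => A s ω) (U ω)
    with hΨi
  -- mean of the always-treated estimator
  have hmean_at : ∫ ω, Ψa ω ∂P = μ1 := by
    have h0 : Ψa = fun ω =>
        (∏ t, (fun b : Bool => (if b then (1:ℝ) else 0) / p) (A t ω))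
          * (fun e => f (fun _ => true) e) (U ω) := by
      funext ω; exact hpt ω
    have h0' : ∫ ω, Ψa ω ∂P = ∫ ω,
        (∏ t, (fun b : Bool => (if b then (1:ℝ) else 0) / p) (A t ω))
          * (fun e => f (fun _ => true) e) (U ω) ∂P := by rw [h0]
    have hle := myIntegral_prod_fam hp0' hAmeas hUmeas hindep hAp
      (fun b : Bool => (if b then (1:ℝ) else 0) / p)
      (fun e => f (fun _ => true) e) hk1 bu (fun e => hfbd _ e)
    rw [h0', hle]
    have h1 : ((fun b : Bool => (if b then (1:ℝ) else 0) / p) true * p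
        + (fun b : Bool => (if b then (1:ℝ) else 0) / p) false * (1 - p)) = 1 := by
      simp only [if_true, if_false, Bool.false_eq_true, ↓reduceIte]
      field_simp
      ring
    rw [h1, one_pow, one_mul, hμ1def]
  -- second moment of the always-treated estimator
  have hsq_at : ∫ ω, Ψa ω ^ 2 ∂P = (1 / p) ^ T * m2 := by
    have h0 : (fun ω => Ψa ω ^ 2) = fun ω =>
        (∏ t, (fun b : Bool => ((if b then (1:ℝ) else 0) / p) ^ 2) (A t ω))
          * (fun e => (f (fun _ => true) e) ^ 2) (U ω) := by
      funext ω
      show Ψa ω ^ 2 = (∏ t, ((if A t ω then (1:ℝ) else 0) / p) ^ 2)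
        * (f (fun _ => true) (U ω)) ^ 2
      rw [hΨa]
      simp only []
      rw [hpt ω, mul_pow, ← Finset.prod_pow]
    have h0' : ∫ ω, Ψa ω ^ 2 ∂P = ∫ ω,
        (∏ t, (fun b : Bool => ((if b then (1:ℝ) else 0) / p) ^ 2) (A t ω))
          * (fun e => (f (fun _ => true) e) ^ 2) (U ω) ∂P := by rw [h0]
    have hb2 : ∀ e, |(f (fun _ => true) e) ^ 2| ≤ bu ^ 2 := by
      intro e
      rw [abs_pow]
      exact pow_le_pow_left₀ (abs_nonneg _) (hfbd _ e) 2
    have hle := myIntegral_prod_fam hp0' hAmeas hUmeas hindep hAp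
      (fun b : Bool => ((if b then (1:ℝ) else 0) / p) ^ 2)
      (fun e => (f (fun _ => true) e) ^ 2) (hk1.pow_const 2) (bu ^ 2) hb2
    rw [h0', hle]
    have h1 : ((fun b : Bool => ((if b then (1:ℝ) else 0) / p) ^ 2) true * p
        + (fun b : Bool => ((if b then (1:ℝ) else 0) / p) ^ 2) false * (1 - p)) = 1 / p := by
      simp only [if_true, if_false, Bool.false_eq_true, ↓reduceIte]
      field_simp
      ring
    rw [h1, hm2def]
  -- boundedness and MemLp of the always-treated estimator
  have habs_g0 : ∀ b : Bool, |(if b then (1:ℝ) else 0) / p| ≤ 1 / p := by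
    intro b
    cases b
    · show |(0:ℝ) / p| ≤ 1 / p
      rw [zero_div, abs_zero]
      positivity
    · show |(1:ℝ) / p| ≤ 1 / p
      rw [abs_of_pos (by positivity)]
  have hprod_at : ∀ ω, |∏ t, (if A t ω then (1:ℝ) else 0) / p| ≤ (1 / p) ^ T := by
    intro ω
    rw [Finset.abs_prod]
    calc (∏ t, |(if A t ω then (1:ℝ) else 0) / p|) ≤ ∏ _t : Fin T, (1 / p) :=
        Finset.prod_le_prod (fun _ _ => abs_nonneg _) (fun t _ => habs_g0 _)
      _ = (1 / p) ^ T := by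
        rw [Finset.prod_const, Finset.card_univ, Fintype.card_fin]
  have hbd_at : ∀ ω, |Ψa ω| ≤ (1 / p) ^ T * bu := by
    intro ω
    rw [hΨa]
    simp only []
    rw [abs_mul]
    exact mul_le_mul (hprod_at ω) (hfbd _ _) (abs_nonneg _) (by positivity)
  have hmeas_at : Measurable Ψa := by
    rw [hΨa]
    exact (Finset.measurable_prod _ fun t _ =>
      (Measurable.of_discrete (f := fun b : Bool => (if b then (1:ℝ) else 0) / p)).comp
        (hAmeas t)).mul hfAU
  have hmem_at : MemLp Ψa 2 P := myMemLp2_of_bound hmeas_at _ hbd_at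
  have hVat : variance Ψa P = (1 / p) ^ T * m2 - μ1 ^ 2 := by
    rw [variance_eq_sub hmem_at]
    simp only [Pi.pow_apply]
    rw [hsq_at, hmean_at]
  -- μ1² ≤ m2
  have hμsq : μ1 ^ 2 ≤ m2 := by
    have hZmem : MemLp (fun ω => f (fun _ => true) (U ω)) 2 P :=
      myMemLp2_of_bound (hk1.comp hUmeas) bu (fun ω => hfbd _ _)
    have h := variance_nonneg (fun ω => f (fun _ => true) (U ω)) P
    rw [variance_eq_sub hZmem] at h
    simp only [Pi.pow_apply] at h
    rw [← hm2def, ← hμ1def] at h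
    linarith
  -- Var(ψ̂_at) > 0
  have hm2ltdiv : m2 < m2 / p ^ T := by
    rw [lt_div_iff₀ hppow]
    nlinarith
  have hone_div_pow : ((1:ℝ) / p) ^ T * m2 = m2 / p ^ T := by
    rw [one_div_pow]
    ring
  have hVatpos : 0 < (1 / p) ^ T * m2 - μ1 ^ 2 := by
    rw [hone_div_pow]
    nlinarith
  -- incremental estimator: measurability, bounds
  have habs_w : ∀ b : Bool, |(if b then δ else 1) / (δ * p + 1 - p)| ≤ (δ + 1) / (δ * p + 1 - p) := by
    intro b
    cases b
    · show |(1:ℝ) / (δ * p + 1 - p)| ≤ _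
      rw [abs_div, abs_of_pos hq, abs_one]
      gcongr
      linarith
    · show |δ / (δ * p + 1 - p)| ≤ _
      rw [abs_div, abs_of_pos hq, abs_of_pos hδ]
      gcongr
      linarith
  have hprod_w : ∀ ω, |∏ t, (if A t ω then δ else 1) / (δ * p + 1 - p)|
      ≤ ((δ + 1) / (δ * p + 1 - p)) ^ T := by
    intro ω
    rw [Finset.abs_prod]
    calc (∏ t, |(if A t ω then δ else 1) / (δ * p + 1 - p)|)
        ≤ ∏ _t : Fin T, ((δ + 1) / (δ * p + 1 - p)) :=
          Finset.prod_le_prod (fun _ _ => abs_nonneg _) (fun t _ => habs_w _)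
      _ = ((δ + 1) / (δ * p + 1 - p)) ^ T := by
          rw [Finset.prod_const, Finset.card_univ, Fintype.card_fin]
  have hbd_inc : ∀ ω, |Ψi ω| ≤ ((δ + 1) / (δ * p + 1 - p)) ^ T * bu := by
    intro ω
    rw [hΨi]
    simp only []
    rw [abs_mul]
    refine mul_le_mul (hprod_w ω) (hfbd _ _) (abs_nonneg _) ?_
    positivity
  have hmeas_inc : Measurable Ψi := by
    rw [hΨi]
    exact (Finset.measurable_prod _ fun t _ =>
      (Measurable.of_discrete (f := fun b : Bool => (if b then δ else 1) / (δ * p + 1 - p))).comp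
        (hAmeas t)).mul hfAU
  have hVinc_le : variance Ψi P ≤ ∫ ω, Ψi ω ^ 2 ∂P := by
    have h := variance_le_expectation_sq (μ := P) hmeas_inc.aestronglyMeasurable
    simpa [Pi.pow_apply] using h
  -- second moment bound for the incremental estimator
  have hprodw2_nonneg : ∀ ω, (0:ℝ) ≤ ∏ t, ((if A t ω then δ else 1) / (δ * p + 1 - p)) ^ 2 :=
    fun ω => Finset.prod_nonneg fun t _ => sq_nonneg _
  have hprodw2_le : ∀ ω, (∏ t, ((if A t ω then δ else 1) / (δ * p + 1 - p)) ^ 2)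
      ≤ (((δ + 1) / (δ * p + 1 - p)) ^ 2) ^ T := by
    intro ω
    calc (∏ t, ((if A t ω then δ else 1) / (δ * p + 1 - p)) ^ 2)
        ≤ ∏ _t : Fin T, (((δ + 1) / (δ * p + 1 - p)) ^ 2) := by
          refine Finset.prod_le_prod (fun _ _ => sq_nonneg _) (fun t _ => ?_)
          rw [← sq_abs]
          exact pow_le_pow_left₀ (abs_nonneg _) (habs_w _) 2
      _ = (((δ + 1) / (δ * p + 1 - p)) ^ 2) ^ T := by
          rw [Finset.prod_const, Finset.card_univ, Fintype.card_fin]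
  have hmeas_prodw2 : Measurable (fun ω => ∏ t, ((if A t ω then δ else 1) / (δ * p + 1 - p)) ^ 2) :=
    Finset.measurable_prod _ fun t _ =>
      (Measurable.of_discrete
        (f := fun b : Bool => ((if b then δ else 1) / (δ * p + 1 - p)) ^ 2)).comp (hAmeas t)
  have hint1 : Integrable (fun ω => Ψi ω ^ 2) P :=
    myIntegrable_of_bound (hmeas_inc.pow_const 2) ((((δ + 1) / (δ * p + 1 - p)) ^ T * bu) ^ 2)
      (fun ω => by
        rw [abs_pow]
        exact pow_le_pow_left₀ (abs_nonneg _) (hbd_inc ω) 2)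
  have hint2 : Integrable
      (fun ω => (∏ t, ((if A t ω then δ else 1) / (δ * p + 1 - p)) ^ 2) * bu ^ 2) P :=
    myIntegrable_of_bound (hmeas_prodw2.mul_const _)
      ((((δ + 1) / (δ * p + 1 - p)) ^ 2) ^ T * bu ^ 2)
      (fun ω => by
        rw [abs_mul, abs_of_nonneg (hprodw2_nonneg ω), abs_of_pos (pow_pos hbu 2)]
        exact mul_le_mul_of_nonneg_right (hprodw2_le ω) (by positivity))
  have hVinc : variance Ψi P
      ≤ ((δ ^ 2 * p + (1 - p)) / (δ * p + 1 - p) ^ 2) ^ T * bu ^ 2 := by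
    have hpw : ∀ ω, Ψi ω ^ 2
        = (∏ t, ((if A t ω then δ else 1) / (δ * p + 1 - p)) ^ 2)
            * (f (fun s => A s ω) (U ω)) ^ 2 := by
      intro ω
      rw [hΨi]
      simp only []
      rw [mul_pow, ← Finset.prod_pow]
    have hmono : ∫ ω, Ψi ω ^ 2 ∂P
        ≤ ∫ ω, (∏ t, ((if A t ω then δ else 1) / (δ * p + 1 - p)) ^ 2) * bu ^ 2 ∂P := by
      refine integral_mono hint1 hint2 fun ω => ?_
      rw [hpw ω]
      refine mul_le_mul_of_nonneg_left ?_ (hprodw2_nonneg ω)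
      calc (f (fun s => A s ω) (U ω)) ^ 2 = |f (fun s => A s ω) (U ω)| ^ 2 := (sq_abs _).symm
        _ ≤ bu ^ 2 := pow_le_pow_left₀ (abs_nonneg _) (hfbd _ _) 2
    have heqw := myIntegral_prod_fam hp0' hAmeas hUmeas hindep hAp
      (fun b : Bool => ((if b then δ else 1) / (δ * p + 1 - p)) ^ 2)
      (fun _ : E => bu ^ 2) measurable_const (bu ^ 2)
      (fun _ => le_of_eq (abs_of_pos (pow_pos hbu 2)))
    have hconst : (∫ ω, (fun _ : E => bu ^ 2) (U ω) ∂P) = bu ^ 2 := by simp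
    have hw2val : ((fun b : Bool => ((if b then δ else 1) / (δ * p + 1 - p)) ^ 2) true * p
        + (fun b : Bool => ((if b then δ else 1) / (δ * p + 1 - p)) ^ 2) false * (1 - p))
        = (δ ^ 2 * p + (1 - p)) / (δ * p + 1 - p) ^ 2 := by
      simp only [if_true, if_false, Bool.false_eq_true, ↓reduceIte]
      field_simp
      try ring
    rw [hconst, hw2val] at heqw
    calc variance Ψi P ≤ ∫ ω, Ψi ω ^ 2 ∂P := hVinc_le
      _ ≤ ∫ ω, (∏ t, ((if A t ω then δ else 1) / (δ * p + 1 - p)) ^ 2) * bu ^ 2 ∂P := hmono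
      _ = ((δ ^ 2 * p + (1 - p)) / (δ * p + 1 - p) ^ 2) ^ T * bu ^ 2 := heqw
  -- conclusion
  clear_value μ1 m2 Ψa Ψi
  constructor
  · rw [hVat]
    exact hVatpos
  · rw [hVat]
    have step1 : variance Ψi P / ((1 / p) ^ T * m2 - μ1 ^ 2)
        ≤ (((δ ^ 2 * p + (1 - p)) / (δ * p + 1 - p) ^ 2) ^ T * bu ^ 2)
            / ((1 / p) ^ T * m2 - μ1 ^ 2) :=
      div_le_div_of_nonneg_right hVinc hVatpos.le
    refine le_trans step1 ?_
    have hD : (0:ℝ) < m2 - p ^ T * μ1 ^ 2 := by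
      nlinarith [mul_le_mul_of_nonneg_left hμsq hppow.le,
        mul_pos (sub_pos.mpr hppow1) hY2, sq_nonneg μ1]
    have hrT : ((δ ^ 2 * p ^ 2 + p * (1 - p)) / (δ * p + 1 - p) ^ 2) ^ T
        = p ^ T * ((δ ^ 2 * p + (1 - p)) / (δ * p + 1 - p) ^ 2) ^ T := by
      have hbase : (δ ^ 2 * p ^ 2 + p * (1 - p)) / (δ * p + 1 - p) ^ 2
          = p * ((δ ^ 2 * p + (1 - p)) / (δ * p + 1 - p) ^ 2) := by
        field_simp
      rw [hbase, mul_pow]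
    have hrpos : (0:ℝ) < ((δ ^ 2 * p + (1 - p)) / (δ * p + 1 - p) ^ 2) ^ T := by
      apply pow_pos
      have h1 : (0:ℝ) < δ ^ 2 * p := by positivity
      apply div_pos (by linarith) (by positivity)
    rw [hone_div_pow, hrT]
    exact myMainArith _ _ _ _ _ _ hrpos (pow_pos hbu 2) hppow hY2 (sq_nonneg μ1) hD hc
end
end

section
/- In the simplified infinite-time-horizon setting, suppose δ > 0 and E[(Y^{0̄})²] > 0 where 0̄ = (0,…,0); let C'_T = b_u²/E[(Y^{0̄})²], let c be any real number with c ≥ 1/(1 − (1 − p)^T·(E[Y^{0̄}])²/E[(Y^{0̄})²]), and set ζ'(T; p) = 1 + c·(E[Y^{0̄}])²/((1/(1 − p))^T·E[(Y^{0̄})²]). Then Var(ψ̂_cipw(0̄)) > 0 and the relative efficiency of the incremental estimator to the never-treated IPW estimator satisfies Var(ψ̂_inc)/Var(ψ̂_cipw(0̄)) ≤ C'_T·ζ'(T; p)·((δ²p(1 − p) + (1 − p)²)/(δp + 1 − p)²)^T. -/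
open MeasureTheory ProbabilityTheory

noncomputable section

lemma indepA {Ω : Type*} {E : Type} [MeasurableSpace Ω] [MeasurableSpace E]
    {P : Measure Ω} {T : ℕ} {A : Fin T → Ω → Bool} {U : Ω → E}
    (hindep : iIndepFun (m := fun i => CodMeas E T i) (fam T A U) P) :
    iIndepFun (m := fun _ : Fin T => (inferInstance : MeasurableSpace Bool)) A P := by
  classical
  rw [iIndepFun_iff_measure_inter_preimage_eq_mul] at hindep ⊢
  intro S sets hsets
  set sets' : ∀ i : Option (Fin T), Set (Cod E T i) := fun i =>
    match i with
    | none => Set.univ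
    | some t => sets t with hsets'
  have hm : ∀ i ∈ S.image some, MeasurableSet (sets' i) := by
    intro i hi
    simp only [Finset.mem_image] at hi
    obtain ⟨t, ht, rfl⟩ := hi
    exact hsets t ht
  have key := hindep (S.image some) (sets := sets') hm
  have h1 : (⋂ i ∈ S.image some, fam T A U i ⁻¹' sets' i) = ⋂ t ∈ S, A t ⁻¹' sets t := by
    ext ω
    simp only [Set.mem_iInter, Finset.mem_image]
    constructor
    · intro h t ht
      exact h (some t) ⟨t, ht, rfl⟩
    · rintro h i ⟨t, ht, rfl⟩
      exact h t ht
  have h2 : (∏ i ∈ S.image some, P (fam T A U i ⁻¹' sets' i)) = ∏ t ∈ S, P (A t ⁻¹' sets t) :=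
    Finset.prod_image (fun a _ b _ h => Option.some_injective _ h)
  rw [h1, h2] at key
  exact key

lemma integral_finset_prod_of_iIndepFun {Ω : Type*} [MeasurableSpace Ω] {P : Measure Ω}
    [IsProbabilityMeasure P] {ι : Type*} (s : Finset ι) (X : ι → Ω → ℝ)
    (hmeas : ∀ i, Measurable (X i))
    (hindep : iIndepFun (m := fun _ => (inferInstance : MeasurableSpace ℝ)) X P) :
    ∫ ω, ∏ i ∈ s, X i ω ∂P = ∏ i ∈ s, ∫ ω, X i ω ∂P := by
  classical
  induction s using Finset.cons_induction with
  | empty => simp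
  | cons i s hi ih =>
    have hIF : IndepFun (∏ j ∈ s, X j) (X i) P :=
      hindep.indepFun_finsetProd_of_notMem hmeas hi
    have h1 : ∫ ω, ∏ j ∈ Finset.cons i s hi, X j ω ∂P
        = ∫ ω, ((∏ j ∈ s, X j) * X i) ω ∂P := by
      apply integral_congr_ae; filter_upwards with ω
      simp [Finset.prod_insert hi, Finset.prod_apply, mul_comm]
    rw [h1, hIF.integral_mul_eq_mul_integral ((by
        have : Measurable (∏ j ∈ s, X j) := by
          rw [show (∏ j ∈ s, X j) = fun ω => ∏ j ∈ s, X j ω from funext fun ω => by simp]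
          exact s.measurable_prod fun j _ => hmeas j
        exact this.aestronglyMeasurable))
      (hmeas i).aestronglyMeasurable]
    have h2 : ∫ ω, (∏ j ∈ s, X j) ω ∂P = ∫ ω, ∏ j ∈ s, X j ω ∂P := by
      apply integral_congr_ae; filter_upwards with ω; simp
    rw [h2, ih, Finset.prod_cons, mul_comm]

lemma indepAU {Ω : Type*} {E : Type} [MeasurableSpace Ω] [MeasurableSpace E]
    {P : Measure Ω} {T : ℕ} {A : Fin T → Ω → Bool} {U : Ω → E}
    (hAmeas : ∀ t, Measurable (A t)) (hUmeas : Measurable U)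
    (hindep : iIndepFun (m := fun i => CodMeas E T i) (fam T A U) P)
    (g : (Fin T → Bool) → ℝ) (h : E → ℝ) (hh : Measurable h) :
    IndepFun (fun ω => g (fun s => A s ω)) (fun ω => h (U ω)) P := by
  classical
  have hmeas : ∀ i, Measurable (fam T A U i) := by
    intro i; cases i with
    | none => exact hUmeas
    | some t => exact hAmeas t
  have key := hindep.indepFun_finset (Finset.univ.image some) ({none} : Finset (Option (Fin T)))
    (by simp) hmeas
  let φ : ((i : ↑(Finset.univ.image (some : Fin T → Option (Fin T)))) → Cod E T i.1) → ℝ :=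
    fun v => g (fun t => v ⟨some t, by simp⟩)
  let ψ : ((i : ↑({none} : Finset (Option (Fin T)))) → Cod E T i.1) → ℝ :=
    fun w => h (w ⟨none, by simp⟩)
  have hφ : Measurable φ := by
    have hg : Measurable g := measurable_of_countable g
    exact hg.comp (measurable_pi_lambda _ fun t => measurable_pi_apply _)
  have hψ : Measurable ψ := hh.comp (measurable_pi_apply _)
  exact key.comp hφ hψ

lemma bernoulli_exp {Ω : Type*} [MeasurableSpace Ω] {P : Measure Ω}
    [IsProbabilityMeasure P] {p : ℝ} (hp : p ∈ Set.Ioo (0:ℝ) 1)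
    {B : Ω → Bool} (hB : Measurable B) (hBp : P {ω | B ω = true} = ENNReal.ofReal p)
    (h : Bool → ℝ) :
    ∫ ω, h (B ω) ∂P = h true * p + h false * (1 - p) := by
  classical
  have hs : MeasurableSet {ω | B ω = true} :=
    (measurableSet_eq_fun hB measurable_const : MeasurableSet {ω | B ω = true})
  have hps : (P {ω | B ω = true}).toReal = p := by
    rw [hBp, ENNReal.toReal_ofReal hp.1.le]
  have hpc : (P {ω | B ω = true}ᶜ).toReal = 1 - p := by
    rw [measure_compl hs (measure_ne_top _ _), measure_univ, hBp,
      ENNReal.toReal_sub_of_le (by simpa using ENNReal.ofReal_le_one.2 hp.2.le) (by simp),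
      ENNReal.toReal_ofReal hp.1.le, ENNReal.toReal_one]
  have hint : Integrable (fun ω => h (B ω)) P := by
    apply Integrable.mono' (integrable_const (max |h true| |h false|))
      ((measurable_of_countable h).comp hB).aestronglyMeasurable
    filter_upwards with ω
    cases hb : B ω <;> simp [hb, le_max_left, le_max_right]
  rw [← integral_add_compl hs hint]
  have h1 : ∫ ω in {ω | B ω = true}, h (B ω) ∂P = h true * p := by
    rw [setIntegral_congr_fun hs (g := fun _ => h true) (by intro ω hω; simp at hω; simp [hω])]
    simp [measureReal_def, hps, mul_comm]
  have h2 : ∫ ω in {ω | B ω = true}ᶜ, h (B ω) ∂P = h false * (1 - p) := by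
    rw [setIntegral_congr_fun hs.compl (g := fun _ => h false)
      (by intro ω hω; simp [Set.mem_compl_iff] at hω; simp [hω])]
    simp [measureReal_def, hpc, mul_comm]
  rw [h1, h2]

lemma arith_core (T : ℕ) (bu m2 μ0 s E c V1 : ℝ) (hbu : 0 < bu) (hm2 : 0 < m2)
    (hμ : μ0^2 ≤ m2)
    (hs0 : 0 < s) (hs1 : s < 1) (hE : 0 < E) (hV1 : 0 ≤ V1) (hV1le : V1 ≤ bu^2 * E)
    (hc : 1 / (1 - s * μ0^2 / m2) ≤ c) :
    0 < 1/s * m2 - μ0^2 ∧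
    V1 / (1/s * m2 - μ0^2) ≤ bu^2/m2 * (1 + c * μ0^2 / (1/s * m2)) * (s*E) := by
  set r : ℝ := s * μ0^2 / m2 with hr
  have hr0 : 0 ≤ r := by positivity
  have hr1 : r < 1 := by
    have h1 : s * μ0^2 ≤ s * m2 := by nlinarith
    have : r ≤ s := by rw [hr, div_le_iff₀ hm2]; nlinarith
    linarith
  have h1r : 0 < 1 - r := by linarith
  have hcr : 1 ≤ c * (1 - r) := by
    have := (div_le_iff₀ h1r).mp hc
    linarith
  have hV0eq : 1/s * m2 - μ0^2 = m2 * (1 - r) / s := by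
    rw [hr]; field_simp
  have hV0 : 0 < 1/s * m2 - μ0^2 := by rw [hV0eq]; positivity
  refine ⟨hV0, ?_⟩
  rw [div_le_iff₀ hV0]
  have key : 1 ≤ (1 + c * r) * (1 - r) := by nlinarith
  have hEq : bu^2/m2 * (1 + c * μ0^2 / (1/s * m2)) * (s*E) * (1/s * m2 - μ0^2)
      = bu^2 * E * ((1 + c * r) * (1 - r)) := by
    rw [hr]; field_simp
  rw [hEq]
  nlinarith [mul_le_mul_of_nonneg_left key (by positivity : (0:ℝ) ≤ bu^2 * E)]

set_option maxHeartbeats 1000000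

/-- Upper bound on the relative efficiency of the incremental-effect estimator to the
never-treated IPW estimator: with `C'_T = b_u²/E[(Y^{0̄})²]`,
`c ≥ 1/(1 − (1−p)^T(E[Y^{0̄}])²/E[(Y^{0̄})²])` and
`ζ'(T;p) = 1 + c·(E[Y^{0̄}])²/((1/(1−p))^T·E[(Y^{0̄})²])`, we have `Var(ψ̂_cipw(0̄)) > 0` and
`Var(ψ̂_inc)/Var(ψ̂_cipw(0̄)) ≤ C'_T·ζ'(T;p)·((δ²p(1−p) + (1−p)²)/(δp+1−p)²)^T`. -/
theorem relative_efficiency_upper_bound_never_treated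
    {Ω : Type*} {E : Type} [MeasurableSpace Ω] [MeasurableSpace E]
    (P : Measure Ω) [IsProbabilityMeasure P]
    (T : ℕ) (hT : 1 ≤ T)
    (p : ℝ) (hp : p ∈ Set.Ioo (0:ℝ) 1)
    (A : Fin T → Ω → Bool) (U : Ω → E)
    (hAmeas : ∀ t, Measurable (A t)) (hUmeas : Measurable U)
    (hindep : iIndepFun (m := fun i => CodMeas E T i) (fam T A U) P)
    (hAp : ∀ t, P {ω | A t ω = true} = ENNReal.ofReal p)
    (f : (Fin T → Bool) → E → ℝ)
    (hf : Measurable (fun q : (Fin T → Bool) × E => f q.1 q.2))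
    (bu : ℝ) (hbu : 0 < bu) (hfbd : ∀ a e, |f a e| ≤ bu)
    (δ : ℝ) (hδ : 0 < δ)
    (hY2 : 0 < ∫ ω, (f (fun _ => false) (U ω)) ^ 2 ∂P)
    (c : ℝ)
    (hc : 1 / (1 - (1 - p) ^ T * (∫ ω, f (fun _ => false) (U ω) ∂P) ^ 2
        / (∫ ω, (f (fun _ => false) (U ω)) ^ 2 ∂P)) ≤ c) :
    0 < variance (fun ω =>
        (∏ t, (if A t ω then (0:ℝ) else 1) / (1 - p)) * f (fun s => A s ω) (U ω)) P
    ∧ variance (fun ω =>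
          (∏ t, (if A t ω then δ else 1) / (δ * p + 1 - p)) * f (fun s => A s ω) (U ω)) P
        / variance (fun ω =>
            (∏ t, (if A t ω then (0:ℝ) else 1) / (1 - p)) * f (fun s => A s ω) (U ω)) P
      ≤ (bu ^ 2 / ∫ ω, (f (fun _ => false) (U ω)) ^ 2 ∂P)
        * (1 + c * (∫ ω, f (fun _ => false) (U ω) ∂P) ^ 2
            / ((1 / (1 - p)) ^ T * ∫ ω, (f (fun _ => false) (U ω)) ^ 2 ∂P))
        * ((δ ^ 2 * p * (1 - p) + (1 - p) ^ 2) / (δ * p + 1 - p) ^ 2) ^ T := by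
  classical
  obtain ⟨hp0, hp1⟩ := hp
  have hq0 : 0 < 1 - p := by linarith
  have he0 : 0 < δ * p + 1 - p := by nlinarith
  set μ0 : ℝ := ∫ ω, f (fun _ => false) (U ω) ∂P with hμ0def
  set m2 : ℝ := ∫ ω, (f (fun _ => false) (U ω)) ^ 2 ∂P with hm2def
  set W0 : Ω → ℝ := fun ω =>
    (∏ t, (if A t ω then (0:ℝ) else 1) / (1 - p)) * f (fun s => A s ω) (U ω) with hW0def
  set W1 : Ω → ℝ := fun ω =>
    (∏ t, (if A t ω then δ else 1) / (δ * p + 1 - p)) * f (fun s => A s ω) (U ω) with hW1def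
  have hAindep : iIndepFun (m := fun _ : Fin T => (inferInstance : MeasurableSpace Bool)) A P :=
    indepA hindep
  -- expectation of a product over the treatments
  have hprod : ∀ g : Bool → ℝ,
      ∫ ω, ∏ t, g (A t ω) ∂P = (g true * p + g false * (1 - p)) ^ T := by
    intro g
    have hX : ∀ t : Fin T, Measurable (fun ω => g (A t ω)) :=
      fun t => (measurable_of_countable g).comp (hAmeas t)
    have hXi : iIndepFun (m := fun _ : Fin T => (inferInstance : MeasurableSpace ℝ))
        (fun t ω => g (A t ω)) P :=
      hAindep.comp (fun _ => g) (fun _ => measurable_of_countable g)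
    rw [integral_finset_prod_of_iIndepFun Finset.univ _ hX hXi]
    have hb : ∀ t : Fin T, ∫ ω, g (A t ω) ∂P = g true * p + g false * (1 - p) :=
      fun t => bernoulli_exp ⟨hp0, hp1⟩ (hAmeas t) (hAp t) g
    rw [Finset.prod_congr rfl (fun t _ => hb t), Finset.prod_const, Finset.card_univ,
      Fintype.card_fin]
  -- splitting of expectations between treatments and exogenous variable
  have hsplit : ∀ g : Bool → ℝ, ∀ h : E → ℝ, Measurable h →
      ∫ ω, (∏ t, g (A t ω)) * h (U ω) ∂P
        = (∫ ω, ∏ t, g (A t ω) ∂P) * ∫ ω, h (U ω) ∂P := by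
    intro g h hh
    have hIF := indepAU hAmeas hUmeas hindep (fun v => ∏ t, g (v t)) h hh
    have hXm : Measurable (fun ω => ∏ t, g (A t ω)) :=
      Finset.measurable_prod _ fun t _ => (measurable_of_countable g).comp (hAmeas t)
    exact hIF.integral_fun_mul_eq_mul_integral hXm.aestronglyMeasurable ((hh.comp hUmeas)).aestronglyMeasurable
  have hf0meas : Measurable (fun e => f (fun _ => false) e) :=
    hf.comp (measurable_const.prodMk measurable_id)
  have hYmeas : Measurable (fun ω => f (fun s => A s ω) (U ω)) :=
    hf.comp ((measurable_pi_lambda _ fun s => hAmeas s).prodMk hUmeas)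
  -- pointwise structure of W0
  have hW0ptw : ∀ ω, W0 ω = (1/(1-p))^T
      * ((∏ t, (if A t ω then (0:ℝ) else 1)) * f (fun _ => false) (U ω)) := by
    intro ω
    simp only [hW0def]
    by_cases h : ∀ t, A t ω = false
    · have e1 : (fun s => A s ω) = (fun _ => false) := funext h
      have e2 : (∏ t : Fin T, (if A t ω then (0:ℝ) else 1) / (1 - p)) = (1/(1-p))^T := by
        rw [Finset.prod_congr rfl (fun t _ => by rw [h t]; norm_num : ∀ t ∈ Finset.univ,
          (if A t ω then (0:ℝ) else 1) / (1 - p) = 1/(1-p)), Finset.prod_const,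
          Finset.card_univ, Fintype.card_fin]
      have e3 : (∏ t : Fin T, (if A t ω then (0:ℝ) else 1)) = 1 := by
        rw [Finset.prod_congr rfl (fun t _ => by rw [h t]; norm_num : ∀ t ∈ Finset.univ,
          (if A t ω then (0:ℝ) else 1) = 1), Finset.prod_const, one_pow]
      rw [e1, e2, e3, one_mul]
    · push_neg at h
      obtain ⟨t, ht⟩ := h
      have ht' : A t ω = true := by simpa using ht
      have z1 : (∏ t' : Fin T, (if A t' ω then (0:ℝ) else 1) / (1 - p)) = 0 :=
        Finset.prod_eq_zero (Finset.mem_univ t) (by rw [ht']; norm_num)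
      have z2 : (∏ t' : Fin T, (if A t' ω then (0:ℝ) else 1)) = 0 :=
        Finset.prod_eq_zero (Finset.mem_univ t) (by rw [ht']; norm_num)
      rw [z1, z2]
      ring
  -- the indicator product is idempotent
  have hI01 : ∀ ω, (∏ t, (if A t ω then (0:ℝ) else 1)) = 0
      ∨ (∏ t, (if A t ω then (0:ℝ) else 1)) = 1 := by
    intro ω
    by_cases h : ∀ t, A t ω = false
    · right
      rw [Finset.prod_congr rfl (fun t _ => by rw [h t]; norm_num : ∀ t ∈ Finset.univ,
        (if A t ω then (0:ℝ) else 1) = 1), Finset.prod_const, one_pow]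
    · left
      push_neg at h
      obtain ⟨t, ht⟩ := h
      have ht' : A t ω = true := by simpa using ht
      exact Finset.prod_eq_zero (Finset.mem_univ t) (by rw [ht']; norm_num)
  have hcancel : (1/(1-p))^T * (1-p)^T = 1 := by
    rw [← mul_pow, one_div_mul_cancel (ne_of_gt hq0), one_pow]
  -- first moment of the indicator
  have hEI : ∫ ω, ∏ t, (if A t ω then (0:ℝ) else 1) ∂P = (1-p)^T := by
    rw [hprod (fun b => if b then (0:ℝ) else 1)]
    norm_num
  -- first moment of W0
  have hEW0 : ∫ ω, W0 ω ∂P = μ0 := by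
    rw [integral_congr_ae (Filter.Eventually.of_forall hW0ptw), integral_const_mul,
      hsplit (fun b => if b then (0:ℝ) else 1) (fun e => f (fun _ => false) e) hf0meas,
      hEI, ← hμ0def, ← mul_assoc, hcancel, one_mul]
  -- second moment of W0
  have hEW0sq : ∫ ω, (W0 ω)^2 ∂P = (1/(1-p))^T * m2 := by
    have hptw : ∀ ω, (W0 ω)^2 = ((1/(1-p))^T)^2
        * ((∏ t, (if A t ω then (0:ℝ) else 1)) * (f (fun _ => false) (U ω))^2) := by
      intro ω
      rw [hW0ptw ω]
      have hidem : (∏ t, (if A t ω then (0:ℝ) else 1))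
          * (∏ t, (if A t ω then (0:ℝ) else 1)) = ∏ t, (if A t ω then (0:ℝ) else 1) := by
        rcases hI01 ω with h | h <;> rw [h] <;> ring
      calc ((1/(1-p))^T * ((∏ t, (if A t ω then (0:ℝ) else 1)) * f (fun _ => false) (U ω)))^2
          = ((1/(1-p))^T)^2 * (((∏ t, (if A t ω then (0:ℝ) else 1))
              * (∏ t, (if A t ω then (0:ℝ) else 1))) * (f (fun _ => false) (U ω))^2) := by
            ring
        _ = _ := by rw [hidem]
    rw [integral_congr_ae (Filter.Eventually.of_forall hptw), integral_const_mul,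
      hsplit (fun b => if b then (0:ℝ) else 1) (fun e => (f (fun _ => false) e)^2)
        (hf0meas.pow_const 2),
      hEI, ← hm2def]
    calc ((1/(1-p))^T)^2 * ((1-p)^T * m2)
        = ((1/(1-p))^T * ((1/(1-p))^T * (1-p)^T)) * m2 := by ring
      _ = (1/(1-p))^T * m2 := by rw [hcancel, mul_one]
  -- measurability and boundedness of W0
  have hW0meas : Measurable W0 := by
    rw [hW0def]
    exact (Finset.measurable_prod _ fun t _ =>
      (measurable_of_countable (fun b : Bool => (if b then (0:ℝ) else 1)/(1-p))).comp
        (hAmeas t)).mul hYmeas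
  have hW0bd : ∀ ω, |W0 ω| ≤ (1/(1-p))^T * bu := by
    intro ω
    rw [hW0ptw ω, abs_mul, abs_mul, abs_of_nonneg (by positivity : (0:ℝ) ≤ (1/(1-p))^T)]
    have h1 : |∏ t, (if A t ω then (0:ℝ) else 1)| ≤ 1 := by
      rcases hI01 ω with h | h <;> rw [h] <;> norm_num
    have h2 : |f (fun _ => false) (U ω)| ≤ bu := hfbd _ _
    have h3 : (0:ℝ) ≤ |f (fun _ => false) (U ω)| := abs_nonneg _
    have h4 : (0:ℝ) ≤ (1/(1-p))^T := by positivity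
    have h5 := mul_le_mul h1 h2 h3 (by norm_num : (0:ℝ) ≤ 1)
    nlinarith
  have hW0mem : MemLp W0 2 P :=
    MemLp.of_bound hW0meas.aestronglyMeasurable _
      (Filter.Eventually.of_forall fun ω => by rw [Real.norm_eq_abs]; exact hW0bd ω)
  have hVar0 : variance W0 P = (1/(1-p))^T * m2 - μ0^2 := by
    rw [variance_eq_sub hW0mem]
    have : P[W0 ^ 2] = ∫ ω, (W0 ω)^2 ∂P := by
      apply integral_congr_ae; filter_upwards with ω; simp
    rw [this, hEW0sq, hEW0]
  -- Cauchy-Schwarz: μ0² ≤ m2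
  have hZmeas : Measurable (fun ω => f (fun _ => false) (U ω)) := hf0meas.comp hUmeas
  have hZmem : MemLp (fun ω => f (fun _ => false) (U ω)) 2 P :=
    MemLp.of_bound hZmeas.aestronglyMeasurable bu
      (Filter.Eventually.of_forall fun ω => by rw [Real.norm_eq_abs]; exact hfbd _ _)
  have hμ0sq : μ0^2 ≤ m2 := by
    have hnn := variance_nonneg (fun ω => f (fun _ => false) (U ω)) P
    rw [variance_eq_sub hZmem] at hnn
    have he : P[(fun ω => f (fun _ => false) (U ω)) ^ 2] = m2 := by
      rw [hm2def]
      apply integral_congr_ae; filter_upwards with ω; simp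
    rw [he, ← hμ0def] at hnn
    linarith
  -- measurability and bound for W1
  have hW1meas : Measurable W1 := by
    rw [hW1def]
    exact (Finset.measurable_prod _ fun t _ =>
      (measurable_of_countable (fun b : Bool => (if b then δ else 1)/(δ * p + 1 - p))).comp
        (hAmeas t)).mul hYmeas
  -- variance of W1 bounded by second moment
  have hVar1le : variance W1 P ≤ ∫ ω, (W1 ω)^2 ∂P := by
    have h := variance_le_expectation_sq (μ := P) hW1meas.aestronglyMeasurable
    have he : P[W1 ^ 2] = ∫ ω, (W1 ω)^2 ∂P := by
      apply integral_congr_ae; filter_upwards with ω; simp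
    rwa [he] at h
  -- second moment bound for W1
  have hMfac : ∀ b : Bool, |(if b then δ else 1)/(δ * p + 1 - p)| ≤ (max δ 1)/(δ * p + 1 - p) := by
    intro b
    rw [abs_div, abs_of_pos he0]
    have hnum : |(if b then δ else 1 : ℝ)| ≤ max δ 1 := by
      cases b
      · simpa using le_max_right δ 1
      · rw [if_pos rfl, abs_of_pos hδ]; exact le_max_left δ 1
    gcongr
  have hsq : ∫ ω, (W1 ω)^2 ∂P
      ≤ bu^2 * ((δ^2 * p + (1 - p))/(δ * p + 1 - p)^2)^T := by
    have hle : ∀ ω, (W1 ω)^2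
        ≤ (∏ t, ((if A t ω then δ else 1)/(δ * p + 1 - p))^2) * bu^2 := by
      intro ω
      have hy : (f (fun s => A s ω) (U ω))^2 ≤ bu^2 := by
        have := abs_le.mp (hfbd (fun s => A s ω) (U ω))
        nlinarith
      have hpn : (0:ℝ) ≤ ∏ t, ((if A t ω then δ else 1)/(δ * p + 1 - p))^2 :=
        Finset.prod_nonneg fun t _ => sq_nonneg _
      calc (W1 ω)^2 = (∏ t, ((if A t ω then δ else 1)/(δ * p + 1 - p))^2)
            * (f (fun s => A s ω) (U ω))^2 := by
            rw [hW1def, mul_pow, ← Finset.prod_pow]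
        _ ≤ _ := mul_le_mul_of_nonneg_left hy hpn
    have hInt1 : Integrable (fun ω => (W1 ω)^2) P := by
      have := (MemLp.of_bound hW1meas.aestronglyMeasurable
        (((max δ 1)/(δ * p + 1 - p))^T * bu) (Filter.Eventually.of_forall fun ω => by
          rw [Real.norm_eq_abs, hW1def]
          rw [abs_mul]
          have h1 : |∏ t, (if A t ω then δ else 1)/(δ * p + 1 - p)|
              ≤ ((max δ 1)/(δ * p + 1 - p))^T := by
            rw [Finset.abs_prod]
            calc (∏ t, |(if A t ω then δ else 1)/(δ * p + 1 - p)|)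
                ≤ ∏ t : Fin T, (max δ 1)/(δ * p + 1 - p) :=
                  Finset.prod_le_prod (fun t _ => abs_nonneg _) (fun t _ => hMfac _)
              _ = _ := by rw [Finset.prod_const, Finset.card_univ, Fintype.card_fin]
          have h2 : |f (fun s => A s ω) (U ω)| ≤ bu := hfbd _ _
          have h3 : (0:ℝ) ≤ |f (fun s => A s ω) (U ω)| := abs_nonneg _
          have h4 : (0:ℝ) ≤ ((max δ 1)/(δ * p + 1 - p))^T := by positivity
          nlinarith) : MemLp W1 2 P).integrable_sq
      apply this.congr
      filter_upwards with ω; simp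
    have hInt2 : Integrable
        (fun ω => (∏ t, ((if A t ω then δ else 1)/(δ * p + 1 - p))^2) * bu^2) P := by
      apply Integrable.mono' (integrable_const ((((max δ 1)/(δ * p + 1 - p))^2)^T * bu^2))
      · exact ((Finset.measurable_prod _ fun t _ =>
          (measurable_of_countable
            (fun b : Bool => ((if b then δ else 1)/(δ * p + 1 - p))^2)).comp
            (hAmeas t)).mul measurable_const).aestronglyMeasurable
      · filter_upwards with ω
        rw [Real.norm_eq_abs, abs_mul, abs_of_nonneg (sq_nonneg bu)]
        have h1 : |∏ t, ((if A t ω then δ else 1)/(δ * p + 1 - p))^2|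
            ≤ (((max δ 1)/(δ * p + 1 - p))^2)^T := by
          rw [Finset.abs_prod]
          calc (∏ t, |((if A t ω then δ else 1)/(δ * p + 1 - p))^2|)
              ≤ ∏ t : Fin T, ((max δ 1)/(δ * p + 1 - p))^2 :=
                Finset.prod_le_prod (fun t _ => abs_nonneg _) (fun t _ => by
                  rw [abs_of_nonneg (sq_nonneg _), ← sq_abs]
                  exact pow_le_pow_left₀ (abs_nonneg _) (hMfac _) 2)
            _ = _ := by rw [Finset.prod_const, Finset.card_univ, Fintype.card_fin]
        have h4 : (0:ℝ) ≤ bu^2 := sq_nonneg bu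
        nlinarith
    calc ∫ ω, (W1 ω)^2 ∂P
        ≤ ∫ ω, (∏ t, ((if A t ω then δ else 1)/(δ * p + 1 - p))^2) * bu^2 ∂P :=
          integral_mono hInt1 hInt2 hle
      _ = (∫ ω, ∏ t, ((if A t ω then δ else 1)/(δ * p + 1 - p))^2 ∂P) * bu^2 :=
          integral_mul_const _ _
      _ = bu^2 * ((δ^2 * p + (1 - p))/(δ * p + 1 - p)^2)^T := by
          rw [hprod (fun b => ((if b then δ else 1)/(δ * p + 1 - p))^2)]
          have hval : ((if (true : Bool) then δ else 1)/(δ * p + 1 - p))^2 * p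
              + ((if (false : Bool) then δ else 1)/(δ * p + 1 - p))^2 * (1 - p)
              = (δ^2 * p + (1 - p))/(δ * p + 1 - p)^2 := by
            simp only [if_true, Bool.false_eq_true, if_false]
            field_simp
          rw [hval, mul_comm]
  -- final arithmetic
  have hEpos : 0 < ((δ^2 * p + (1 - p))/(δ * p + 1 - p)^2)^T := by
    have hnum : 0 < δ^2 * p + (1 - p) := by nlinarith
    exact pow_pos (div_pos hnum (by positivity)) T
  have hs1 : (1 - p)^T < 1 := pow_lt_one₀ hq0.le (by linarith) (by omega)
  obtain ⟨hD, hmain⟩ := arith_core T bu m2 μ0 ((1-p)^T)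
    (((δ^2 * p + (1 - p))/(δ * p + 1 - p)^2)^T) c (variance W1 P) hbu hY2 hμ0sq
    (by positivity) hs1 hEpos (variance_nonneg _ _) (le_trans hVar1le hsq) hc
  have hpow : (1/(1-p))^T = 1/(1-p)^T := by
    rw [one_div, one_div, inv_pow]
  have hK : ((δ^2 * p * (1 - p) + (1 - p)^2)/(δ * p + 1 - p)^2)^T
      = (1-p)^T * ((δ^2 * p + (1 - p))/(δ * p + 1 - p)^2)^T := by
    rw [← mul_pow]
    congr 1
    field_simp
  constructor
  · rw [hVar0, hpow]; exact hD
  · rw [hVar0, hpow, hK]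
    exact hmain
end
end

section
/- In the simplified infinite-time-horizon setting, suppose δ > 1 and E[(Y^{1̄})²] > 0, and set c₁ = E[(Y^{1̄})²]/b_u². If T satisfies ((δ²p + 1 − p)/(δp + 1 − p)²)^T − c₁/p^T + 2 < 0, then Var(ψ̂_inc) < Var(ψ̂_at). Moreover, for any fixed δ > 1, p ∈ (0,1) and c₁ > 0, since (δ²p + 1 − p)/(δp + 1 − p)² < 1/p, there exists a finite integer T_min such that this numeric inequality (and hence the variance comparison, in any such model with that value of c₁) holds for every T > T_min. -/
open MeasureTheory ProbabilityTheory

noncomputable section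

lemma my_integrable_of_bdd {Ω : Type*} [MeasurableSpace Ω] {P : Measure Ω} [IsProbabilityMeasure P]
    {g : Ω → ℝ} (hg : Measurable g) (C : ℝ) (h : ∀ ω, |g ω| ≤ C) : Integrable g P := by
  have := memLp_of_bounded (μ := P) (f := g)
    (ae_of_all _ fun ω => Set.mem_Icc.2 ⟨neg_le_of_abs_le (h ω), le_of_abs_le (h ω)⟩)
    hg.aestronglyMeasurable 1
  exact memLp_one_iff_integrable.mp this

lemma my_integral_prod {Ω ι : Type*} [MeasurableSpace Ω] {P : Measure Ω} [IsProbabilityMeasure P]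
    (g : ι → Ω → ℝ) (hg : ∀ i, Measurable (g i))
    (hind : iIndepFun (m := fun _ => (inferInstance : MeasurableSpace ℝ)) g P) (s : Finset ι) :
    ∫ ω, ∏ i ∈ s, g i ω ∂P = ∏ i ∈ s, ∫ ω, g i ω ∂P := by
  classical
  induction s using Finset.induction with
  | empty => simp
  | @insert a s ha ih =>
    have hmprod : Measurable (∏ j ∈ s, g j) := by
      rw [show (∏ j ∈ s, g j) = fun ω => ∏ j ∈ s, g j ω from funext fun ω => by
        simp [Finset.prod_apply]]
      exact Finset.measurable_prod s fun i _ => hg i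
    have hIndep : IndepFun (g a) (∏ j ∈ s, g j) P :=
      (hind.indepFun_finsetProd_of_notMem hg ha).symm
    have hmul := hIndep.integral_mul_eq_mul_integral (hg a).aestronglyMeasurable hmprod.aestronglyMeasurable
    calc ∫ ω, ∏ i ∈ insert a s, g i ω ∂P
        = ∫ ω, (g a * ∏ j ∈ s, g j) ω ∂P := by
          congr 1; funext ω; simp [Finset.prod_insert ha, Finset.prod_apply]
      _ = (∫ ω, g a ω ∂P) * ∫ ω, (∏ j ∈ s, g j) ω ∂P := hmul
      _ = (∫ ω, g a ω ∂P) * ∫ ω, ∏ j ∈ s, g j ω ∂P := by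
          congr 1; congr 1; funext ω; simp [Finset.prod_apply]
      _ = ∏ i ∈ insert a s, ∫ ω, g i ω ∂P := by rw [ih, Finset.prod_insert ha]

lemma my_integral_bool {Ω : Type*} [MeasurableSpace Ω] {P : Measure Ω} [IsProbabilityMeasure P]
    {p : ℝ} (hp0 : 0 ≤ p) (X : Ω → Bool) (hX : Measurable X)
    (hXp : P {ω | X ω = true} = ENNReal.ofReal p) (φ : Bool → ℝ) :
    ∫ ω, φ (X ω) ∂P = p * φ true + (1 - p) * φ false := by
  have hs : MeasurableSet {ω | X ω = true} := hX (measurableSet_singleton true)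
  have h1 : (fun ω => φ (X ω)) = fun ω =>
      φ false + Set.indicator {ω | X ω = true} (fun _ => φ true - φ false) ω := by
    funext ω
    by_cases h : X ω = true
    · simp [h, Set.indicator_of_mem, Set.mem_setOf_eq]
    · simp only [Bool.not_eq_true] at h
      simp [h, Set.indicator_of_notMem, Set.mem_setOf_eq]
  rw [h1, integral_add (integrable_const _)
      ((integrable_const _).indicator hs), integral_const, integral_indicator_const _ hs,
      measureReal_def, measureReal_def, hXp, ENNReal.toReal_ofReal hp0]
  simp; ring


def psi {E : Type} (T : ℕ) (φ : Bool → ℝ) (g0 : E → ℝ) : (i : Option (Fin T)) → Cod E T i → ℝ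
  | none => g0
  | some _ => φ

lemma psi_meas {E : Type} [MeasurableSpace E] (T : ℕ) (φ : Bool → ℝ) (g0 : E → ℝ)
    (hg0 : Measurable g0) : ∀ i, Measurable[CodMeas E T i] (psi T φ g0 i) := by
  intro i
  cases i with
  | none => exact hg0
  | some t => exact measurable_from_top

lemma key_integral {Ω : Type*} {E : Type} [MeasurableSpace Ω] [MeasurableSpace E]
    {P : Measure Ω} [IsProbabilityMeasure P] {T : ℕ} {p : ℝ} (hp0 : 0 ≤ p)
    (A : Fin T → Ω → Bool) (U : Ω → E)
    (hAmeas : ∀ t, Measurable (A t)) (hUmeas : Measurable U)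
    (hindep : iIndepFun (m := fun i => CodMeas E T i) (fam T A U) P)
    (hAp : ∀ t, P {ω | A t ω = true} = ENNReal.ofReal p)
    (φ : Bool → ℝ) (g0 : E → ℝ) (hg0 : Measurable g0) :
    ∫ ω, (∏ t, φ (A t ω)) * g0 (U ω) ∂P
      = (p * φ true + (1 - p) * φ false) ^ T * ∫ ω, g0 (U ω) ∂P := by
  have hgm : ∀ i, Measurable fun ω => psi T φ g0 i (fam T A U i ω) := by
    intro i
    cases i with
    | none => exact hg0.comp hUmeas
    | some t => exact measurable_from_top.comp (hAmeas t)
  have hind2 : iIndepFun (m := fun _ => (inferInstance : MeasurableSpace ℝ))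
      (fun i => psi T φ g0 i ∘ fam T A U i) P := hindep.comp (psi T φ g0) (psi_meas T φ g0 hg0)
  have h1 : ∫ ω, ∏ i : Option (Fin T), (psi T φ g0 i ∘ fam T A U i) ω ∂P
      = ∏ i : Option (Fin T), ∫ ω, (psi T φ g0 i ∘ fam T A U i) ω ∂P :=
    my_integral_prod _ hgm hind2 Finset.univ
  have h2 : (fun ω => (∏ t, φ (A t ω)) * g0 (U ω))
      = fun ω => ∏ i : Option (Fin T), (psi T φ g0 i ∘ fam T A U i) ω := by
    funext ω
    rw [Fintype.prod_option]
    have : (psi T φ g0 none ∘ fam T A U none) ω = g0 (U ω) := rfl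
    rw [this, mul_comm]
    rfl
  have h3 : ∀ t : Fin T, t ∈ Finset.univ →
      ∫ ω, (psi T φ g0 (some t) ∘ fam T A U (some t)) ω ∂P
        = p * φ true + (1 - p) * φ false := fun t _ =>
    my_integral_bool hp0 (A t) (hAmeas t) (hAp t) φ
  rw [h2, h1, Fintype.prod_option, Finset.prod_congr rfl h3, Finset.prod_const,
    Finset.card_univ, Fintype.card_fin, mul_comm]
  congr 1

/-- Minimum number of timepoints for the incremental estimator to dominate the always-treated
IPW estimator: with `c₁ = E[(Y^{1̄})²]/b_u²`, if
`((δ²p + 1 − p)/(δp + 1 − p)²)^T − c₁/p^T + 2 < 0` then `Var(ψ̂_inc) < Var(ψ̂_at)`.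
Moreover `(δ²p + 1 − p)/(δp + 1 − p)² < 1/p`, so for any `c₁ > 0` there is a finite `T_min`
such that the numeric inequality holds for every `T > T_min`. -/
theorem variance_comparison_Tmin
    {Ω : Type*} {E : Type} [MeasurableSpace Ω] [MeasurableSpace E]
    (P : Measure Ω) [IsProbabilityMeasure P]
    (T : ℕ) (hT : 1 ≤ T)
    (p : ℝ) (hp : p ∈ Set.Ioo (0:ℝ) 1)
    (A : Fin T → Ω → Bool) (U : Ω → E)
    (hAmeas : ∀ t, Measurable (A t)) (hUmeas : Measurable U)
    (hindep : iIndepFun (m := fun i => CodMeas E T i) (fam T A U) P)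
    (hAp : ∀ t, P {ω | A t ω = true} = ENNReal.ofReal p)
    (f : (Fin T → Bool) → E → ℝ)
    (hf : Measurable (fun q : (Fin T → Bool) × E => f q.1 q.2))
    (bu : ℝ) (hbu : 0 < bu) (hfbd : ∀ a e, |f a e| ≤ bu)
    (δ : ℝ) (hδ : 1 < δ)
    (hY2 : 0 < ∫ ω, (f (fun _ => true) (U ω)) ^ 2 ∂P) :
    (((δ ^ 2 * p + (1 - p)) / (δ * p + 1 - p) ^ 2) ^ T
        - ((∫ ω, (f (fun _ => true) (U ω)) ^ 2 ∂P) / bu ^ 2) / p ^ T + 2 < 0 →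
      variance (fun ω =>
          (∏ t, (if A t ω then δ else 1) / (δ * p + 1 - p)) * f (fun s => A s ω) (U ω)) P
        < variance (fun ω =>
            (∏ t, (if A t ω then (1:ℝ) else 0) / p) * f (fun s => A s ω) (U ω)) P)
    ∧ (δ ^ 2 * p + (1 - p)) / (δ * p + 1 - p) ^ 2 < 1 / p
    ∧ ∀ c₁ : ℝ, 0 < c₁ → ∃ Tmin : ℕ, ∀ T' : ℕ, Tmin < T' →
        ((δ ^ 2 * p + (1 - p)) / (δ * p + 1 - p) ^ 2) ^ T' - c₁ / p ^ T' + 2 < 0 := by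
  obtain ⟨hp0, hp1⟩ := hp
  have hd : 0 < δ * p + 1 - p := by nlinarith
  set r : ℝ := (δ ^ 2 * p + (1 - p)) / (δ * p + 1 - p) ^ 2 with hr_def
  have hr0 : 0 < r := by
    apply div_pos (by nlinarith) (by positivity)
  have part2 : r < 1 / p := by
    rw [hr_def, div_lt_div_iff₀ (by positivity) hp0]
    nlinarith [mul_pos (sub_pos.2 hp1) hp0, mul_pos (sub_pos.2 hδ) hp0]
  have hrp1 : r * p < 1 := by
    have := (lt_div_iff₀ hp0).mp part2
    linarith
  have part3 : ∀ c₁ : ℝ, 0 < c₁ → ∃ Tmin : ℕ, ∀ T' : ℕ, Tmin < T' →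
      r ^ T' - c₁ / p ^ T' + 2 < 0 := by
    intro c₁ hc₁
    have h1 : Filter.Tendsto (fun n : ℕ => (r * p) ^ n + 2 * p ^ n) Filter.atTop (nhds 0) := by
      have ha := tendsto_pow_atTop_nhds_zero_of_lt_one
        (mul_nonneg hr0.le hp0.le) hrp1
      have hb := (tendsto_pow_atTop_nhds_zero_of_lt_one hp0.le hp1).const_mul 2
      simpa using ha.add hb
    have h2 : ∀ᶠ n : ℕ in Filter.atTop, (r * p) ^ n + 2 * p ^ n < c₁ :=
      h1.eventually_lt_const hc₁
    obtain ⟨N, hN⟩ := Filter.eventually_atTop.mp h2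
    refine ⟨N, fun T' hT' => ?_⟩
    have hkey := hN T' (le_of_lt hT')
    have hpT : (0:ℝ) < p ^ T' := pow_pos hp0 _
    rw [show r ^ T' - c₁ / p ^ T' + 2 = (r ^ T' + 2) - c₁ / p ^ T' by ring, sub_neg,
      lt_div_iff₀ hpT]
    calc (r ^ T' + 2) * p ^ T' = (r * p) ^ T' + 2 * p ^ T' := by rw [mul_pow]; ring
      _ < c₁ := hkey
  refine ⟨?_, part2, part3⟩
  intro hcond
  classical
  have hpne : p ≠ 0 := ne_of_gt hp0
  have hdne : δ * p + 1 - p ≠ 0 := ne_of_gt hd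
  set I : ℝ := ∫ ω, (f (fun _ => true) (U ω)) ^ 2 ∂P with hI_def
  set atf : Ω → ℝ := fun ω =>
    (∏ t, (if A t ω then (1:ℝ) else 0) / p) * f (fun s => A s ω) (U ω) with hatf_def
  set incf : Ω → ℝ := fun ω =>
    (∏ t, (if A t ω then δ else 1) / (δ * p + 1 - p)) * f (fun s => A s ω) (U ω) with hincf_def
  -- measurability
  have hYm : Measurable fun ω => f (fun s => A s ω) (U ω) :=
    hf.comp ((measurable_pi_lambda _ fun s => hAmeas s).prodMk hUmeas)
  have hVm : Measurable fun ω => ∏ t, (if A t ω then (1:ℝ) else 0) / p :=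
    Finset.measurable_prod _ fun t _ =>
      (measurable_from_top (f := fun b : Bool => (if b then (1:ℝ) else 0) / p)).comp (hAmeas t)
  have hWm : Measurable fun ω => ∏ t, (if A t ω then δ else 1) / (δ * p + 1 - p) :=
    Finset.measurable_prod _ fun t _ =>
      (measurable_from_top
        (f := fun b : Bool => (if b then δ else 1) / (δ * p + 1 - p))).comp (hAmeas t)
  have hatm : Measurable atf := hVm.mul hYm
  have hincm : Measurable incf := hWm.mul hYm
  -- pointwise nonnegativity and bounds of the weight products
  have hVnn : ∀ ω, 0 ≤ ∏ t, (if A t ω then (1:ℝ) else 0) / p :=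
    fun ω => Finset.prod_nonneg fun t _ => by positivity
  have hWnn : ∀ ω, 0 ≤ ∏ t, (if A t ω then δ else 1) / (δ * p + 1 - p) :=
    fun ω => Finset.prod_nonneg fun t _ => by
      apply div_nonneg _ hd.le
      split <;> linarith
  have hVle : ∀ ω, ∏ t, (if A t ω then (1:ℝ) else 0) / p ≤ (1 / p) ^ T := by
    intro ω
    calc ∏ t, (if A t ω then (1:ℝ) else 0) / p ≤ ∏ _t : Fin T, 1 / p := by
          apply Finset.prod_le_prod (fun t _ => by positivity) (fun t _ => by
            gcongr
            split <;> norm_num)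
      _ = (1 / p) ^ T := by rw [Finset.prod_const, Finset.card_univ, Fintype.card_fin]
  have hWle : ∀ ω, ∏ t, (if A t ω then δ else 1) / (δ * p + 1 - p)
      ≤ (δ / (δ * p + 1 - p)) ^ T := by
    intro ω
    calc ∏ t, (if A t ω then δ else 1) / (δ * p + 1 - p)
        ≤ ∏ _t : Fin T, δ / (δ * p + 1 - p) := by
          apply Finset.prod_le_prod (fun t _ => by
              apply div_nonneg _ hd.le
              split <;> linarith)
            (fun t _ => by
              gcongr
              split <;> linarith)
      _ = (δ / (δ * p + 1 - p)) ^ T := by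
          rw [Finset.prod_const, Finset.card_univ, Fintype.card_fin]
  -- global bounds
  have hYbd : ∀ ω, |f (fun s => A s ω) (U ω)| ≤ bu := fun ω => hfbd _ _
  have hat_bd : ∀ ω, |atf ω| ≤ (1 / p) ^ T * bu := by
    intro ω
    rw [hatf_def, abs_mul, abs_of_nonneg (hVnn ω)]
    exact mul_le_mul (hVle ω) (hYbd ω) (abs_nonneg _) (by positivity)
  have hinc_bd : ∀ ω, |incf ω| ≤ (δ / (δ * p + 1 - p)) ^ T * bu := by
    intro ω
    rw [hincf_def, abs_mul, abs_of_nonneg (hWnn ω)]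
    refine mul_le_mul (hWle ω) (hYbd ω) (abs_nonneg _) ?_
    positivity
  -- Memℒp
  have hat_m2 : MemLp atf 2 P :=
    memLp_of_bounded (ae_of_all _ fun ω => Set.mem_Icc.2
      ⟨neg_le_of_abs_le (hat_bd ω), le_of_abs_le (hat_bd ω)⟩) hatm.aestronglyMeasurable 2
  -- second moment of atf
  have hat_sq : ∀ ω, atf ω ^ 2
      = (∏ t, (fun b : Bool => (if b then (1:ℝ) else 0) / p ^ 2) (A t ω))
        * (fun e => (f (fun _ => true) e) ^ 2) (U ω) := by
    intro ω
    simp only [hatf_def]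
    by_cases hall : ∀ t, A t ω = true
    · have hA1 : (fun s => A s ω) = fun _ => true := funext hall
      rw [hA1]
      have e1 : ∀ t ∈ Finset.univ, (if A t ω then (1:ℝ) else 0) / p = 1 / p :=
        fun t _ => by rw [hall t]; simp
      have e2 : ∀ t ∈ Finset.univ,
          (fun b : Bool => (if b then (1:ℝ) else 0) / p ^ 2) (A t ω) = 1 / p ^ 2 :=
        fun t _ => by rw [hall t]; simp
      rw [Finset.prod_congr rfl e1, Finset.prod_congr rfl e2, Finset.prod_const,
        Finset.prod_const, Finset.card_univ, Fintype.card_fin]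
      rw [mul_pow, pow_right_comm, div_pow, one_pow]
    · obtain ⟨t0, ht0⟩ := not_forall.mp hall
      have hf0 : A t0 ω = false := by simpa using ht0
      rw [Finset.prod_eq_zero (Finset.mem_univ t0) (by simp [hf0]),
        Finset.prod_eq_zero (Finset.mem_univ t0) (by simp [hf0])]
      simp
  have hIat2 : ∫ ω, atf ω ^ 2 ∂P = (1 / p) ^ T * I := by
    have hkey := key_integral hp0.le A U hAmeas hUmeas hindep hAp
      (fun b : Bool => (if b then (1:ℝ) else 0) / p ^ 2)
      (fun e => (f (fun _ => true) e) ^ 2) (by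
        exact (hf.comp (measurable_const.prodMk measurable_id)).pow_const 2)
    rw [show (fun ω => atf ω ^ 2) = fun ω =>
        (∏ t, (fun b : Bool => (if b then (1:ℝ) else 0) / p ^ 2) (A t ω))
          * (fun e => (f (fun _ => true) e) ^ 2) (U ω) from funext hat_sq]
    rw [hkey]
    have : p * ((if (true : Bool) then (1:ℝ) else 0) / p ^ 2)
        + (1 - p) * ((if (false : Bool) then (1:ℝ) else 0) / p ^ 2) = 1 / p := by
      simp
      field_simp
    rw [this, hI_def]
  -- first moment bound of atf
  have hat_mean : |∫ ω, atf ω ∂P| ≤ bu := by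
    have hdommeas : Measurable (fun ω =>
        (∏ t, (fun b : Bool => (if b then (1:ℝ) else 0) / p) (A t ω)) * bu) :=
      (Finset.measurable_prod _ fun t _ =>
          (measurable_from_top (f := fun b : Bool => (if b then (1:ℝ) else 0) / p)).comp
            (hAmeas t)).mul_const bu
    have hdom : Integrable (fun ω =>
        (∏ t, (fun b : Bool => (if b then (1:ℝ) else 0) / p) (A t ω)) * bu) P := by
      refine my_integrable_of_bdd hdommeas ((1 / p) ^ T * bu) fun ω => ?_
      have h1 : (∏ t, (fun b : Bool => (if b then (1:ℝ) else 0) / p) (A t ω))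
          = ∏ t, (if A t ω then (1:ℝ) else 0) / p := rfl
      rw [h1, abs_mul, abs_of_nonneg (hVnn ω), abs_of_nonneg hbu.le]
      exact mul_le_mul_of_nonneg_right (hVle ω) hbu.le
    have habs : |∫ ω, atf ω ∂P| ≤ ∫ ω, |atf ω| ∂P := by
      simpa [Real.norm_eq_abs] using norm_integral_le_integral_norm (μ := P) atf
    calc |∫ ω, atf ω ∂P| ≤ ∫ ω, |atf ω| ∂P := habs
      _ ≤ ∫ ω, (∏ t, (fun b : Bool => (if b then (1:ℝ) else 0) / p) (A t ω)) * bu ∂P := by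
          refine integral_mono_of_nonneg (ae_of_all _ fun ω => abs_nonneg _) hdom
            (ae_of_all _ fun ω => ?_)
          simp only [hatf_def]
          rw [abs_mul, abs_of_nonneg (hVnn ω)]
          exact mul_le_mul_of_nonneg_left (hYbd ω) (hVnn ω)
      _ = bu := by
          have hkey := key_integral hp0.le A U hAmeas hUmeas hindep hAp
            (fun b : Bool => (if b then (1:ℝ) else 0) / p) (fun _ => bu) measurable_const
          rw [show (fun ω => (∏ t, (fun b : Bool => (if b then (1:ℝ) else 0) / p) (A t ω)) * bu)
              = fun ω => (∏ t, (fun b : Bool => (if b then (1:ℝ) else 0) / p) (A t ω))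
                * (fun _ : E => bu) (U ω) from rfl, hkey]
          have : p * ((if (true : Bool) then (1:ℝ) else 0) / p)
              + (1 - p) * ((if (false : Bool) then (1:ℝ) else 0) / p) = 1 := by
            simp
            field_simp
          rw [this, one_pow, one_mul]
          simp
  -- variance of atf from below
  have hVat : (1 / p) ^ T * I - bu ^ 2 ≤ variance atf P := by
    rw [variance_eq_sub hat_m2]
    have h1 : P[atf ^ 2] = (1 / p) ^ T * I := by
      rw [← hIat2]
      congr 1
    have h2 : (P[atf]) ^ 2 ≤ bu ^ 2 :=
      sq_le_sq' (neg_le_of_abs_le hat_mean) (le_of_abs_le hat_mean)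
    rw [h1]
    linarith
  -- variance of incf from above
  have hinc_sq_le : ∀ ω, incf ω ^ 2
      ≤ (∏ t, (fun b : Bool => ((if b then δ else 1) / (δ * p + 1 - p)) ^ 2) (A t ω))
        * (fun _ : E => bu ^ 2) (U ω) := by
    intro ω
    simp only [hincf_def]
    rw [mul_pow, ← Finset.prod_pow]
    have h2 : (f (fun s => A s ω) (U ω)) ^ 2 ≤ bu ^ 2 :=
      sq_le_sq' (by linarith [(abs_le.mp (hYbd ω)).1]) ((abs_le.mp (hYbd ω)).2)
    exact mul_le_mul_of_nonneg_left h2 (Finset.prod_nonneg fun t _ => sq_nonneg _)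
  have hdom2 : Integrable (fun ω =>
      (∏ t, (fun b : Bool => ((if b then δ else 1) / (δ * p + 1 - p)) ^ 2) (A t ω))
        * (fun _ : E => bu ^ 2) (U ω)) P := by
    have hmeas2 : Measurable (fun ω =>
        (∏ t, (fun b : Bool => ((if b then δ else 1) / (δ * p + 1 - p)) ^ 2) (A t ω))
          * (fun _ : E => bu ^ 2) (U ω)) :=
      (Finset.measurable_prod _ fun t _ =>
        (measurable_from_top
          (f := fun b : Bool => ((if b then δ else 1) / (δ * p + 1 - p)) ^ 2)).comp
          (hAmeas t)).mul_const _
    refine my_integrable_of_bdd hmeas2 (((δ / (δ * p + 1 - p)) ^ T) ^ 2 * bu ^ 2) fun ω => ?_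
    · have hprod : (∏ t, (fun b : Bool => ((if b then δ else 1) / (δ * p + 1 - p)) ^ 2) (A t ω))
          = (∏ t, (if A t ω then δ else 1) / (δ * p + 1 - p)) ^ 2 := by
        rw [← Finset.prod_pow]
      rw [abs_mul, hprod, abs_of_nonneg (sq_nonneg _), abs_of_nonneg (sq_nonneg _)]
      exact mul_le_mul_of_nonneg_right
        (pow_le_pow_left₀ (hWnn ω) (hWle ω) 2) (sq_nonneg _)
  have hVinc : variance incf P ≤ r ^ T * bu ^ 2 := by
    have h0 : variance incf P ≤ P[incf ^ 2] :=
      variance_le_expectation_sq hincm.aestronglyMeasurable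
    have h1 : P[incf ^ 2] = ∫ ω, incf ω ^ 2 ∂P := by congr 1
    have h2 : ∫ ω, incf ω ^ 2 ∂P
        ≤ ∫ ω, (∏ t, (fun b : Bool => ((if b then δ else 1) / (δ * p + 1 - p)) ^ 2) (A t ω))
            * (fun _ : E => bu ^ 2) (U ω) ∂P :=
      integral_mono_of_nonneg (ae_of_all _ fun ω => sq_nonneg _) hdom2
        (ae_of_all _ hinc_sq_le)
    have hkey := key_integral hp0.le A U hAmeas hUmeas hindep hAp
      (fun b : Bool => ((if b then δ else 1) / (δ * p + 1 - p)) ^ 2)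
      (fun _ : E => bu ^ 2) measurable_const
    have hconst : p * (((if (true : Bool) then δ else 1) / (δ * p + 1 - p)) ^ 2)
        + (1 - p) * (((if (false : Bool) then δ else 1) / (δ * p + 1 - p)) ^ 2) = r := by
      rw [hr_def]
      simp
      field_simp
    rw [hkey, hconst] at h2
    have h3 : (∫ ω, (fun _ : E => bu ^ 2) (U ω) ∂P) = bu ^ 2 := by simp
    rw [h3] at h2
    linarith
  -- conclude
  have hbu2 : (0:ℝ) < bu ^ 2 := by positivity
  have hpT : (0:ℝ) < p ^ T := pow_pos hp0 _
  have hcast : (I / bu ^ 2) / p ^ T * bu ^ 2 = (1 / p) ^ T * I := by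
    rw [one_div_pow]
    field_simp
  have hc1 : r ^ T + 2 < (I / bu ^ 2) / p ^ T := by linarith
  have hc2 : (r ^ T + 2) * bu ^ 2 < (I / bu ^ 2) / p ^ T * bu ^ 2 :=
    mul_lt_mul_of_pos_right hc1 hbu2
  rw [hcast] at hc2
  have : r ^ T * bu ^ 2 < (1 / p) ^ T * I - 2 * bu ^ 2 := by nlinarith
  calc variance incf P ≤ r ^ T * bu ^ 2 := hVinc
    _ < (1 / p) ^ T * I - bu ^ 2 := by nlinarith
    _ ≤ variance atf P := hVat
end
end

section
/- In the simplified infinite-time-horizon setting, for every δ > 0 the variance of the incremental-effect IPW estimator admits the lower bound Var(ψ̂_inc) ≥ Σ_{ā ∈ {0,1}^T} (∏_{t=1}^T (1{a_t = 1}·δ²p + 1{a_t = 0}·(1 − p))/(δp + 1 − p)²)·E[(Y^ā)²] − b_u², obtained from the exact second-moment decomposition together with the bound (E[ψ̂_inc])² ≤ b_u². -/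
open MeasureTheory ProbabilityTheory

noncomputable section

lemma myIntegrable_of_abs_le {Ω : Type*} [MeasurableSpace Ω] {P : Measure Ω} [IsFiniteMeasure P]
    {g : Ω → ℝ} (hg : Measurable g) {C : ℝ} (h : ∀ ω, |g ω| ≤ C) : Integrable g P :=
  ⟨hg.aestronglyMeasurable,
    HasFiniteIntegral.of_bounded (C := C) (Filter.Eventually.of_forall (by
      simpa [Real.norm_eq_abs] using h))⟩

lemma myIntegral_finset_prod {ι Ω : Type*} [MeasurableSpace Ω] {P : Measure Ω}
    [IsProbabilityMeasure P] {F : ι → Ω → ℝ}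
    (hind : iIndepFun (m := fun _ => (inferInstance : MeasurableSpace ℝ)) F P)
    (hmeas : ∀ i, Measurable (F i)) (C : ι → ℝ) (hC : ∀ i, 0 ≤ C i)
    (hbd : ∀ i ω, |F i ω| ≤ C i) (s : Finset ι) :
    ∫ ω, ∏ i ∈ s, F i ω ∂P = ∏ i ∈ s, ∫ ω, F i ω ∂P := by
  classical
  induction s using Finset.induction_on with
  | empty => simp
  | insert i s hi ih =>
    have hprodmeas : Measurable (fun ω => ∏ j ∈ s, F j ω) :=
      Finset.measurable_prod s (fun j _ => hmeas j)
    have hprodbd : ∀ ω, |∏ j ∈ s, F j ω| ≤ ∏ j ∈ s, C j := by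
      intro ω
      rw [Finset.abs_prod]
      exact Finset.prod_le_prod (fun j _ => abs_nonneg _) (fun j _ => hbd j ω)
    have h2 : Integrable (fun ω => ∏ j ∈ s, F j ω) P :=
      myIntegrable_of_abs_le hprodmeas hprodbd
    have h1 : Integrable (F i) P := myIntegrable_of_abs_le (hmeas i) (hbd i)
    have hIndep : IndepFun (F i) (∏ j ∈ s, F j) P :=
      (hind.indepFun_finsetProd_of_notMem hmeas hi).symm
    have h2' : Integrable (∏ j ∈ s, F j) P := by
      have : (∏ j ∈ s, F j) = fun ω => ∏ j ∈ s, F j ω := by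
        funext ω; simp [Finset.prod_apply]
      rw [this]; exact h2
    have key := hIndep.integral_mul_eq_mul_integral h1.aestronglyMeasurable h2'.aestronglyMeasurable
    have : (fun ω => ∏ j ∈ insert i s, F j ω) = (F i * ∏ j ∈ s, F j) := by
      funext ω; simp [Finset.prod_insert hi, Finset.prod_apply]
    rw [this, key, Finset.prod_insert hi, ← ih]
    congr 1
    have : (∏ j ∈ s, F j) = fun ω => ∏ j ∈ s, F j ω := by
      funext ω; simp [Finset.prod_apply]
    rw [this]


def gfun {E : Type} (T : ℕ) (a : Fin T → Bool) (k : E → ℝ) : ∀ i : Option (Fin T), Cod E T i → ℝ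
  | none => k
  | some t => fun b => if (show Bool from b) = a t then 1 else 0

lemma factor_one
    {Ω : Type*} {E : Type} [MeasurableSpace Ω] [MeasurableSpace E]
    (P : Measure Ω) [IsProbabilityMeasure P]
    (T : ℕ)
    (p : ℝ) (hp : p ∈ Set.Ioo (0:ℝ) 1)
    (A : Fin T → Ω → Bool) (U : Ω → E)
    (hAmeas : ∀ t, Measurable (A t)) (hUmeas : Measurable U)
    (hindep : iIndepFun (m := fun i => CodMeas E T i) (fam T A U) P)
    (hAp : ∀ t, P {ω | A t ω = true} = ENNReal.ofReal p)
    (a : Fin T → Bool) (k : E → ℝ) (hk : Measurable k)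
    (C : ℝ) (hC0 : 0 ≤ C) (hkb : ∀ e, |k e| ≤ C) :
    ∫ ω, (∏ t, (if A t ω = a t then (1:ℝ) else 0)) * k (U ω) ∂P
      = (∏ t, (if a t then p else 1 - p)) * ∫ ω, k (U ω) ∂P := by
  classical
  obtain ⟨hp0, hp1⟩ := hp
  have hind_int : ∀ (t : Fin T) (b : Bool),
      ∫ ω, (if A t ω = b then (1:ℝ) else 0) ∂P = (if b then p else 1 - p) := by
    intro t b
    have hset : MeasurableSet {ω | A t ω = b} := (hAmeas t) (measurableSet_singleton b)
    have h1 : (fun ω => if A t ω = b then (1:ℝ) else 0)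
        = Set.indicator {ω | A t ω = b} (fun _ => (1:ℝ)) := by
      funext ω; by_cases h : A t ω = b <;> simp [Set.indicator_apply, h]
    rw [h1, integral_indicator_const _ hset]
    cases b with
    | true => simp [measureReal_def, hAp t, ENNReal.toReal_ofReal hp0.le]
    | false =>
      have hsetT : MeasurableSet {ω | A t ω = true} := (hAmeas t) (measurableSet_singleton true)
      have hcompl : {ω | A t ω = false} = {ω | A t ω = true}ᶜ := by ext ω; simp
      have hle : ENNReal.ofReal p ≤ 1 := by
        rw [← ENNReal.ofReal_one]; exact ENNReal.ofReal_le_ofReal hp1.le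
      rw [hcompl, measureReal_def, measure_compl hsetT (measure_ne_top _ _), hAp t, measure_univ]
      simp [ENNReal.toReal_sub_of_le hle (by simp), ENNReal.toReal_ofReal hp0.le]
  have hg : ∀ i, Measurable (gfun T a k i) := by
    intro i
    match i with
    | none => exact hk
    | some t =>
      show Measurable (fun b : Bool => if b = a t then (1:ℝ) else 0)
      exact measurable_of_countable _
  have hFind : iIndepFun (m := fun _ => (inferInstance : MeasurableSpace ℝ))
      (fun i => gfun T a k i ∘ fam T A U i) P := hindep.comp _ hg
  have hFmeas : ∀ i, Measurable (gfun T a k i ∘ fam T A U i) := by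
    intro i
    match i with
    | none => exact hk.comp hUmeas
    | some t => exact (hg (some t)).comp (hAmeas t)
  have hFbd : ∀ i ω, |(gfun T a k i ∘ fam T A U i) ω|
      ≤ (fun i : Option (Fin T) => match i with | none => C | some _ => (1:ℝ)) i := by
    intro i ω
    match i with
    | none => exact hkb _
    | some t =>
      show |if A t ω = a t then (1:ℝ) else 0| ≤ 1
      by_cases h : A t ω = a t <;> simp [h]
  have hmain := myIntegral_finset_prod hFind hFmeas _
    (by intro i; match i with
        | none => exact hC0
        | some t => exact zero_le_one) hFbd Finset.univ
  have hLHS : (fun ω => (∏ t, (if A t ω = a t then (1:ℝ) else 0)) * k (U ω))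
      = fun ω => ∏ i, (gfun T a k i ∘ fam T A U i) ω := by
    funext ω
    rw [Fintype.prod_option (fun i => (gfun T a k i ∘ fam T A U i) ω)]
    show (∏ t, (if A t ω = a t then (1:ℝ) else 0)) * k (U ω)
      = k (U ω) * ∏ t, (if A t ω = a t then (1:ℝ) else 0)
    ring
  rw [hLHS, hmain, Fintype.prod_option (fun i => ∫ ω, (gfun T a k i ∘ fam T A U i) ω ∂P)]
  have h2 : ∀ t : Fin T,
      (∫ ω, (gfun T a k (some t) ∘ fam T A U (some t)) ω ∂P) = (if a t then p else 1 - p) := by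
    intro t
    show (∫ ω, (if A t ω = a t then (1:ℝ) else 0) ∂P) = _
    rw [hind_int t (a t)]
  rw [Finset.prod_congr rfl (fun t _ => h2 t)]
  show (∫ ω, k (U ω) ∂P) * _ = _
  ring

lemma key_decomp
    {Ω : Type*} {E : Type} [MeasurableSpace Ω] [MeasurableSpace E]
    (P : Measure Ω) [IsProbabilityMeasure P]
    (T : ℕ)
    (p : ℝ) (hp : p ∈ Set.Ioo (0:ℝ) 1)
    (A : Fin T → Ω → Bool) (U : Ω → E)
    (hAmeas : ∀ t, Measurable (A t)) (hUmeas : Measurable U)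
    (hindep : iIndepFun (m := fun i => CodMeas E T i) (fam T A U) P)
    (hAp : ∀ t, P {ω | A t ω = true} = ENNReal.ofReal p)
    (G : (Fin T → Bool) → E → ℝ) (hG : ∀ a, Measurable (G a))
    (hGb : ∀ a, ∃ C, 0 ≤ C ∧ ∀ e, |G a e| ≤ C) :
    ∫ ω, G (fun s => A s ω) (U ω) ∂P
      = ∑ a : Fin T → Bool, (∏ t, (if a t then p else 1 - p)) * ∫ ω, G a (U ω) ∂P := by
  classical
  have hpt : ∀ ω, G (fun s => A s ω) (U ω)
      = ∑ a : Fin T → Bool, (∏ t, (if A t ω = a t then (1:ℝ) else 0)) * G a (U ω) := by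
    intro ω
    rw [Finset.sum_eq_single (fun s => A s ω)]
    · simp
    · intro a _ hne
      obtain ⟨t, ht⟩ : ∃ t, A t ω ≠ a t := by
        by_contra h; push_neg at h
        exact hne (funext fun t => (h t).symm)
      have hz : (∏ t, (if A t ω = a t then (1:ℝ) else 0)) = 0 :=
        Finset.prod_eq_zero (Finset.mem_univ t) (by simp [ht])
      simp [hz]
    · intro h; exact absurd (Finset.mem_univ _) h
  have hstep : (fun ω => G (fun s => A s ω) (U ω))
      = fun ω => ∑ a : Fin T → Bool, (∏ t, (if A t ω = a t then (1:ℝ) else 0)) * G a (U ω) :=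
    funext hpt
  rw [hstep]
  have hGmeasU : ∀ a : Fin T → Bool, Measurable (fun ω => G a (U ω)) :=
    fun a => (hG a).comp hUmeas
  have hsummeas : ∀ a : Fin T → Bool,
      Measurable (fun ω => (∏ t, (if A t ω = a t then (1:ℝ) else 0)) * G a (U ω)) := by
    intro a
    exact (Finset.measurable_prod Finset.univ (fun t _ =>
      ((measurable_of_countable (fun b : Bool => if b = a t then (1:ℝ) else 0)).comp
        (hAmeas t)))).mul (hGmeasU a)
  have hsumint : ∀ a : Fin T → Bool,
      Integrable (fun ω => (∏ t, (if A t ω = a t then (1:ℝ) else 0)) * G a (U ω)) P := by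
    intro a
    obtain ⟨C, hC0, hC⟩ := hGb a
    refine myIntegrable_of_abs_le (hsummeas a) (C := C) ?_
    intro ω
    rw [abs_mul]
    calc |∏ t, (if A t ω = a t then (1:ℝ) else 0)| * |G a (U ω)|
        ≤ 1 * C := by
          apply mul_le_mul _ (hC _) (abs_nonneg _) zero_le_one
          rw [Finset.abs_prod]
          apply Finset.prod_le_one (fun t _ => abs_nonneg _)
          intro t _; by_cases h : A t ω = a t <;> simp [h]
      _ = C := one_mul C
  rw [integral_finset_sum _ (fun a _ => hsumint a)]
  apply Finset.sum_congr rfl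
  intro a _
  obtain ⟨C, hC0, hC⟩ := hGb a
  exact factor_one P T p hp A U hAmeas hUmeas hindep hAp a (G a) (hG a) C hC0 hC

/-- Lower bound on the variance of the incremental-effect IPW estimator, obtained from the
exact second-moment decomposition and the bound `(E[ψ̂_inc])² ≤ b_u²`:
`Var(ψ̂_inc) ≥ Σ_ā (∏_t (1{a_t=1}δ²p + 1{a_t=0}(1−p))/(δp+1−p)²)·E[(Y^ā)²] − b_u²`. -/
theorem inc_variance_lower_bound
    {Ω : Type*} {E : Type} [MeasurableSpace Ω] [MeasurableSpace E]
    (P : Measure Ω) [IsProbabilityMeasure P]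
    (T : ℕ) (hT : 1 ≤ T)
    (p : ℝ) (hp : p ∈ Set.Ioo (0:ℝ) 1)
    (A : Fin T → Ω → Bool) (U : Ω → E)
    (hAmeas : ∀ t, Measurable (A t)) (hUmeas : Measurable U)
    (hindep : iIndepFun (m := fun i => CodMeas E T i) (fam T A U) P)
    (hAp : ∀ t, P {ω | A t ω = true} = ENNReal.ofReal p)
    (f : (Fin T → Bool) → E → ℝ)
    (hf : Measurable (fun q : (Fin T → Bool) × E => f q.1 q.2))
    (bu : ℝ) (hbu : 0 < bu) (hfbd : ∀ a e, |f a e| ≤ bu)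
    (δ : ℝ) (hδ : 0 < δ) :
    variance (fun ω =>
        (∏ t, (if A t ω then δ else 1) / (δ * p + 1 - p)) * f (fun s => A s ω) (U ω)) P
      ≥ (∑ a : Fin T → Bool,
          (∏ t, (if a t then δ ^ 2 * p else 1 - p) / (δ * p + 1 - p) ^ 2) *
            ∫ ω, (f a (U ω)) ^ 2 ∂P) - bu ^ 2 := by
  classical
  obtain ⟨hp0, hp1⟩ := hp
  set D : ℝ := δ * p + 1 - p with hD_def
  have hD : 0 < D := by
    have : 0 < δ * p := mul_pos hδ hp0
    have : 0 < 1 - p := by linarith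
    simp only [hD_def]; nlinarith
  -- weights
  have hwnn : ∀ b : Bool, 0 ≤ (if b then δ else 1) / D := by
    intro b; apply div_nonneg _ hD.le; by_cases h : b <;> simp [h, hδ.le]
  -- the estimator
  set X : Ω → ℝ := fun ω =>
      (∏ t, (if A t ω then δ else 1) / D) * f (fun s => A s ω) (U ω) with hX_def
  -- per-profile constants
  have hcnn : ∀ a : Fin T → Bool, (0:ℝ) ≤ ∏ t, (if a t then δ else 1) / D :=
    fun a => Finset.prod_nonneg fun t _ => hwnn (a t)
  have hπnn : ∀ a : Fin T → Bool, (0:ℝ) ≤ ∏ t, (if a t then p else 1 - p) :=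
    fun a => Finset.prod_nonneg fun t _ => by by_cases h : a t <;> simp [h, hp0.le] <;> linarith
  -- measurability of sections
  have hfa : ∀ a : Fin T → Bool, Measurable (f a) :=
    fun a => hf.comp (measurable_const.prodMk measurable_id)
  -- first moment
  have hEX := key_decomp P T p ⟨hp0, hp1⟩ A U hAmeas hUmeas hindep hAp
    (fun a e => (∏ t, (if a t then δ else 1) / D) * f a e)
    (fun a => measurable_const.mul (hfa a))
    (fun a => ⟨(∏ t, (if a t then δ else 1) / D) * bu,
      mul_nonneg (hcnn a) hbu.le, fun e => by
        rw [abs_mul, abs_of_nonneg (hcnn a)]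
        exact mul_le_mul_of_nonneg_left (hfbd a e) (hcnn a)⟩)
  have hEX' : ∫ ω, X ω ∂P = ∑ a : Fin T → Bool,
      (∏ t, (if a t then p else 1 - p)) *
        ((∏ t, (if a t then δ else 1) / D) * ∫ ω, f a (U ω) ∂P) := by
    rw [show (∫ ω, X ω ∂P) = ∫ ω,
        (fun (a : Fin T → Bool) (e : E) => (∏ t, (if a t then δ else 1) / D) * f a e)
          (fun s => A s ω) (U ω) ∂P from rfl, hEX]
    exact Finset.sum_congr rfl fun a _ => by rw [integral_const_mul]
  -- second moment
  have hEX2 := key_decomp P T p ⟨hp0, hp1⟩ A U hAmeas hUmeas hindep hAp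
    (fun a e => ((∏ t, (if a t then δ else 1) / D) * f a e) ^ 2)
    (fun a => (measurable_const.mul (hfa a)).pow_const 2)
    (fun a => ⟨((∏ t, (if a t then δ else 1) / D) * bu) ^ 2,
      sq_nonneg _, fun e => by
        have h0 : ((∏ t, (if a t then δ else 1) / D) * f a e) ^ 2
            ≤ ((∏ t, (if a t then δ else 1) / D) * bu) ^ 2 := by
          rw [← sq_abs ((∏ t, (if a t then δ else 1) / D) * f a e)]
          apply pow_le_pow_left₀ (abs_nonneg _) _ 2
          rw [abs_mul, abs_of_nonneg (hcnn a)]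
          exact mul_le_mul_of_nonneg_left (hfbd a e) (hcnn a)
        calc |((∏ t, (if a t then δ else 1) / D) * f a e) ^ 2|
            = ((∏ t, (if a t then δ else 1) / D) * f a e) ^ 2 :=
              abs_of_nonneg (sq_nonneg _)
          _ ≤ _ := h0⟩)
  have hEX2' : ∫ ω, (X ω) ^ 2 ∂P = ∑ a : Fin T → Bool,
      (∏ t, (if a t then δ ^ 2 * p else 1 - p) / D ^ 2) * ∫ ω, (f a (U ω)) ^ 2 ∂P := by
    rw [show (∫ ω, (X ω) ^ 2 ∂P) = ∫ ω,
        (fun (a : Fin T → Bool) (e : E) => ((∏ t, (if a t then δ else 1) / D) * f a e) ^ 2)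
          (fun s => A s ω) (U ω) ∂P from rfl, hEX2]
    apply Finset.sum_congr rfl
    intro a _
    have h1 : ∀ e : E, ((∏ t, (if a t then δ else 1) / D) * f a e) ^ 2
        = ((∏ t, (if a t then δ else 1) / D) ^ 2) * (f a e) ^ 2 := fun e => by ring
    simp_rw [h1]
    rw [integral_const_mul, ← mul_assoc]
    congr 1
    rw [← Finset.prod_pow, ← Finset.prod_mul_distrib]
    apply Finset.prod_congr rfl
    intro t _
    cases hat : a t <;>
      simp only [hat, Bool.false_eq_true, if_false, if_true] <;> rw [div_pow] <;> ring
  -- X is bounded and measurable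
  have hXmeas : Measurable X := by
    apply Measurable.mul
    · exact Finset.measurable_prod Finset.univ fun t _ =>
        (measurable_of_countable (fun b : Bool => (if b then δ else 1) / D)).comp (hAmeas t)
    · exact hf.comp ((measurable_pi_lambda _ fun s => hAmeas s).prodMk hUmeas)
  have hXbd : ∀ ω, |X ω| ≤ (max δ 1 / D) ^ T * bu := by
    intro ω
    rw [hX_def, abs_mul, abs_of_nonneg (Finset.prod_nonneg fun t _ => hwnn (A t ω))]
    apply mul_le_mul _ (hfbd _ _) (abs_nonneg _)
      (pow_nonneg (div_nonneg (le_max_of_le_left hδ.le) hD.le) T)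
    calc (∏ t, (if A t ω then δ else 1) / D) ≤ ∏ _t : Fin T, max δ 1 / D := by
          apply Finset.prod_le_prod (fun t _ => hwnn (A t ω))
          intro t _
          apply (div_le_div_iff_of_pos_right hD).mpr
          by_cases h : A t ω <;> simp [h, le_max_left, le_max_right]
      _ = (max δ 1 / D) ^ T := by rw [Finset.prod_const, Finset.card_univ, Fintype.card_fin]
  have hX2 : MemLp X 2 P := by
    refine MemLp.of_bound hXmeas.aestronglyMeasurable ((max δ 1 / D) ^ T * bu) ?_
    exact Filter.Eventually.of_forall (fun ω => by simpa [Real.norm_eq_abs] using hXbd ω)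
  have hvar : variance X P = (∫ ω, (X ω) ^ 2 ∂P) - (∫ ω, X ω ∂P) ^ 2 := by
    have hXp : (X ^ 2) = fun ω => (X ω) ^ 2 := by funext ω; simp
    rw [variance_eq_sub hX2, hXp]
  have hIab : ∀ a : Fin T → Bool, |∫ ω, f a (U ω) ∂P| ≤ bu := by
    intro a
    have h := norm_integral_le_of_norm_le_const (μ := P) (f := fun ω => f a (U ω)) (C := bu)
      (Filter.Eventually.of_forall fun ω => by simpa [Real.norm_eq_abs] using hfbd a (U ω))
    simpa [Real.norm_eq_abs] using h
  have hsum1 : ∑ a : Fin T → Bool,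
      (∏ t, (if a t then p else 1 - p)) * (∏ t, (if a t then δ else 1) / D) = 1 := by
    have hdist : ∀ a : Fin T → Bool,
        (∏ t, (if a t then p else 1 - p)) * (∏ t, (if a t then δ else 1) / D)
          = ∏ t, ((if a t then p else 1 - p) * ((if a t then δ else 1) / D)) :=
      fun a => (Finset.prod_mul_distrib).symm
    simp_rw [hdist]
    rw [← Fintype.prod_sum (f := fun (t : Fin T) (b : Bool) =>
      (if b then p else 1 - p) * ((if b then δ else 1) / D))]
    apply Finset.prod_eq_one
    intro t _
    rw [Fintype.sum_bool]
    simp only [if_true, if_false, Bool.false_eq_true]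
    field_simp
    rw [hD_def]; ring
  have hEXabs : |∫ ω, X ω ∂P| ≤ bu := by
    rw [hEX']
    calc |∑ a : Fin T → Bool, (∏ t, (if a t then p else 1 - p)) *
            ((∏ t, (if a t then δ else 1) / D) * ∫ ω, f a (U ω) ∂P)|
        ≤ ∑ a : Fin T → Bool, |(∏ t, (if a t then p else 1 - p)) *
            ((∏ t, (if a t then δ else 1) / D) * ∫ ω, f a (U ω) ∂P)| :=
          Finset.abs_sum_le_sum_abs _ _
      _ ≤ ∑ a : Fin T → Bool, (∏ t, (if a t then p else 1 - p)) *
            ((∏ t, (if a t then δ else 1) / D) * bu) := by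
          apply Finset.sum_le_sum
          intro a _
          rw [abs_mul, abs_mul, abs_of_nonneg (hπnn a), abs_of_nonneg (hcnn a)]
          exact mul_le_mul_of_nonneg_left
            (mul_le_mul_of_nonneg_left (hIab a) (hcnn a)) (hπnn a)
      _ = bu := by
          simp_rw [← mul_assoc, ← Finset.sum_mul]
          rw [hsum1, one_mul]
  have hEXsq : (∫ ω, X ω ∂P) ^ 2 ≤ bu ^ 2 := by
    rw [← sq_abs]
    exact pow_le_pow_left₀ (abs_nonneg _) hEXabs 2
  rw [ge_iff_le, hvar, hEX2']
  linarith [hEXsq]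
end
end
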